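/- arXiv:2506.05112 — 5 statements merged into one kernel-verified Lean document; each statement's English description precedes it below -/
import Mathlib

section
/- Let (M,d) be a metric space and let W_n (n ∈ ℕ), defined on a common probability space, be stochastic processes indexed by [0,1] with values in M and continuous sample paths. Let ρ₀ : [0,1] → [0,∞) be an increasing function with ρ₀(0) = 0 and ρ₀(h) > 0 for h > 0. Assume: (T-M) there exists C > 0 such that for every t > C there are κ(t) > 1 and K(t) > 0 with P( d(W_n(u), W_n(v)) > t·ρ₀(|u−v|) ) ≤ K(t)·|u−v|^{κ(t)} for all n ∈ ℕ and all u, v ∈ [0,1] with u ≠ v; and (R) there exist p > 0 and K̃ > 0 such that ρ₀(z·h) ≤ K̃·z^p·ρ₀(h) for all h, z ∈ [0,1]. Then for every t > C, sup_n P( sup{ d(W_n(u), W_n(v))/ρ₀(|u−v|) : u, v ∈ [0,1], 0 < |u−v| ≤ h } > t ) → 0 as h → 0. -/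
open MeasureTheory ProbabilityTheory Filter Topology Set
open scoped ENNReal NNReal

noncomputable section

/-- The interpolated partial sum process of `Y 1, …, Y n`. -/
def psp (n : ℕ) (Y : ℕ → ℝ) (u : ℝ) : ℝ :=
  ((∑ t ∈ Finset.Icc 1 ⌊u * (n : ℝ)⌋₊, Y t)
    + (u * (n : ℝ) - (⌊u * (n : ℝ)⌋₊ : ℝ)) * Y (⌊u * (n : ℝ)⌋₊ + 1)) / Real.sqrt n

/-- The critical modulus ρ₂(h) = √(h log(e/h)). -/
def rho2 (h : ℝ) : ℝ := Real.sqrt (h * Real.log (Real.exp 1 / h))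

/-- Hölder-type seminorm (valued in `ℝ≥0∞`) over pairs `u ≠ v` in `[0,1]`. -/
def holderSemi (ρ : ℝ → ℝ) (f : ℝ → ℝ) : ℝ≥0∞ :=
  ⨆ (u : ℝ) (v : ℝ) (_ : u ∈ Icc (0:ℝ) 1 ∧ v ∈ Icc (0:ℝ) 1 ∧ u ≠ v),
    ENNReal.ofReal (|f u - f v| / ρ |u - v|)

/-- Hölder-type seminorm restricted to pairs at distance at most `δ`. -/
def holderSemiSmall (ρ : ℝ → ℝ) (f : ℝ → ℝ) (δ : ℝ) : ℝ≥0∞ :=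
  ⨆ (u : ℝ) (v : ℝ) (_ : u ∈ Icc (0:ℝ) 1 ∧ v ∈ Icc (0:ℝ) 1 ∧ u ≠ v ∧ |u - v| ≤ δ),
    ENNReal.ofReal (|f u - f v| / ρ |u - v|)

/-- Sup-norm on `[0,1]`, valued in `ℝ≥0∞`. -/
def supNormE (f : ℝ → ℝ) : ℝ≥0∞ :=
  ⨆ (u : ℝ) (_ : u ∈ Icc (0:ℝ) 1), ENNReal.ofReal |f u|

/-- The Hölder-type norm ‖f‖_∞ + |f|_ρ. -/
def normRho (ρ : ℝ → ℝ) (f : ℝ → ℝ) : ℝ≥0∞ := supNormE f + holderSemi ρ f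

/-- A modulus of continuity. -/
structure IsModulus (ρ : ℝ → ℝ) : Prop where
  continuousOn : ContinuousOn ρ (Icc 0 1)
  mono : MonotoneOn ρ (Icc 0 1)
  zero : ρ 0 = 0
  pos : ∀ h : ℝ, 0 < h → h ≤ 1 → 0 < ρ h

/-- Membership in C^ρ_0. -/
def MemC0 (ρ : ℝ → ℝ) (f : ℝ → ℝ) : Prop :=
  ContinuousOn f (Icc 0 1) ∧
    Tendsto (fun δ => holderSemiSmall ρ f δ) (𝓝[>] (0:ℝ)) (𝓝 0)

/-- A standard Brownian motion (on `[0,∞)`). -/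
structure IsStdBrownian {Ω : Type*} [MeasurableSpace Ω] (P : Measure Ω)
    (B : Ω → ℝ → ℝ) : Prop where
  cont : ∀ ω, Continuous (B ω)
  zero : ∀ ω, B ω 0 = 0
  meas : ∀ u : ℝ, Measurable fun ω => B ω u
  gauss : ∀ u v : ℝ, 0 ≤ u → u ≤ v →
    Measure.map (fun ω => B ω v - B ω u) P = gaussianReal 0 (Real.toNNReal (v - u))
  indep : ∀ (k : ℕ) (t : ℕ → ℝ), Monotone t → (∀ i, 0 ≤ t i) →
    iIndepFun
      (fun i : Fin k => fun ω => B ω (t (i + 1)) - B ω (t i)) P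

/-- The (1−α)-quantile of |B|_{ρ₂}. -/
def qAlpha {Ω' : Type*} [MeasurableSpace Ω'] (P' : Measure Ω') (B : Ω' → ℝ → ℝ)
    (α : ℝ) : ℝ :=
  sInf {t : ℝ | 1 - α ≤ (P' {ω | holderSemi rho2 (B ω) ≤ ENNReal.ofReal t}).toReal}

/-- The difference-based variance estimator σ̂ₙ². -/
def sigmaHatSq (n : ℕ) (Y : ℕ → ℝ) : ℝ :=
  (∑ t ∈ Finset.Icc 2 n, (Y t - Y (t - 1)) ^ 2) / (2 * ((n : ℝ) - 1))

/-- The ψ₂ (sub-Gaussian) Orlicz norm, valued in ℝ≥0∞. -/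
def psi2 {Ω : Type*} [MeasurableSpace Ω] (P : Measure Ω) (X : Ω → ℝ) : ℝ≥0∞ :=
  sInf {c : ℝ≥0∞ | 0 < c ∧ c ≠ ⊤ ∧
    Integrable (fun ω => Real.exp ((X ω) ^ 2 / c.toReal ^ 2)) P ∧
    ∫ ω, Real.exp ((X ω) ^ 2 / c.toReal ^ 2) ∂P ≤ 2}

/-- Finite-dimensional-distribution convergence on [0,1]. -/
def FidiConverges {Ω Ω' : Type*} [MeasurableSpace Ω] [MeasurableSpace Ω']
    (P : Measure Ω) (P' : Measure Ω') (Wn : ℕ → Ω → ℝ → ℝ) (W : Ω' → ℝ → ℝ) : Prop :=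
  ∀ (k : ℕ) (u : Fin k → ℝ), (∀ i, u i ∈ Icc (0:ℝ) 1) →
    ∀ F : BoundedContinuousFunction (Fin k → ℝ) ℝ,
      Tendsto (fun n => ∫ ω, F (fun i => Wn n ω (u i)) ∂P) atTop
        (𝓝 (∫ ω, F (fun i => W ω (u i)) ∂P'))


private lemma msct_ceil_cases (x : ℝ) :
    (⌈2*x⌉₊ = 2*⌈x⌉₊) ∨ (⌈2*x⌉₊ + 1 = 2*⌈x⌉₊) := by
  have h1 : ⌈2*x⌉₊ ≤ 2*⌈x⌉₊ := Nat.ceil_le.2 (by push_cast; linarith [Nat.le_ceil x])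
  have h2 : ⌈x⌉₊ ≤ (⌈2*x⌉₊+1)/2 := by
    refine Nat.ceil_le.2 ?_
    have ha : 2*x ≤ ⌈2*x⌉₊ := Nat.le_ceil _
    have hb : ⌈2*x⌉₊ ≤ 2*((⌈2*x⌉₊+1)/2) := by omega
    have hb' : (⌈2*x⌉₊:ℝ) ≤ 2*(((⌈2*x⌉₊+1)/2 : ℕ):ℝ) := by exact_mod_cast hb
    linarith
  omega

private lemma msct_floor_cases (x : ℝ) (hx : 0 ≤ x) :
    ⌊2*x⌋₊ = 2*⌊x⌋₊ ∨ ⌊2*x⌋₊ = 2*⌊x⌋₊ + 1 := by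
  have h1 : 2*⌊x⌋₊ ≤ ⌊2*x⌋₊ := Nat.le_floor (by push_cast; linarith [Nat.floor_le hx])
  have h2 : ⌊2*x⌋₊ < 2*⌊x⌋₊ + 2 := by
    have h3 : (⌊2*x⌋₊:ℝ) ≤ 2*x := Nat.floor_le (by linarith)
    have h4 : x < ⌊x⌋₊ + 1 := Nat.lt_floor_add_one x
    have : (⌊2*x⌋₊:ℝ) < 2*(⌊x⌋₊:ℝ) + 2 := by linarith
    exact_mod_cast this
  omega

set_option maxHeartbeats 1000000 in
private lemma msct_chain {E : Type*} [PseudoMetricSpace E] (f : ℝ → E)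
    (hf : ContinuousOn f (Icc 0 1))
    (ρ₀ : ℝ → ℝ) (hmono : MonotoneOn ρ₀ (Icc 0 1))
    (hnonneg : ∀ h ∈ Icc (0:ℝ) 1, 0 ≤ ρ₀ h)
    (s Kt p : ℝ) (hs : 0 < s) (hKt : 0 < Kt) (hp : 0 < p)
    (hRb : ∀ h ∈ Icc (0:ℝ) 1, ∀ z ∈ Icc (0:ℝ) 1, ρ₀ (z * h) ≤ Kt * z ^ p * ρ₀ h)
    (c : ℕ) (hc : 2 ≤ c) (M : ℕ)
    (hgood : ∀ j, M + c ≤ j → ∀ k d : ℕ, d < 2^c → k + d + 1 ≤ 2^j →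
      dist (f ((k:ℝ) * (2⁻¹:ℝ)^j)) (f (((k:ℝ)+(d:ℝ)+1) * (2⁻¹:ℝ)^j))
        ≤ s * ρ₀ (((d:ℝ)+1) * (2⁻¹:ℝ)^j))
    (u v : ℝ) (hu : u ∈ Icc (0:ℝ) 1) (hv : v ∈ Icc (0:ℝ) 1) (huv : u < v)
    (hsm : v - u ≤ (2⁻¹:ℝ)^M) :
    dist (f u) (f v) ≤
      (s + 2*s*Kt*Kt*((2⁻¹:ℝ)^p)^c/(1-(2⁻¹:ℝ)^p)) * ρ₀ (v - u) := by
  obtain ⟨c', rfl⟩ : ∃ c', c = c' + 2 := ⟨c - 2, by omega⟩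
  set c := c' + 2 with hcdef
  set rp := (2⁻¹:ℝ)^p with hrpdef
  have hrp0 : 0 < rp := Real.rpow_pos_of_pos (by norm_num) p
  have hrp1 : rp < 1 := Real.rpow_lt_one (by norm_num) (by norm_num) hp
  have h2n : ∀ n : ℕ, (2⁻¹:ℝ)^n ∈ Icc (0:ℝ) 1 :=
    fun n => ⟨by positivity, pow_le_one₀ (by norm_num) (by norm_num)⟩
  have hpow : ∀ n : ℕ, ((2⁻¹:ℝ)^n : ℝ) ^ p = rp ^ n := by
    intro n
    rw [← Real.rpow_natCast (2⁻¹:ℝ) n, ← Real.rpow_natCast rp n, hrpdef,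
      ← Real.rpow_mul (by norm_num), ← Real.rpow_mul (by norm_num), mul_comm]
  have hscale : ∀ a b : ℕ, ρ₀ ((2⁻¹:ℝ)^(a+b)) ≤ Kt * rp^a * ρ₀ ((2⁻¹:ℝ)^b) := by
    intro a b
    have h := hRb ((2⁻¹:ℝ)^b) (h2n b) ((2⁻¹:ℝ)^a) (h2n a)
    rw [← pow_add, hpow a] at h
    exact h
  have hsum : ∀ (L N : ℕ), ∑ i ∈ Finset.range N, ρ₀ ((2⁻¹:ℝ)^(L+i+1))
      ≤ Kt * ρ₀ ((2⁻¹:ℝ)^L) * (rp/(1-rp)) := by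
    intro L N
    have h1 : ∀ i ∈ Finset.range N, ρ₀ ((2⁻¹:ℝ)^(L+i+1))
        ≤ Kt * ρ₀ ((2⁻¹:ℝ)^L) * rp^(i+1) := by
      intro i _
      have := hscale (i+1) L
      have heq : i+1+L = L+i+1 := by omega
      rw [heq] at this
      nlinarith [this]
    calc ∑ i ∈ Finset.range N, ρ₀ ((2⁻¹:ℝ)^(L+i+1))
        ≤ ∑ i ∈ Finset.range N, Kt * ρ₀ ((2⁻¹:ℝ)^L) * rp^(i+1) :=
          Finset.sum_le_sum h1
      _ = Kt * ρ₀ ((2⁻¹:ℝ)^L) * rp * ∑ i ∈ Finset.range N, rp^i := by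
          rw [Finset.mul_sum]; congr 1; ext i; ring
      _ ≤ Kt * ρ₀ ((2⁻¹:ℝ)^L) * rp * (1-rp)⁻¹ := by
          have hnn : 0 ≤ Kt * ρ₀ ((2⁻¹:ℝ)^L) * rp := by
            have := hnonneg _ (h2n L); positivity
          have hsum' : ∑ i ∈ Finset.range N, rp^i ≤ (1-rp)⁻¹ := by
            have := Summable.sum_le_tsum (Finset.range N) (fun i _ => by positivity)
              (summable_geometric_of_lt_one hrp0.le hrp1)
            rwa [tsum_geometric_of_lt_one hrp0.le hrp1] at this
          exact mul_le_mul_of_nonneg_left hsum' hnn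
      _ = Kt * ρ₀ ((2⁻¹:ℝ)^L) * (rp/(1-rp)) := by ring
  -- the ceil approximation
  have hceil : ∀ w : ℝ, w ∈ Icc (0:ℝ) 1 → ∀ L : ℕ, M + c ≤ L →
      dist (f w) (f ((⌈w*2^L⌉₊:ℝ) * (2⁻¹:ℝ)^L))
        ≤ s * (Kt * ρ₀ ((2⁻¹:ℝ)^L) * (rp/(1-rp))) := by
    intro w hw L hL
    set cl : ℕ → ℝ := fun j => (⌈w*2^j⌉₊:ℝ) * (2⁻¹:ℝ)^j with hcl
    have hwnn : 0 ≤ w := hw.1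
    have hcl_ge : ∀ j, w ≤ cl j := by
      intro j
      have h1 : w*2^j ≤ (⌈w*2^j⌉₊:ℝ) := Nat.le_ceil _
      have h2 : (0:ℝ) < (2⁻¹:ℝ)^j := by positivity
      have := mul_le_mul_of_nonneg_right h1 h2.le
      calc w = w*2^j*(2⁻¹:ℝ)^j := by
              rw [mul_assoc, ← mul_pow]; norm_num
        _ ≤ cl j := this
    have hcl_le : ∀ j, cl j ≤ 1 := by
      intro j
      have h1 : ⌈w*2^j⌉₊ ≤ 2^j := by
        refine Nat.ceil_le.2 ?_
        calc w*2^j ≤ 1*2^j := by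
              have : (0:ℝ) ≤ (2:ℝ)^j := by positivity
              nlinarith [hw.2]
          _ = ((2^j:ℕ):ℝ) := by push_cast; ring
      have h1' : (⌈w*2^j⌉₊:ℝ) ≤ (2:ℝ)^j := by exact_mod_cast h1
      calc cl j ≤ (2:ℝ)^j * (2⁻¹:ℝ)^j :=
            mul_le_mul_of_nonneg_right h1' (by positivity)
        _ = 1 := by rw [← mul_pow]; norm_num
    have hcl_lt : ∀ j, cl j < w + (2⁻¹:ℝ)^j := by
      intro j
      have h1 : (⌈w*2^j⌉₊:ℝ) < w*2^j + 1 := Nat.ceil_lt_add_one (by positivity)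
      have h2 : (0:ℝ) < (2⁻¹:ℝ)^j := by positivity
      have := mul_lt_mul_of_pos_right h1 h2
      calc cl j < (w*2^j+1)*(2⁻¹:ℝ)^j := this
        _ = w*((2:ℝ)^j*(2⁻¹:ℝ)^j) + (2⁻¹)^j := by ring
        _ = w + (2⁻¹)^j := by rw [← mul_pow]; norm_num
    have hstep : ∀ j : ℕ, M + c ≤ j + 1 →
        dist (f (cl (j+1))) (f (cl j)) ≤ s * ρ₀ ((2⁻¹:ℝ)^(j+1)) := by
      intro j hj
      have hx : w * 2^(j+1) = 2*(w*2^j) := by ring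
      rcases msct_ceil_cases (w*2^j) with hcase | hcase
      · have : cl (j+1) = cl j := by
          simp only [hcl, hx, hcase]
          push_cast
          rw [pow_succ]
          ring
        rw [this, dist_self]
        have := hnonneg _ (h2n (j+1)); positivity
      · set a := ⌈w*2^(j+1)⌉₊ with hadef
        have ha1 : a + 1 = 2*⌈w*2^j⌉₊ := by rw [hadef, hx]; exact hcase
        have hb : ⌈w*2^j⌉₊ ≤ 2^j := by
          refine Nat.ceil_le.2 ?_
          calc w*2^j ≤ 1*2^j := by
                have : (0:ℝ) ≤ (2:ℝ)^j := by positivity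
                nlinarith [hw.2]
            _ = ((2^j:ℕ):ℝ) := by push_cast; ring
        have hk : a + 0 + 1 ≤ 2^(j+1) := by
          have h9 : a + 1 ≤ 2*2^j := by omega
          have h10 : 2*2^j = 2^(j+1) := by rw [pow_succ]; ring
          omega
        have hg := hgood (j+1) hj a 0 (by positivity) hk
        have hclj1 : cl (j+1) = (a:ℝ) * (2⁻¹:ℝ)^(j+1) := rfl
        have hclj : cl j = ((a:ℝ)+(0:ℝ)+1) * (2⁻¹:ℝ)^(j+1) := by
          simp only [hcl]
          have : (⌈w*2^j⌉₊:ℝ) = ((a:ℝ)+1)/2 := by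
            have : ((a:ℕ):ℝ) + 1 = 2*(⌈w*2^j⌉₊:ℝ) := by exact_mod_cast ha1
            linarith
          rw [this, pow_succ]
          ring
        rw [hclj1, hclj]
        calc dist (f ((a:ℝ) * (2⁻¹:ℝ)^(j+1))) (f (((a:ℝ)+(0:ℝ)+1) * (2⁻¹:ℝ)^(j+1)))
            ≤ s * ρ₀ (((0:ℝ)+1) * (2⁻¹:ℝ)^(j+1)) := by
              have h0 : ((0:ℕ):ℝ) = (0:ℝ) := by norm_num
              simpa [h0] using hg
          _ = s * ρ₀ ((2⁻¹:ℝ)^(j+1)) := by norm_num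
    have htel : ∀ N : ℕ, dist (f (cl L)) (f (cl (L+N)))
        ≤ s * ∑ i ∈ Finset.range N, ρ₀ ((2⁻¹:ℝ)^(L+i+1)) := by
      intro N
      induction N with
      | zero => simp
      | succ N ih =>
        have h1 := hstep (L+N) (by omega)
        calc dist (f (cl L)) (f (cl (L+(N+1))))
            ≤ dist (f (cl L)) (f (cl (L+N))) + dist (f (cl (L+N))) (f (cl (L+N+1))) := by
              have : L+(N+1) = L+N+1 := by omega
              rw [this]; exact dist_triangle _ _ _
          _ ≤ s * ∑ i ∈ Finset.range N, ρ₀ ((2⁻¹:ℝ)^(L+i+1)) + s * ρ₀ ((2⁻¹:ℝ)^(L+N+1)) := by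
              have h2 : dist (f (cl (L+N))) (f (cl (L+N+1))) ≤ s * ρ₀ ((2⁻¹:ℝ)^(L+N+1)) := by
                rw [dist_comm]; exact h1
              linarith
          _ = s * ∑ i ∈ Finset.range (N+1), ρ₀ ((2⁻¹:ℝ)^(L+i+1)) := by
              rw [Finset.sum_range_succ]; ring
    have hbd : ∀ N : ℕ, dist (f (cl L)) (f (cl (L+N)))
        ≤ s * (Kt * ρ₀ ((2⁻¹:ℝ)^L) * (rp/(1-rp))) := by
      intro N
      refine le_trans (htel N) (mul_le_mul_of_nonneg_left (hsum L N) hs.le)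
    -- limit
    have hcltend : Tendsto (fun N => cl (L+N)) atTop (𝓝 w) := by
      have hsq : Tendsto (fun N => cl (L+N) - w) atTop (𝓝 0) := by
        refine squeeze_zero (fun N => by linarith [hcl_ge (L+N)])
          (fun N => ?_) (tendsto_pow_atTop_nhds_zero_of_lt_one (by norm_num) (by norm_num : (2⁻¹:ℝ) < 1))
        have h1 := hcl_lt (L+N)
        have h2 : ((2:ℝ)⁻¹)^(L+N) ≤ (2⁻¹:ℝ)^N := by
          rw [pow_add]
          have : (0:ℝ) < (2⁻¹:ℝ)^N := by positivity
          nlinarith [pow_le_one₀ (by norm_num : (0:ℝ) ≤ 2⁻¹) (by norm_num : (2⁻¹:ℝ) ≤ 1) (n := L)]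
        linarith
      have := hsq.add_const w
      simpa using this
    have hclmem : ∀ N, cl (L+N) ∈ Icc (0:ℝ) 1 := by
      intro N
      exact ⟨le_trans hwnn (hcl_ge _), hcl_le _⟩
    have hftend : Tendsto (fun N => f (cl (L+N))) atTop (𝓝 (f w)) := by
      refine (hf w hw).tendsto.comp ?_
      exact tendsto_nhdsWithin_iff.2 ⟨hcltend, Eventually.of_forall hclmem⟩
    have hdtend : Tendsto (fun N => dist (f (cl (L+N))) (f (cl L))) atTop
        (𝓝 (dist (f w) (f (cl L)))) := hftend.dist tendsto_const_nhds
    refine le_of_tendsto' hdtend (fun N => ?_)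
    rw [dist_comm]; exact hbd N
  -- the floor approximation
  have hfloor : ∀ w : ℝ, w ∈ Icc (0:ℝ) 1 → ∀ L : ℕ, M + c ≤ L →
      dist (f w) (f ((⌊w*2^L⌋₊:ℝ) * (2⁻¹:ℝ)^L))
        ≤ s * (Kt * ρ₀ ((2⁻¹:ℝ)^L) * (rp/(1-rp))) := by
    intro w hw L hL
    set fl : ℕ → ℝ := fun j => (⌊w*2^j⌋₊:ℝ) * (2⁻¹:ℝ)^j with hfl
    have hwnn : 0 ≤ w := hw.1
    have hfl_le : ∀ j, fl j ≤ w := by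
      intro j
      have h1 : (⌊w*2^j⌋₊:ℝ) ≤ w*2^j := Nat.floor_le (by positivity)
      have h2 : (0:ℝ) ≤ (2⁻¹:ℝ)^j := by positivity
      calc fl j ≤ w*2^j*(2⁻¹:ℝ)^j := mul_le_mul_of_nonneg_right h1 h2
        _ = w := by rw [mul_assoc, ← mul_pow]; norm_num
    have hfl_gt : ∀ j, w - (2⁻¹:ℝ)^j < fl j := by
      intro j
      have h1 : w*2^j < (⌊w*2^j⌋₊:ℝ) + 1 := Nat.lt_floor_add_one _
      have h2 : (0:ℝ) < (2⁻¹:ℝ)^j := by positivity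
      have h3 := mul_lt_mul_of_pos_right h1 h2
      have h4 : w*2^j*(2⁻¹:ℝ)^j = w := by rw [mul_assoc, ← mul_pow]; norm_num
      calc w - (2⁻¹:ℝ)^j = w*2^j*(2⁻¹)^j - (2⁻¹)^j := by rw [h4]
        _ < ((⌊w*2^j⌋₊:ℝ)+1)*(2⁻¹)^j - (2⁻¹)^j := by linarith
        _ = fl j := by ring
    have hfl_nn : ∀ j, 0 ≤ fl j := fun j => by positivity
    have hfloorle : ∀ j, ⌊w*2^j⌋₊ ≤ 2^j := by
      intro j
      have h1 : (⌊w*2^j⌋₊:ℝ) ≤ w*2^j := Nat.floor_le (by positivity)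
      have h2 : w*2^j ≤ ((2^j:ℕ):ℝ) := by
        push_cast
        nlinarith [hw.2, (by positivity : (0:ℝ) ≤ (2:ℝ)^j)]
      exact_mod_cast le_trans h1 h2
    have hstep : ∀ j : ℕ, M + c ≤ j + 1 →
        dist (f (fl (j+1))) (f (fl j)) ≤ s * ρ₀ ((2⁻¹:ℝ)^(j+1)) := by
      intro j hj
      have hx : w * 2^(j+1) = 2*(w*2^j) := by ring
      rcases msct_floor_cases (w*2^j) (by positivity) with hcase | hcase
      · have : fl (j+1) = fl j := by
          simp only [hfl, hx, hcase]
          push_cast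
          rw [pow_succ]
          ring
        rw [this, dist_self]
        have := hnonneg _ (h2n (j+1)); positivity
      · set b := ⌊w*2^j⌋₊ with hbdef
        have ha1 : ⌊w*2^(j+1)⌋₊ = 2*b + 1 := by rw [hx]; exact hcase
        have hk : 2*b + 0 + 1 ≤ 2^(j+1) := by
          have h1 := hfloorle (j+1)
          rw [ha1] at h1
          omega
        have hg := hgood (j+1) hj (2*b) 0 (by positivity) hk
        have hflj : fl j = ((2*b:ℕ):ℝ) * (2⁻¹:ℝ)^(j+1) := by
          simp only [hfl, ← hbdef]
          push_cast
          rw [pow_succ]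
          ring
        have hflj1 : fl (j+1) = (((2*b:ℕ):ℝ)+(0:ℝ)+1) * (2⁻¹:ℝ)^(j+1) := by
          simp only [hfl, ha1]
          push_cast
          ring
        rw [dist_comm, hflj, hflj1]
        calc dist (f (((2*b:ℕ):ℝ) * (2⁻¹:ℝ)^(j+1))) (f ((((2*b:ℕ):ℝ)+(0:ℝ)+1) * (2⁻¹:ℝ)^(j+1)))
            ≤ s * ρ₀ (((0:ℝ)+1) * (2⁻¹:ℝ)^(j+1)) := by
              simpa using hg
          _ = s * ρ₀ ((2⁻¹:ℝ)^(j+1)) := by norm_num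
    have htel : ∀ N : ℕ, dist (f (fl L)) (f (fl (L+N)))
        ≤ s * ∑ i ∈ Finset.range N, ρ₀ ((2⁻¹:ℝ)^(L+i+1)) := by
      intro N
      induction N with
      | zero => simp
      | succ N ih =>
        have h1 := hstep (L+N) (by omega)
        calc dist (f (fl L)) (f (fl (L+(N+1))))
            ≤ dist (f (fl L)) (f (fl (L+N))) + dist (f (fl (L+N))) (f (fl (L+N+1))) := by
              have : L+(N+1) = L+N+1 := by omega
              rw [this]; exact dist_triangle _ _ _
          _ ≤ s * ∑ i ∈ Finset.range N, ρ₀ ((2⁻¹:ℝ)^(L+i+1)) + s * ρ₀ ((2⁻¹:ℝ)^(L+N+1)) := by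
              have h2 : dist (f (fl (L+N))) (f (fl (L+N+1))) ≤ s * ρ₀ ((2⁻¹:ℝ)^(L+N+1)) := by
                rw [dist_comm]; exact h1
              linarith
          _ = s * ∑ i ∈ Finset.range (N+1), ρ₀ ((2⁻¹:ℝ)^(L+i+1)) := by
              rw [Finset.sum_range_succ]; ring
    have hbd : ∀ N : ℕ, dist (f (fl L)) (f (fl (L+N)))
        ≤ s * (Kt * ρ₀ ((2⁻¹:ℝ)^L) * (rp/(1-rp))) := by
      intro N
      refine le_trans (htel N) (mul_le_mul_of_nonneg_left (hsum L N) hs.le)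
    have hfltend : Tendsto (fun N => fl (L+N)) atTop (𝓝 w) := by
      have hsq : Tendsto (fun N => w - fl (L+N)) atTop (𝓝 0) := by
        refine squeeze_zero (fun N => by linarith [hfl_le (L+N)])
          (fun N => ?_) (tendsto_pow_atTop_nhds_zero_of_lt_one (by norm_num) (by norm_num : (2⁻¹:ℝ) < 1))
        have h1 := hfl_gt (L+N)
        have h2 : ((2:ℝ)⁻¹)^(L+N) ≤ (2⁻¹:ℝ)^N := by
          rw [pow_add]
          have : (0:ℝ) < (2⁻¹:ℝ)^N := by positivity
          nlinarith [pow_le_one₀ (by norm_num : (0:ℝ) ≤ 2⁻¹) (by norm_num : (2⁻¹:ℝ) ≤ 1) (n := L)]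
        linarith
      have h3 := tendsto_const_nhds.sub hsq (f := fun _ : ℕ => w)
      simpa [sub_sub_cancel] using h3
    have hflmem : ∀ N, fl (L+N) ∈ Icc (0:ℝ) 1 := by
      intro N
      exact ⟨hfl_nn _, le_trans (hfl_le _) hw.2⟩
    have hftend : Tendsto (fun N => f (fl (L+N))) atTop (𝓝 (f w)) := by
      refine (hf w hw).tendsto.comp ?_
      exact tendsto_nhdsWithin_iff.2 ⟨hfltend, Eventually.of_forall hflmem⟩
    have hdtend : Tendsto (fun N => dist (f (fl (L+N))) (f (fl L))) atTop
        (𝓝 (dist (f w) (f (fl L)))) := hftend.dist tendsto_const_nhds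
    refine le_of_tendsto' hdtend (fun N => ?_)
    rw [dist_comm]; exact hbd N
  -- main chaining argument
  have hr0 : 0 < v - u := by linarith
  have hr1 : v - u ≤ 1 := le_trans hsm (pow_le_one₀ (by norm_num) (by norm_num))
  -- find the scale mm
  have hex : ∃ k : ℕ, (2⁻¹:ℝ)^(k+1) < v - u := by
    obtain ⟨n, hn⟩ := exists_pow_lt_of_lt_one hr0 (by norm_num : (2⁻¹:ℝ) < 1)
    exact ⟨n, lt_of_le_of_lt (pow_le_pow_of_le_one (by norm_num) (by norm_num) (by omega)) hn⟩
  set mm := Nat.find hex with hmmdef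
  have hmm1 : (2⁻¹:ℝ)^(mm+1) < v - u := Nat.find_spec hex
  have hmm2 : v - u ≤ (2⁻¹:ℝ)^mm := by
    rcases Nat.eq_zero_or_pos mm with h0 | h0
    · rw [h0, pow_zero]; exact hr1
    · have := Nat.find_min hex (m := mm - 1) (by omega)
      push_neg at this
      have heq : mm - 1 + 1 = mm := by omega
      rwa [heq] at this
  have hmmM : M ≤ mm := by
    by_contra hcon
    push_neg at hcon
    have h1 : (2⁻¹:ℝ)^(mm+1) < (2⁻¹:ℝ)^M := lt_of_lt_of_le hmm1 hsm
    have := (pow_lt_pow_iff_right_of_lt_one₀ (by norm_num : (0:ℝ) < 2⁻¹)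
      (by norm_num : (2⁻¹:ℝ) < 1)).1 h1
    omega
  set L := mm + c with hLdef
  have hL : M + c ≤ L := by omega
  set au := ⌈u*2^L⌉₊ with haudef
  set bv := ⌊v*2^L⌋₊ with hbvdef
  set u' := (au:ℝ) * (2⁻¹:ℝ)^L with hu'def
  set v' := (bv:ℝ) * (2⁻¹:ℝ)^L with hv'def
  have hpowL : (2:ℝ)^L * (2⁻¹:ℝ)^L = 1 := by rw [← mul_pow]; norm_num
  have hu'1 : u ≤ u' := by
    have h1 : u*2^L ≤ (au:ℝ) := Nat.le_ceil _
    have h2 := mul_le_mul_of_nonneg_right h1 (by positivity : (0:ℝ) ≤ (2⁻¹:ℝ)^L)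
    calc u = u*((2:ℝ)^L*(2⁻¹)^L) := by rw [hpowL]; ring
      _ = u*2^L*(2⁻¹)^L := by ring
      _ ≤ u' := h2
  have hu'2 : u' < u + (2⁻¹:ℝ)^L := by
    have h1 : (au:ℝ) < u*2^L + 1 := Nat.ceil_lt_add_one (mul_nonneg hu.1 (by positivity))
    have h2 := mul_lt_mul_of_pos_right h1 (by positivity : (0:ℝ) < (2⁻¹:ℝ)^L)
    calc u' < (u*2^L+1)*(2⁻¹)^L := h2
      _ = u*((2:ℝ)^L*(2⁻¹)^L) + (2⁻¹)^L := by ring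
      _ = u + (2⁻¹)^L := by rw [hpowL]; ring
  have hv'1 : v' ≤ v := by
    have h1 : (bv:ℝ) ≤ v*2^L := Nat.floor_le (mul_nonneg hv.1 (by positivity))
    have h2 := mul_le_mul_of_nonneg_right h1 (by positivity : (0:ℝ) ≤ (2⁻¹:ℝ)^L)
    calc v' ≤ v*2^L*(2⁻¹)^L := h2
      _ = v*((2:ℝ)^L*(2⁻¹)^L) := by ring
      _ = v := by rw [hpowL]; ring
  have hv'2 : v - (2⁻¹:ℝ)^L < v' := by
    have h1 : v*2^L < (bv:ℝ) + 1 := Nat.lt_floor_add_one _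
    have h2 := mul_lt_mul_of_pos_right h1 (by positivity : (0:ℝ) < (2⁻¹:ℝ)^L)
    calc v - (2⁻¹)^L = v*((2:ℝ)^L*(2⁻¹)^L) - (2⁻¹)^L := by rw [hpowL]; ring
      _ = v*2^L*(2⁻¹)^L - (2⁻¹)^L := by ring
      _ < ((bv:ℝ)+1)*(2⁻¹)^L - (2⁻¹)^L := by linarith
      _ = v' := by ring
  have h2L : 2*(2⁻¹:ℝ)^L ≤ (2⁻¹:ℝ)^(mm+1) := by
    have heq : (2:ℝ)*(2⁻¹)^L = (2⁻¹:ℝ)^(mm+c'+1) := by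
      have h5 : L = (mm+c'+1) + 1 := by omega
      rw [h5, pow_succ]
      ring
    rw [heq]
    exact pow_le_pow_of_le_one (by norm_num) (by norm_num) (by omega)
  have hv'u' : 0 < v' - u' := by
    have : v - u - 2*(2⁻¹:ℝ)^L < v' - u' := by linarith
    linarith
  have haubv : au < bv := by
    have hp2 : (0:ℝ) < (2⁻¹:ℝ)^L := by positivity
    have h1 : (au:ℝ)*(2⁻¹:ℝ)^L < (bv:ℝ)*(2⁻¹:ℝ)^L := by
      rw [← hu'def, ← hv'def]; linarith
    have h2 : (au:ℝ) < (bv:ℝ) := lt_of_mul_lt_mul_right (by linarith) hp2.le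
    exact_mod_cast h2
  have hgap : v' - u' = ((bv - au : ℕ):ℝ) * (2⁻¹:ℝ)^L := by
    rw [hu'def, hv'def]
    have hcast : ((bv - au : ℕ):ℝ) = (bv:ℝ) - (au:ℝ) := by
      push_cast [Nat.cast_sub haubv.le]
      ring
    rw [hcast]; ring
  have hgapr : v' - u' ≤ v - u := by linarith
  have hg2c : bv - au ≤ 2^c := by
    have h1 : ((bv - au:ℕ):ℝ) * (2⁻¹:ℝ)^L ≤ (2⁻¹:ℝ)^mm := by
      rw [← hgap]; linarith
    have h2 : (2⁻¹:ℝ)^L = (2⁻¹:ℝ)^mm * (2⁻¹:ℝ)^c := by rw [hLdef, pow_add]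
    have h3 : ((bv-au:ℕ):ℝ) ≤ (2:ℝ)^c := by
      by_contra hcon
      push_neg at hcon
      have hpmm : (0:ℝ) < (2⁻¹:ℝ)^mm := by positivity
      have hpc : (0:ℝ) < (2⁻¹:ℝ)^c := by positivity
      have h4 : (2:ℝ)^c * (2⁻¹:ℝ)^c = 1 := by rw [← mul_pow]; norm_num
      nlinarith
    have h5 : ((2^c:ℕ):ℝ) = (2:ℝ)^c := by push_cast; ring
    rw [← h5] at h3
    exact_mod_cast h3
  set g := bv - au with hgdef
  have hg1 : 1 ≤ g := by omega
  have hcentral : dist (f u') (f v') ≤ s * ρ₀ (v' - u') := by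
    have hbvle : bv ≤ 2^L := by
      have h1 : (bv:ℝ) ≤ v*2^L := Nat.floor_le (mul_nonneg hv.1 (by positivity))
      have h2 : v*2^L ≤ ((2^L:ℕ):ℝ) := by
        push_cast
        nlinarith [hv.2, (by positivity : (0:ℝ) ≤ (2:ℝ)^L)]
      exact_mod_cast le_trans h1 h2
    have hg := hgood L hL au (g-1) (by omega) (by omega)
    have he1 : ((au:ℝ)+((g-1:ℕ):ℝ)+1) = (bv:ℝ) := by
      have h6 : au + (g-1) + 1 = bv := by omega
      exact_mod_cast h6
    have he2 : (((g-1:ℕ):ℝ)+1) = ((g:ℕ):ℝ) := by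
      have h7 : (g-1) + 1 = g := by omega
      exact_mod_cast h7
    rw [he1, he2] at hg
    rw [hu'def, hv'def, hgap]
    exact hg
  have hvumem : v - u ∈ Icc (0:ℝ) 1 := ⟨by linarith, hr1⟩
  have hv'u'mem : v' - u' ∈ Icc (0:ℝ) 1 := ⟨hv'u'.le, le_trans hgapr hr1⟩
  have hcentral2 : dist (f u') (f v') ≤ s * ρ₀ (v - u) :=
    le_trans hcentral (mul_le_mul_of_nonneg_left (hmono hv'u'mem hvumem hgapr) hs.le)
  have htailu : dist (f u) (f u') ≤ s * (Kt * ρ₀ ((2⁻¹:ℝ)^L) * (rp/(1-rp))) :=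
    hceil u hu L hL
  have htailv : dist (f v) (f v') ≤ s * (Kt * ρ₀ ((2⁻¹:ℝ)^L) * (rp/(1-rp))) :=
    hfloor v hv L hL
  have hρL : ρ₀ ((2⁻¹:ℝ)^L) ≤ Kt * rp^(c'+1) * ρ₀ (v - u) := by
    have h1 : L = (c'+1) + (mm+1) := by omega
    have h2 := hscale (c'+1) (mm+1)
    rw [← h1] at h2
    have h3 : ρ₀ ((2⁻¹:ℝ)^(mm+1)) ≤ ρ₀ (v-u) := hmono (h2n (mm+1)) hvumem hmm1.le
    have h4 : (0:ℝ) ≤ Kt * rp^(c'+1) := by positivity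
    nlinarith
  have hfinal : s * (Kt * ρ₀ ((2⁻¹:ℝ)^L) * (rp/(1-rp)))
      ≤ (s*Kt*(rp/(1-rp))) * (Kt * rp^(c'+1) * ρ₀ (v-u)) := by
    have hrp1' : 0 < 1 - rp := by linarith
    have h0 : 0 ≤ s*Kt*(rp/(1-rp)) := by positivity
    have h1 : s * (Kt * ρ₀ ((2⁻¹:ℝ)^L) * (rp/(1-rp)))
        = (s*Kt*(rp/(1-rp))) * ρ₀ ((2⁻¹:ℝ)^L) := by ring
    rw [h1]
    exact mul_le_mul_of_nonneg_left hρL h0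
  have htri : dist (f u) (f v) ≤ dist (f u) (f u') + dist (f u') (f v') + dist (f v') (f v) :=
    dist_triangle4 _ _ _ _
  have hcomm : dist (f v') (f v) = dist (f v) (f v') := dist_comm _ _
  have hkey : (s + 2*s*Kt*Kt*rp^c/(1-rp)) * ρ₀ (v-u)
      = s * ρ₀ (v-u) + 2*((s*Kt*(rp/(1-rp))) * (Kt * rp^(c'+1) * ρ₀ (v-u))) := by
    have hrp1' : (1:ℝ) - rp ≠ 0 := by intro h; linarith [hrp1]
    have hpc : rp^c = rp^(c'+1) * rp := by rw [hcdef, pow_succ]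
    rw [hpc]
    field_simp
  rw [hkey]
  rw [hcomm] at htri
  linarith
open MeasureTheory ProbabilityTheory Filter Topology Set
open scoped ENNReal NNReal


set_option maxHeartbeats 1000000 in
/-- Theorem (metric-space version of the multiscale tightness bound):
under the tail condition (T-M) and the scaling condition (R) on ρ₀, the
multiscale modulus of continuity of the processes W_n is uniformly small
over small scales, beyond the threshold C. -/
theorem multiscale_tightness_metric
    {Ω : Type*} [MeasurableSpace Ω] (P : Measure Ω) [IsProbabilityMeasure P]
    {M : Type*} [MetricSpace M]
    (W : ℕ → Ω → ℝ → M)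
    (hpath : ∀ n ω, ContinuousOn (W n ω) (Icc 0 1))
    (ρ₀ : ℝ → ℝ)
    (hρ₀mono : MonotoneOn ρ₀ (Icc 0 1))
    (hρ₀zero : ρ₀ 0 = 0)
    (hρ₀nonneg : ∀ h ∈ Icc (0:ℝ) 1, 0 ≤ ρ₀ h)
    (hρ₀pos : ∀ h : ℝ, 0 < h → h ≤ 1 → 0 < ρ₀ h)
    (C : ℝ) (hC : 0 < C)
    (hT : ∀ t > C, ∃ κ > (1:ℝ), ∃ K > (0:ℝ),
      ∀ n : ℕ, ∀ u ∈ Icc (0:ℝ) 1, ∀ v ∈ Icc (0:ℝ) 1, u ≠ v →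
        P {ω | t * ρ₀ |u - v| < dist (W n ω u) (W n ω v)}
          ≤ ENNReal.ofReal (K * |u - v| ^ κ))
    (hR : ∃ p > (0:ℝ), ∃ Kt > (0:ℝ), ∀ h ∈ Icc (0:ℝ) 1, ∀ z ∈ Icc (0:ℝ) 1,
      ρ₀ (z * h) ≤ Kt * z ^ p * ρ₀ h) :
    ∀ t > C,
      Tendsto
        (fun h : ℝ => ⨆ n : ℕ,
          P {ω | ∃ u ∈ Icc (0:ℝ) 1, ∃ v ∈ Icc (0:ℝ) 1,
            u ≠ v ∧ |u - v| ≤ h ∧ t * ρ₀ |u - v| < dist (W n ω u) (W n ω v)})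
        (𝓝[>] (0:ℝ)) (𝓝 0) := by
  intro t ht
  obtain ⟨p, hp, Kt, hKt, hRb⟩ := hR
  set s := (C+t)/2 with hsdef
  have hsC : C < s := by rw [hsdef]; linarith
  have hst : s < t := by rw [hsdef]; linarith
  have hs0 : 0 < s := lt_trans hC hsC
  obtain ⟨κ, hκ, K, hK, hTb⟩ := hT s hsC
  have hκ0 : 0 ≤ κ := by linarith
  set rp := (2⁻¹:ℝ)^p with hrpdef
  have hrp0 : 0 < rp := Real.rpow_pos_of_pos (by norm_num) p
  have hrp1 : rp < 1 := Real.rpow_lt_one (by norm_num) (by norm_num) hp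
  have hrp1' : 0 < 1 - rp := by linarith
  -- choose c
  obtain ⟨c, hcbound, hc2⟩ : ∃ c : ℕ, s + 2*s*Kt*Kt*rp^c/(1-rp) ≤ t ∧ 2 ≤ c := by
    have htend : Tendsto (fun c : ℕ => rp^c) atTop (𝓝 0) :=
      tendsto_pow_atTop_nhds_zero_of_lt_one hrp0.le hrp1
    have hpos : (0:ℝ) < (t-s)*(1-rp)/(2*s*Kt*Kt) := by
      have : 0 < t - s := by linarith
      positivity
    have hev : ∀ᶠ c : ℕ in atTop, rp^c < (t-s)*(1-rp)/(2*s*Kt*Kt) :=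
      htend.eventually (Iio_mem_nhds hpos)
    obtain ⟨c, hc1, hc2⟩ := (hev.and (eventually_ge_atTop 2)).exists
    refine ⟨c, ?_, hc2⟩
    have h1 : rp^c * (2*s*Kt*Kt) < (t-s)*(1-rp) := by
      rw [lt_div_iff₀ (by positivity)] at hc1
      exact hc1
    have h2 : 2*s*Kt*Kt*rp^c/(1-rp) < t - s := by
      rw [div_lt_iff₀ hrp1']
      nlinarith
    linarith
  set rκ := 2*((2⁻¹:ℝ)^κ) with hrκdef
  have hx0 : (0:ℝ) < (2⁻¹:ℝ)^κ := Real.rpow_pos_of_pos (by norm_num) κ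
  have hrκ0 : 0 < rκ := by rw [hrκdef]; positivity
  have hrκ1 : rκ < 1 := by
    have h1 : (2⁻¹:ℝ)^κ < (2⁻¹:ℝ)^(1:ℝ) :=
      Real.rpow_lt_rpow_of_exponent_gt (by norm_num) (by norm_num) hκ
    rw [Real.rpow_one] at h1
    rw [hrκdef]; linarith
  have hpowκ : ∀ n : ℕ, (((2⁻¹:ℝ)^n : ℝ)) ^ κ = ((2⁻¹:ℝ)^κ) ^ n := by
    intro n
    rw [← Real.rpow_natCast (2⁻¹:ℝ) n, ← Real.rpow_natCast ((2⁻¹:ℝ)^κ) n,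
      ← Real.rpow_mul (by norm_num), ← Real.rpow_mul (by norm_num), mul_comm]
  -- the elementary pair bound
  have hpair : ∀ (n j : ℕ) (k d : ℕ), k + d + 1 ≤ 2^j →
      P {ω | s * ρ₀ (((d:ℝ)+1) * (2⁻¹:ℝ)^j) <
          dist (W n ω ((k:ℝ)*(2⁻¹:ℝ)^j)) (W n ω (((k:ℝ)+(d:ℝ)+1)*(2⁻¹:ℝ)^j))}
        ≤ ENNReal.ofReal (K * (((d:ℝ)+1)*(2⁻¹:ℝ)^j)^κ) := by
    intro n j k d hkd
    have hx : (0:ℝ) < (2⁻¹:ℝ)^j := by positivity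
    have hcast : ((k:ℝ)+(d:ℝ)+1) ≤ (2:ℝ)^j := by
      have h1 : ((k+d+1:ℕ):ℝ) ≤ ((2^j:ℕ):ℝ) := by exact_mod_cast hkd
      push_cast at h1
      linarith
    have hx21 : (2:ℝ)^j * (2⁻¹:ℝ)^j = 1 := by rw [← mul_pow]; norm_num
    have huu : (k:ℝ)*(2⁻¹:ℝ)^j ∈ Icc (0:ℝ) 1 := by
      constructor
      · positivity
      · calc (k:ℝ)*(2⁻¹:ℝ)^j ≤ (2:ℝ)^j*(2⁻¹:ℝ)^j := by
              have : (k:ℝ) ≤ (2:ℝ)^j := by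
                have h2 : (0:ℝ) ≤ (d:ℝ) := by positivity
                linarith
              exact mul_le_mul_of_nonneg_right this hx.le
          _ = 1 := hx21
    have hvv : ((k:ℝ)+(d:ℝ)+1)*(2⁻¹:ℝ)^j ∈ Icc (0:ℝ) 1 := by
      constructor
      · positivity
      · calc ((k:ℝ)+(d:ℝ)+1)*(2⁻¹:ℝ)^j ≤ (2:ℝ)^j*(2⁻¹:ℝ)^j :=
            mul_le_mul_of_nonneg_right hcast hx.le
          _ = 1 := hx21
    have hlt : (k:ℝ)*(2⁻¹:ℝ)^j < ((k:ℝ)+(d:ℝ)+1)*(2⁻¹:ℝ)^j := by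
      have h2 : (0:ℝ) ≤ (d:ℝ) := by positivity
      nlinarith
    have hne : (k:ℝ)*(2⁻¹:ℝ)^j ≠ ((k:ℝ)+(d:ℝ)+1)*(2⁻¹:ℝ)^j := ne_of_lt hlt
    have habs : |(k:ℝ)*(2⁻¹:ℝ)^j - ((k:ℝ)+(d:ℝ)+1)*(2⁻¹:ℝ)^j| = ((d:ℝ)+1)*(2⁻¹:ℝ)^j := by
      rw [abs_of_nonpos (by nlinarith)]
      ring
    have := hTb n ((k:ℝ)*(2⁻¹:ℝ)^j) huu (((k:ℝ)+(d:ℝ)+1)*(2⁻¹:ℝ)^j) hvv hne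
    rwa [habs] at this
  -- bad events
  set Bad : ℕ → ℕ → Set Ω := fun n j =>
    ⋃ k ∈ Finset.range (2^j), ⋃ d ∈ Finset.range (2^c),
      {ω | k+d+1 ≤ 2^j ∧ s * ρ₀ (((d:ℝ)+1) * (2⁻¹:ℝ)^j) <
        dist (W n ω ((k:ℝ)*(2⁻¹:ℝ)^j)) (W n ω (((k:ℝ)+(d:ℝ)+1)*(2⁻¹:ℝ)^j))} with hBaddef
  set DD := K * (2:ℝ)^c * ((2:ℝ)^c)^κ with hDDdef
  have hDD0 : 0 < DD := by
    have : (0:ℝ) < ((2:ℝ)^c)^κ := Real.rpow_pos_of_pos (by positivity) κ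
    rw [hDDdef]; positivity
  have hBadmeas : ∀ n j, P (Bad n j) ≤ ENNReal.ofReal (DD * rκ^j) := by
    intro n j
    have hone : ∀ k d : ℕ, d < 2^c →
        P {ω | k+d+1 ≤ 2^j ∧ s * ρ₀ (((d:ℝ)+1) * (2⁻¹:ℝ)^j) <
          dist (W n ω ((k:ℝ)*(2⁻¹:ℝ)^j)) (W n ω (((k:ℝ)+(d:ℝ)+1)*(2⁻¹:ℝ)^j))}
        ≤ ENNReal.ofReal (K * ((2:ℝ)^c*(2⁻¹:ℝ)^j)^κ) := by
      intro k d hd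
      by_cases hkd : k + d + 1 ≤ 2^j
      · refine le_trans (measure_mono (fun ω hω => hω.2)) ?_
        refine le_trans (hpair n j k d hkd) (ENNReal.ofReal_le_ofReal ?_)
        refine mul_le_mul_of_nonneg_left ?_ hK.le
        refine Real.rpow_le_rpow (by positivity) ?_ hκ0
        have h1 : ((d:ℝ)+1) ≤ (2:ℝ)^c := by
          have h2 : ((d+1:ℕ):ℝ) ≤ ((2^c:ℕ):ℝ) := by exact_mod_cast hd
          push_cast at h2
          linarith
        have h3 : (0:ℝ) ≤ (2⁻¹:ℝ)^j := by positivity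
        nlinarith
      · have hempty : {ω : Ω | k+d+1 ≤ 2^j ∧ s * ρ₀ (((d:ℝ)+1) * (2⁻¹:ℝ)^j) <
            dist (W n ω ((k:ℝ)*(2⁻¹:ℝ)^j)) (W n ω (((k:ℝ)+(d:ℝ)+1)*(2⁻¹:ℝ)^j))} = ∅ := by
          ext ω; simp only [mem_setOf_eq, mem_empty_iff_false, iff_false]
          intro hcon; exact hkd hcon.1
        rw [hempty]
        simp
    calc P (Bad n j)
        ≤ ∑ k ∈ Finset.range (2^j), P (⋃ d ∈ Finset.range (2^c),
            {ω | k+d+1 ≤ 2^j ∧ s * ρ₀ (((d:ℝ)+1) * (2⁻¹:ℝ)^j) <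
              dist (W n ω ((k:ℝ)*(2⁻¹:ℝ)^j)) (W n ω (((k:ℝ)+(d:ℝ)+1)*(2⁻¹:ℝ)^j))}) := by
          rw [hBaddef]
          exact measure_biUnion_finset_le _ _
      _ ≤ ∑ k ∈ Finset.range (2^j), ∑ d ∈ Finset.range (2^c),
            ENNReal.ofReal (K * ((2:ℝ)^c*(2⁻¹:ℝ)^j)^κ) := by
          refine Finset.sum_le_sum (fun k _ => ?_)
          refine le_trans (measure_biUnion_finset_le _ _) ?_
          exact Finset.sum_le_sum (fun d hd => hone k d (Finset.mem_range.1 hd))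
      _ = (2^j * 2^c : ℕ) * ENNReal.ofReal (K * ((2:ℝ)^c*(2⁻¹:ℝ)^j)^κ) := by
          simp [Finset.sum_const, mul_comm]
          ring
      _ = ENNReal.ofReal (((2^j*2^c:ℕ):ℝ) * (K * ((2:ℝ)^c*(2⁻¹:ℝ)^j)^κ)) := by
          rw [← ENNReal.ofReal_natCast (2^j*2^c), ← ENNReal.ofReal_mul (by positivity)]
      _ = ENNReal.ofReal (DD * rκ^j) := by
          congr 1
          rw [Real.mul_rpow (by positivity) (by positivity), hpowκ j]
          push_cast
          rw [hDDdef, hrκdef, mul_pow]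
          ring
  have hGmeas : ∀ (n M' : ℕ), P (⋃ i : ℕ, Bad n (M'+c+i))
      ≤ ENNReal.ofReal (DD * rκ^(M'+c) * (1-rκ)⁻¹) := by
    intro n M'
    calc P (⋃ i : ℕ, Bad n (M'+c+i)) ≤ ∑' i : ℕ, P (Bad n (M'+c+i)) := measure_iUnion_le _
      _ ≤ ∑' i : ℕ, ENNReal.ofReal (DD * rκ^(M'+c) * rκ^i) := by
          refine ENNReal.tsum_le_tsum (fun i => le_trans (hBadmeas n (M'+c+i)) (le_of_eq ?_))
          rw [pow_add]
          ring_nf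
      _ = ENNReal.ofReal (∑' i : ℕ, DD * rκ^(M'+c) * rκ^i) := by
          refine (ENNReal.ofReal_tsum_of_nonneg (fun i => by positivity) ?_).symm
          exact (summable_geometric_of_lt_one hrκ0.le hrκ1).mul_left _
      _ = ENNReal.ofReal (DD * rκ^(M'+c) * (1-rκ)⁻¹) := by
          rw [tsum_mul_left, tsum_geometric_of_lt_one hrκ0.le hrκ1]
  -- conclusion
  rw [ENNReal.tendsto_nhds_zero]
  intro ε hε
  have htd : Tendsto (fun M' : ℕ => ENNReal.ofReal (DD * rκ^(M'+c) * (1-rκ)⁻¹)) atTop (𝓝 0) := by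
    have h1 : Tendsto (fun M' : ℕ => DD * rκ^(M'+c) * (1-rκ)⁻¹) atTop (𝓝 0) := by
      have h2 := (tendsto_pow_atTop_nhds_zero_of_lt_one hrκ0.le hrκ1).const_mul
        (DD * rκ^c * (1-rκ)⁻¹)
      have h3 : (fun M' : ℕ => DD * rκ^(M'+c) * (1-rκ)⁻¹)
          = fun M' : ℕ => (DD * rκ^c * (1-rκ)⁻¹) * rκ^M' := by
        funext M'
        rw [pow_add]
        ring
      rw [h3]
      simpa using h2
    have h4 := (ENNReal.continuous_ofReal.tendsto 0).comp h1
    simpa [Function.comp_def] using h4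
  obtain ⟨M', hM'⟩ := (htd.eventually (Iio_mem_nhds hε)).exists
  filter_upwards [Ioc_mem_nhdsGT_of_mem
    (⟨le_refl (0:ℝ), by positivity⟩ : (0:ℝ) ∈ Ico (0:ℝ) ((2⁻¹:ℝ)^M'))] with h hh
  refine iSup_le fun n => ?_
  refine le_trans (measure_mono ?_) (le_trans (hGmeas n M') hM'.le)
  intro ω hω
  by_contra hnot
  obtain ⟨u, hu, v, hv, huv, hle, hgt⟩ := hω
  have hgood : ∀ j, M' + c ≤ j → ∀ k d : ℕ, d < 2^c → k+d+1 ≤ 2^j →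
      dist (W n ω ((k:ℝ)*(2⁻¹:ℝ)^j)) (W n ω (((k:ℝ)+(d:ℝ)+1)*(2⁻¹:ℝ)^j))
        ≤ s * ρ₀ (((d:ℝ)+1)*(2⁻¹:ℝ)^j) := by
    intro j hj k d hd hkd
    by_contra hlt
    push_neg at hlt
    apply hnot
    refine mem_iUnion.2 ⟨j - (M'+c), ?_⟩
    have hjj : M' + c + (j - (M'+c)) = j := by omega
    rw [hjj, hBaddef]
    exact mem_iUnion₂.2 ⟨k, Finset.mem_range.2 (by omega),
      mem_iUnion₂.2 ⟨d, Finset.mem_range.2 hd, ⟨hkd, hlt⟩⟩⟩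
  have key : ∀ a b : ℝ, a ∈ Icc (0:ℝ) 1 → b ∈ Icc (0:ℝ) 1 → a < b → b - a ≤ (2⁻¹:ℝ)^M' →
      dist (W n ω a) (W n ω b) ≤ t * ρ₀ (b-a) := by
    intro a b ha hb hab hsm
    have hch := msct_chain (W n ω) (hpath n ω) ρ₀ hρ₀mono hρ₀nonneg s Kt p hs0 hKt hp hRb
      c hc2 M' hgood a b ha hb hab hsm
    refine le_trans hch ?_
    have hρnn : 0 ≤ ρ₀ (b-a) :=
      hρ₀nonneg _ ⟨by linarith, le_trans hsm (pow_le_one₀ (by norm_num) (by norm_num))⟩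
    exact mul_le_mul_of_nonneg_right hcbound hρnn
  rcases lt_or_gt_of_ne huv with h1 | h1
  · have habs : |u-v| = v - u := by rw [abs_of_nonpos (by linarith)]; ring
    rw [habs] at hle hgt
    exact absurd (key u v hu hv h1 (le_trans hle hh.2)) (not_le.2 hgt)
  · have habs : |u-v| = u - v := abs_of_nonneg (by linarith)
    rw [habs] at hle hgt
    rw [dist_comm] at hgt
    exact absurd (key v u hv hu h1 (le_trans hle hh.2)) (not_le.2 hgt)

end
end

section
/- Let W_n (n ∈ ℕ) be real-valued stochastic processes on [0,1] with continuous sample paths, and let ρ₀ : [0,1] → [0,∞) be increasing with ρ₀(0) = 0 and ρ₀(h) > 0 for h > 0. Assume: (T) there exists C > 0 such that for every t > C there are κ(t) > 1 and K(t) > 0 with P(|W_n(u) − W_n(v)| > t·ρ₀(|u−v|)) ≤ K(t)·|u−v|^{κ(t)} for all n ∈ ℕ and all u ≠ v in [0,1]; and (R) there exist p > 0 and K̃ > 0 such that ρ₀(z·h) ≤ K̃·z^p·ρ₀(h) for all h, z ∈ [0,1]. Then for every modulus of continuity ρ with ρ(h)/ρ₀(h) → ∞ as h → 0, the sequence of Hölder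 seminorms |W_n|_ρ is stochastically bounded: lim_{M→∞} sup_n P(|W_n|_ρ > M) = 0. -/
open MeasureTheory ProbabilityTheory Filter Topology Set
open scoped ENNReal NNReal

noncomputable section

namespace HolderAux

/-- dyadic approximation at level `j`. -/
def dy (j : ℕ) (u : ℝ) : ℝ := (⌊u * 2 ^ j⌋₊ : ℝ) / 2 ^ j

lemma two_pow_pos (j : ℕ) : (0:ℝ) < 2 ^ j := by positivity

lemma dy_le {j : ℕ} {u : ℝ} (hu : 0 ≤ u) : dy j u ≤ u := by
  unfold dy
  rw [div_le_iff₀ (two_pow_pos j)]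
  exact Nat.floor_le (by positivity)

lemma lt_dy_add {j : ℕ} {u : ℝ} (hu : 0 ≤ u) : u < dy j u + (2:ℝ)⁻¹ ^ j := by
  unfold dy
  have h := Nat.lt_floor_add_one (u * 2 ^ j)
  have h2 : u * 2 ^ j < (⌊u * 2 ^ j⌋₊ : ℝ) + 1 := h
  have : u < ((⌊u * 2 ^ j⌋₊ : ℝ) + 1) / 2 ^ j := by
    rw [lt_div_iff₀ (two_pow_pos j)]; exact h2
  calc u < ((⌊u * 2 ^ j⌋₊ : ℝ) + 1) / 2 ^ j := this
    _ = (⌊u * 2 ^ j⌋₊ : ℝ) / 2 ^ j + (2:ℝ)⁻¹ ^ j := by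
        rw [inv_pow]; field_simp

lemma abs_dy_sub_lt {j : ℕ} {u : ℝ} (hu : 0 ≤ u) : |u - dy j u| < (2:ℝ)⁻¹ ^ j := by
  rw [abs_sub_lt_iff]
  constructor
  · linarith [lt_dy_add (j := j) hu]
  · have := dy_le (j := j) hu
    have : dy j u - u ≤ 0 := by linarith
    calc dy j u - u ≤ 0 := this
      _ < (2:ℝ)⁻¹ ^ j := by positivity

lemma dy_mem {j : ℕ} {u : ℝ} (hu : u ∈ Icc (0:ℝ) 1) : dy j u ∈ Icc (0:ℝ) 1 := by
  constructor
  · unfold dy; positivity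
  · unfold dy
    rw [div_le_one (two_pow_pos j)]
    have : (⌊u * 2 ^ j⌋₊ : ℝ) ≤ u * 2 ^ j := Nat.floor_le (by have := hu.1; positivity)
    nlinarith [hu.2, two_pow_pos j]

lemma floor_dy_le {j : ℕ} {u : ℝ} (hu : u ∈ Icc (0:ℝ) 1) : ⌊u * 2 ^ j⌋₊ ≤ 2 ^ j := by
  have : (⌊u * 2 ^ j⌋₊ : ℝ) ≤ u * 2 ^ j := Nat.floor_le (by have := hu.1; positivity)
  have h2 : (⌊u * 2 ^ j⌋₊ : ℝ) ≤ (2:ℝ) ^ j := by nlinarith [hu.2, two_pow_pos j]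
  have : (⌊u * 2 ^ j⌋₊ : ℝ) ≤ ((2 ^ j : ℕ) : ℝ) := by push_cast; linarith
  exact_mod_cast this

lemma floor_succ {j : ℕ} {u : ℝ} (hu : 0 ≤ u) :
    ⌊u * 2 ^ (j+1)⌋₊ = 2 * ⌊u * 2 ^ j⌋₊ ∨ ⌊u * 2 ^ (j+1)⌋₊ = 2 * ⌊u * 2 ^ j⌋₊ + 1 := by
  set k := ⌊u * 2 ^ j⌋₊ with hk
  have h1 : (k : ℝ) ≤ u * 2 ^ j := Nat.floor_le (by positivity)
  have h2 : u * 2 ^ j < (k : ℝ) + 1 := Nat.lt_floor_add_one _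
  have hpow : u * 2 ^ (j+1) = (u * 2 ^ j) * 2 := by ring
  have hle : (2 * k : ℕ) ≤ ⌊u * 2 ^ (j+1)⌋₊ := by
    apply Nat.le_floor
    rw [hpow]
    push_cast
    nlinarith
  have hlt : ⌊u * 2 ^ (j+1)⌋₊ < 2 * k + 2 := by
    rw [Nat.floor_lt (by positivity), hpow]
    push_cast
    nlinarith
  omega


/-- good level: all adjacent dyadic increments at level `j` are small. -/
def goodLevel (ρ₀ : ℝ → ℝ) (t : ℝ) (f : ℝ → ℝ) (j : ℕ) : Prop :=
  ∀ k : ℕ, k + 1 ≤ 2 ^ j → |f ((k+1 : ℕ) / 2 ^ j) - f ((k : ℕ) / 2 ^ j)| ≤ t * ρ₀ ((2:ℝ)⁻¹ ^ j)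

lemma multi_step {ρ₀ : ℝ → ℝ} {t : ℝ} {f : ℝ → ℝ} {j : ℕ}
    (hρ : 0 ≤ t * ρ₀ ((2:ℝ)⁻¹ ^ j))
    (hg : goodLevel ρ₀ t f j) (a : ℕ) :
    ∀ b : ℕ, a ≤ b → b ≤ 2 ^ j →
      |f ((b:ℕ) / 2 ^ j) - f ((a:ℕ) / 2 ^ j)| ≤ ((b - a : ℕ) : ℝ) * (t * ρ₀ ((2:ℝ)⁻¹ ^ j)) := by
  intro b
  induction b with
  | zero => intro hab _; interval_cases a; simp
  | succ b ih =>
    intro hab hb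
    rcases Nat.lt_or_ge a (b+1) with hlt | hge
    · have hab' : a ≤ b := Nat.lt_succ_iff.mp hlt
      have h1 := ih hab' (le_trans (Nat.le_succ b) hb)
      have h2 := hg b hb
      have : |f ((b+1 : ℕ) / 2 ^ j) - f ((a:ℕ) / 2 ^ j)| ≤
          |f ((b+1 : ℕ) / 2 ^ j) - f ((b:ℕ) / 2 ^ j)| + |f ((b:ℕ) / 2 ^ j) - f ((a:ℕ) / 2 ^ j)| := by
        have := abs_sub_abs_le_abs_sub (f ((b+1 : ℕ) / 2 ^ j)) (f ((a:ℕ) / 2 ^ j))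
        exact abs_sub_le _ _ _
      have hcast : ((b + 1 - a : ℕ) : ℝ) = ((b - a : ℕ) : ℝ) + 1 := by
        have : b + 1 - a = (b - a) + 1 := by omega
        rw [this]; push_cast; ring
      calc |f ((b+1 : ℕ) / 2 ^ j) - f ((a:ℕ) / 2 ^ j)|
          ≤ |f ((b+1 : ℕ) / 2 ^ j) - f ((b:ℕ) / 2 ^ j)| + |f ((b:ℕ) / 2 ^ j) - f ((a:ℕ) / 2 ^ j)| := this
        _ ≤ t * ρ₀ ((2:ℝ)⁻¹ ^ j) + ((b - a : ℕ) : ℝ) * (t * ρ₀ ((2:ℝ)⁻¹ ^ j)) := by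
            apply add_le_add _ h1
            have := hg b hb
            exact_mod_cast this
        _ = ((b + 1 - a : ℕ) : ℝ) * (t * ρ₀ ((2:ℝ)⁻¹ ^ j)) := by rw [hcast]; ring
    · have : a = b + 1 := by omega
      subst this; simp

lemma dy_eq_div (j : ℕ) (u : ℝ) : dy j u = (⌊u * 2 ^ j⌋₊ : ℝ) / 2 ^ j := rfl

/-- increment between consecutive dyadic approximations. -/
lemma dy_succ_bound {ρ₀ : ℝ → ℝ} {t : ℝ} {f : ℝ → ℝ} {j : ℕ} {u : ℝ}
    (hu : u ∈ Icc (0:ℝ) 1)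
    (hρ : 0 ≤ t * ρ₀ ((2:ℝ)⁻¹ ^ (j+1)))
    (hg : goodLevel ρ₀ t f (j+1)) :
    |f (dy (j+1) u) - f (dy j u)| ≤ t * ρ₀ ((2:ℝ)⁻¹ ^ (j+1)) := by
  have hdy : dy j u = ((2 * ⌊u * 2 ^ j⌋₊ : ℕ) : ℝ) / 2 ^ (j+1) := by
    rw [dy_eq_div]
    push_cast
    field_simp
    ring
  rcases floor_succ (j := j) hu.1 with h | h
  · rw [dy_eq_div, h, hdy]
    simpa using hρ
  · rw [dy_eq_div, h, hdy]
    have hle : 2 * ⌊u * 2 ^ j⌋₊ + 1 ≤ 2 ^ (j+1) := by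
      have := floor_dy_le (j := j+1) hu
      omega
    have := hg (2 * ⌊u * 2 ^ j⌋₊) hle
    convert this using 3 <;> push_cast <;> ring


lemma rpow_pow_eq {p : ℝ} (i : ℕ) : ((2:ℝ)⁻¹ ^ i) ^ p = ((2:ℝ)⁻¹ ^ p) ^ i := by
  rw [← Real.rpow_natCast (2:ℝ)⁻¹ i, ← Real.rpow_mul (by norm_num), mul_comm,
    Real.rpow_mul (by norm_num), Real.rpow_natCast]

lemma dy_tendsto {u : ℝ} (hu : 0 ≤ u) (m : ℕ) :
    Tendsto (fun N => dy (m + N) u) atTop (𝓝 u) := by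
  have h0 : Tendsto (fun N => dy (m + N) u - u) atTop (𝓝 0) := by
    refine squeeze_zero_norm (fun N => ?_)
      (tendsto_pow_atTop_nhds_zero_of_lt_one (by norm_num) (by norm_num) : Tendsto (fun N : ℕ => (2:ℝ)⁻¹ ^ N) atTop (𝓝 0))
    have h1 := abs_dy_sub_lt (j := m + N) hu
    have h2 : ((2:ℝ)⁻¹) ^ (m + N) ≤ (2:ℝ)⁻¹ ^ N := by
      apply pow_le_pow_of_le_one (by norm_num) (by norm_num)
      omega
    rw [Real.norm_eq_abs, abs_sub_comm]
    exact le_of_lt (lt_of_lt_of_le h1 h2)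
  simpa using h0.add (tendsto_const_nhds (x := u))

lemma approx_bound {ρ₀ f : ℝ → ℝ} {t Kt p : ℝ} (hf : ContinuousOn f (Icc 0 1))
    (ht : 0 ≤ t) (hKt : 0 < Kt) (hp : 0 < p)
    (hρnn : ∀ h ∈ Icc (0:ℝ) 1, 0 ≤ ρ₀ h)
    (hR : ∀ h ∈ Icc (0:ℝ) 1, ∀ z ∈ Icc (0:ℝ) 1, ρ₀ (z * h) ≤ Kt * z ^ p * ρ₀ h)
    {m : ℕ} (H : ∀ j, m + 1 ≤ j → goodLevel ρ₀ t f j) {u : ℝ} (hu : u ∈ Icc (0:ℝ) 1) :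
    |f u - f (dy m u)| ≤ t * Kt * ρ₀ ((2:ℝ)⁻¹ ^ (m+1)) * (1 - (2:ℝ)⁻¹ ^ p)⁻¹ := by
  set q : ℝ := (2:ℝ)⁻¹ ^ p with hq
  have hq0 : 0 < q := Real.rpow_pos_of_pos (by norm_num) p
  have hq1 : q < 1 := Real.rpow_lt_one (by norm_num) (by norm_num) hp
  have hmem : ∀ j : ℕ, ((2:ℝ)⁻¹ ^ j) ∈ Icc (0:ℝ) 1 := fun j =>
    ⟨by positivity, pow_le_one₀ (by norm_num) (by norm_num)⟩
  have hρm1 : 0 ≤ ρ₀ ((2:ℝ)⁻¹ ^ (m+1)) := hρnn _ (hmem _)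
  -- increment bound
  have hinc : ∀ i : ℕ, |f (dy (m + 1 + i) u) - f (dy (m + i) u)| ≤
      t * Kt * ρ₀ ((2:ℝ)⁻¹ ^ (m+1)) * q ^ i := by
    intro i
    have hg : goodLevel ρ₀ t f (m + i + 1) := H _ (by omega)
    have hρi : 0 ≤ ρ₀ ((2:ℝ)⁻¹ ^ (m + i + 1)) := hρnn _ (hmem _)
    have h1 : |f (dy (m + i + 1) u) - f (dy (m + i) u)| ≤ t * ρ₀ ((2:ℝ)⁻¹ ^ (m + i + 1)) :=
      dy_succ_bound hu (by positivity) hg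
    have h2 : ρ₀ ((2:ℝ)⁻¹ ^ (m + i + 1)) ≤ Kt * q ^ i * ρ₀ ((2:ℝ)⁻¹ ^ (m+1)) := by
      have := hR ((2:ℝ)⁻¹ ^ (m+1)) (hmem _) ((2:ℝ)⁻¹ ^ i) (hmem _)
      have heq : (2:ℝ)⁻¹ ^ i * (2:ℝ)⁻¹ ^ (m+1) = (2:ℝ)⁻¹ ^ (m + i + 1) := by
        rw [← pow_add]; ring_nf
      rw [heq, rpow_pow_eq] at this
      exact this
    have heqi : m + 1 + i = m + i + 1 := by omega
    rw [heqi]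
    calc |f (dy (m + i + 1) u) - f (dy (m + i) u)| ≤ t * ρ₀ ((2:ℝ)⁻¹ ^ (m + i + 1)) := h1
      _ ≤ t * (Kt * q ^ i * ρ₀ ((2:ℝ)⁻¹ ^ (m+1))) := by
          apply mul_le_mul_of_nonneg_left h2 ht
      _ = t * Kt * ρ₀ ((2:ℝ)⁻¹ ^ (m+1)) * q ^ i := by ring
  -- partial sums
  have hpart : ∀ N : ℕ, |f (dy (m + N) u) - f (dy m u)| ≤
      t * Kt * ρ₀ ((2:ℝ)⁻¹ ^ (m+1)) * (1 - q)⁻¹ := by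
    intro N
    have hsum : |f (dy (m + N) u) - f (dy m u)| ≤
        ∑ i ∈ Finset.range N, t * Kt * ρ₀ ((2:ℝ)⁻¹ ^ (m+1)) * q ^ i := by
      induction N with
      | zero => simp
      | succ N ih =>
        have step := hinc N
        have : m + 1 + N = m + (N + 1) := by omega
        rw [this] at step
        calc |f (dy (m + (N+1)) u) - f (dy m u)|
            ≤ |f (dy (m + (N+1)) u) - f (dy (m + N) u)| + |f (dy (m + N) u) - f (dy m u)| :=
              abs_sub_le _ _ _
          _ ≤ t * Kt * ρ₀ ((2:ℝ)⁻¹ ^ (m+1)) * q ^ N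
              + ∑ i ∈ Finset.range N, t * Kt * ρ₀ ((2:ℝ)⁻¹ ^ (m+1)) * q ^ i :=
              add_le_add step ih
          _ = ∑ i ∈ Finset.range (N+1), t * Kt * ρ₀ ((2:ℝ)⁻¹ ^ (m+1)) * q ^ i := by
              rw [Finset.sum_range_succ]; ring
    have hgeom : ∑ i ∈ Finset.range N, q ^ i ≤ (1 - q)⁻¹ := by
      have h := geom_sum_eq (ne_of_lt hq1) N
      have h1q : (0:ℝ) < 1 - q := by linarith
      have hqN : 0 ≤ q ^ N := by positivity
      calc ∑ i ∈ Finset.range N, q ^ i = (q ^ N - 1) / (q - 1) := h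
        _ = (1 - q ^ N) / (1 - q) := by
            rw [div_eq_div_iff (by linarith) (by linarith)]; ring
        _ ≤ 1 / (1 - q) := by gcongr; linarith
        _ = (1 - q)⁻¹ := one_div _
    calc |f (dy (m + N) u) - f (dy m u)|
        ≤ ∑ i ∈ Finset.range N, t * Kt * ρ₀ ((2:ℝ)⁻¹ ^ (m+1)) * q ^ i := hsum
      _ = t * Kt * ρ₀ ((2:ℝ)⁻¹ ^ (m+1)) * ∑ i ∈ Finset.range N, q ^ i := by
          rw [Finset.mul_sum]
      _ ≤ t * Kt * ρ₀ ((2:ℝ)⁻¹ ^ (m+1)) * (1 - q)⁻¹ := by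
          apply mul_le_mul_of_nonneg_left hgeom (by positivity)
  -- limit
  have htend : Tendsto (fun N => f (dy (m + N) u)) atTop (𝓝 (f u)) := by
    have hdytend : Tendsto (fun N => dy (m + N) u) atTop (𝓝[Icc (0:ℝ) 1] u) := by
      rw [tendsto_nhdsWithin_iff]
      exact ⟨dy_tendsto hu.1 m, Filter.Eventually.of_forall fun N => dy_mem hu⟩
    exact ((hf u hu).tendsto).comp hdytend
  have habs : Tendsto (fun N => |f (dy (m + N) u) - f (dy m u)|) atTop
      (𝓝 |f u - f (dy m u)|) := ((htend.sub tendsto_const_nhds).abs)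
  exact le_of_tendsto' habs hpart


lemma exists_level {h : ℝ} (h0 : 0 < h) (h1 : h ≤ 1) :
    ∃ ℓ : ℕ, (2:ℝ)⁻¹ ^ (ℓ+1) < h ∧ h ≤ (2:ℝ)⁻¹ ^ ℓ := by
  set n := ⌊1/h⌋₊ with hn
  have hinv1 : (1:ℝ) ≤ 1/h := by rw [le_div_iff₀ h0]; linarith
  have hn1 : 1 ≤ n := by
    rw [hn]; exact Nat.le_floor (by exact_mod_cast hinv1)
  refine ⟨Nat.log 2 n, ?_, ?_⟩
  · have hlt : n < 2 ^ (Nat.log 2 n + 1) := Nat.lt_pow_succ_log_self (by norm_num) n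
    have h2 : 1/h < (n:ℝ) + 1 := Nat.lt_floor_add_one _
    have h3 : ((n:ℝ)) + 1 ≤ ((2:ℝ)) ^ (Nat.log 2 n + 1) := by
      have : (n + 1 : ℕ) ≤ 2 ^ (Nat.log 2 n + 1) := hlt
      exact_mod_cast this
    have h4 : 1/h < (2:ℝ) ^ (Nat.log 2 n + 1) := lt_of_lt_of_le h2 h3
    have h5 : 1 < (2:ℝ) ^ (Nat.log 2 n + 1) * h := by rwa [div_lt_iff₀ h0] at h4
    rw [inv_pow]
    calc ((2:ℝ) ^ (Nat.log 2 n + 1))⁻¹ = ((2:ℝ) ^ (Nat.log 2 n + 1))⁻¹ * 1 := by ring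
      _ < ((2:ℝ) ^ (Nat.log 2 n + 1))⁻¹ * ((2:ℝ) ^ (Nat.log 2 n + 1) * h) := by
          apply mul_lt_mul_of_pos_left h5 (by positivity)
      _ = h := by field_simp
  · have hle : 2 ^ (Nat.log 2 n) ≤ n := Nat.pow_log_le_self 2 (by omega)
    have h2 : ((2:ℝ)) ^ (Nat.log 2 n) ≤ 1/h := by
      have : ((2 ^ Nat.log 2 n : ℕ) : ℝ) ≤ (n : ℝ) := by exact_mod_cast hle
      calc ((2:ℝ)) ^ (Nat.log 2 n) = ((2 ^ Nat.log 2 n : ℕ) : ℝ) := by push_cast; ring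
        _ ≤ (n:ℝ) := this
        _ ≤ 1/h := Nat.floor_le (by positivity)
    have h5 : (2:ℝ) ^ Nat.log 2 n * h ≤ 1 := by rwa [le_div_iff₀ h0] at h2
    rw [inv_pow]
    calc h = ((2:ℝ) ^ Nat.log 2 n)⁻¹ * ((2:ℝ) ^ Nat.log 2 n * h) := by field_simp
      _ ≤ ((2:ℝ) ^ Nat.log 2 n)⁻¹ * 1 := by
          apply mul_le_mul_of_nonneg_left h5 (by positivity)
      _ = ((2:ℝ) ^ Nat.log 2 n)⁻¹ := by ring

lemma pow_lt_pow_level {a b : ℕ} (hab : (2:ℝ)⁻¹ ^ a < (2:ℝ)⁻¹ ^ b) : b < a := by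
  by_contra hc
  push_neg at hc
  have : (2:ℝ)⁻¹ ^ a ≥ (2:ℝ)⁻¹ ^ b :=
    pow_le_pow_of_le_one (by norm_num) (by norm_num) hc
  linarith

/-- middle step bound: dyadic points at level `L` within `c` steps. -/
lemma middle_bound {ρ₀ f : ℝ → ℝ} {t : ℝ} {L : ℕ} (ht : 0 ≤ t)
    (hρnn : 0 ≤ ρ₀ ((2:ℝ)⁻¹ ^ L))
    (hg : goodLevel ρ₀ t f L) {ka kb c : ℕ} (hka : ka ≤ 2 ^ L) (hkb : kb ≤ 2 ^ L)
    (hc : ka ≤ kb + c ∧ kb ≤ ka + c) :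
    |f ((kb:ℕ) / 2 ^ L) - f ((ka:ℕ) / 2 ^ L)| ≤ (c:ℝ) * (t * ρ₀ ((2:ℝ)⁻¹ ^ L)) := by
  have hnn : 0 ≤ t * ρ₀ ((2:ℝ)⁻¹ ^ L) := by positivity
  rcases Nat.le_total ka kb with hle | hle
  · have := multi_step hnn hg ka kb hle hkb
    refine this.trans ?_
    have : ((kb - ka : ℕ) : ℝ) ≤ (c:ℝ) := by
      have : kb - ka ≤ c := by omega
      exact_mod_cast this
    exact mul_le_mul_of_nonneg_right this hnn
  · have := multi_step hnn hg kb ka hle hka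
    rw [abs_sub_comm]
    refine this.trans ?_
    have : ((ka - kb : ℕ) : ℝ) ≤ (c:ℝ) := by
      have : ka - kb ≤ c := by omega
      exact_mod_cast this
    exact mul_le_mul_of_nonneg_right this hnn

section Det

variable {ρ₀ ρ f : ℝ → ℝ} {t Kt p S : ℝ} {J : ℕ}

/-- The deterministic bound constant. -/
def detM (ρ₀ ρ : ℝ → ℝ) (t Kt p S : ℝ) (J : ℕ) : ℝ :=
  max ((3*t + 2*t*Kt*(1 - (2:ℝ)⁻¹ ^ p)⁻¹) * S)
    ((2^J * (t * ρ₀ ((2:ℝ)⁻¹ ^ J)) + 2*(t*Kt*ρ₀ ((2:ℝ)⁻¹ ^ (J+1))*(1 - (2:ℝ)⁻¹ ^ p)⁻¹))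
      / ρ ((2:ℝ)⁻¹ ^ J))

lemma small_gap
    (hf : ContinuousOn f (Icc 0 1)) (ht : 0 ≤ t) (hKt : 0 < Kt) (hp : 0 < p)
    (hρ₀mono : MonotoneOn ρ₀ (Icc 0 1)) (hρ₀nn : ∀ h ∈ Icc (0:ℝ) 1, 0 ≤ ρ₀ h)
    (hR : ∀ h ∈ Icc (0:ℝ) 1, ∀ z ∈ Icc (0:ℝ) 1, ρ₀ (z * h) ≤ Kt * z ^ p * ρ₀ h)
    (H : ∀ j, J ≤ j → goodLevel ρ₀ t f j)
    {u v : ℝ} (hu : u ∈ Icc (0:ℝ) 1) (hv : v ∈ Icc (0:ℝ) 1) (huv : u ≠ v)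
    (hgap : |u - v| ≤ (2:ℝ)⁻¹ ^ J) :
    |f u - f v| ≤ (3*t + 2*t*Kt*(1 - (2:ℝ)⁻¹ ^ p)⁻¹) * ρ₀ |u - v| := by
  set h := |u - v| with hh
  have h0 : 0 < h := abs_pos.mpr (sub_ne_zero.mpr huv)
  have h1 : h ≤ 1 := by
    rw [hh, abs_sub_le_iff]
    constructor <;> [linarith [hu.1, hu.2, hv.1, hv.2]; linarith [hu.1, hu.2, hv.1, hv.2]]
  obtain ⟨ℓ, hℓ1, hℓ2⟩ := exists_level h0 h1
  set L := ℓ + 1 with hL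
  have hJL : J ≤ L := by
    have : (2:ℝ)⁻¹ ^ L < (2:ℝ)⁻¹ ^ J := lt_of_lt_of_le hℓ1 hgap
    have := pow_lt_pow_level this
    omega
  have hmem : ∀ j : ℕ, ((2:ℝ)⁻¹ ^ j) ∈ Icc (0:ℝ) 1 := fun j =>
    ⟨by positivity, pow_le_one₀ (by norm_num) (by norm_num)⟩
  have hhmem : h ∈ Icc (0:ℝ) 1 := ⟨le_of_lt h0, h1⟩
  have hq1 : (2:ℝ)⁻¹ ^ p < 1 := Real.rpow_lt_one (by norm_num) (by norm_num) hp
  have hq0 : (0:ℝ) < (2:ℝ)⁻¹ ^ p := Real.rpow_pos_of_pos (by norm_num) p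
  have hinv : (0:ℝ) ≤ (1 - (2:ℝ)⁻¹ ^ p)⁻¹ := by
    apply inv_nonneg.mpr; linarith
  -- outer terms
  have H' : ∀ j, L + 1 ≤ j → goodLevel ρ₀ t f j := fun j hj => H j (by omega)
  have hout_u := approx_bound hf ht hKt hp hρ₀nn hR H' hu
  have hout_v := approx_bound hf ht hKt hp hρ₀nn hR H' hv
  -- middle term
  have hgL : goodLevel ρ₀ t f L := H L hJL
  have hρLnn : 0 ≤ ρ₀ ((2:ℝ)⁻¹ ^ L) := hρ₀nn _ (hmem _)
  set ka := ⌊u * 2 ^ L⌋₊ with hka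
  set kb := ⌊v * 2 ^ L⌋₊ with hkb
  have hkaL : ka ≤ 2 ^ L := floor_dy_le hu
  have hkbL : kb ≤ 2 ^ L := floor_dy_le hv
  have hdyu := abs_dy_sub_lt (j := L) hu.1
  have hdyv := abs_dy_sub_lt (j := L) hv.1
  have hABlt : |dy L u - dy L v| < 4 * (2:ℝ)⁻¹ ^ L := by
    have h2 : |dy L u - dy L v| ≤ |dy L u - u| + |u - v| + |v - dy L v| := by
      have := abs_sub_le (dy L u) u (dy L v)
      have h3 := abs_sub_le u v (dy L v)
      calc |dy L u - dy L v| ≤ |dy L u - u| + |u - dy L v| := abs_sub_le _ _ _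
        _ ≤ |dy L u - u| + (|u - v| + |v - dy L v|) := by linarith [abs_sub_le u v (dy L v)]
        _ = |dy L u - u| + |u - v| + |v - dy L v| := by ring
    have hPL : (2:ℝ)⁻¹ ^ L ≤ (2:ℝ)⁻¹ ^ ℓ := by
      apply pow_le_pow_of_le_one (by norm_num) (by norm_num); omega
    have hpow : (2:ℝ)⁻¹ ^ ℓ = 2 * (2:ℝ)⁻¹ ^ L := by
      rw [hL, pow_succ]; field_simp
    have hdyu' : |dy L u - u| < (2:ℝ)⁻¹ ^ L := by rw [abs_sub_comm]; exact hdyu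
    have hdyv' : |v - dy L v| < (2:ℝ)⁻¹ ^ L := hdyv
    calc |dy L u - dy L v| ≤ |dy L u - u| + |u - v| + |v - dy L v| := h2
      _ < (2:ℝ)⁻¹ ^ L + (2:ℝ)⁻¹ ^ ℓ + (2:ℝ)⁻¹ ^ L := by
          have := hℓ2
          linarith
      _ = 4 * (2:ℝ)⁻¹ ^ L := by rw [hpow]; ring
  have hkdist : ka ≤ kb + 3 ∧ kb ≤ ka + 3 := by
    have hval : |((ka:ℝ) - kb)| < 4 := by
      have h2L : (0:ℝ) < 2 ^ L := two_pow_pos L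
      have : |dy L u - dy L v| = |((ka:ℝ) - kb)| / 2 ^ L := by
        rw [dy_eq_div, dy_eq_div, ← hka, ← hkb, div_sub_div_same, abs_div, abs_of_pos h2L]
      rw [this] at hABlt
      rw [div_lt_iff₀ h2L] at hABlt
      have hip : (2:ℝ)⁻¹ ^ L * 2 ^ L = 1 := by
        rw [inv_pow]; field_simp
      nlinarith
    constructor
    · by_contra hc
      push_neg at hc
      have : (kb:ℝ) + 4 ≤ (ka:ℝ) := by exact_mod_cast hc
      have : |((ka:ℝ) - kb)| ≥ 4 := by rw [abs_of_nonneg (by linarith)]; linarith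
      linarith
    · by_contra hc
      push_neg at hc
      have : (ka:ℝ) + 4 ≤ (kb:ℝ) := by exact_mod_cast hc
      have : |((ka:ℝ) - kb)| ≥ 4 := by rw [abs_of_nonpos (by linarith)]; linarith
      linarith
  have hmid := middle_bound ht hρLnn hgL hkbL hkaL ⟨hkdist.2, hkdist.1⟩
  -- ρ₀ monotonicity facts
  have hρLle : ρ₀ ((2:ℝ)⁻¹ ^ L) ≤ ρ₀ h :=
    hρ₀mono (hmem L) hhmem (le_of_lt hℓ1)
  have hρL1le : ρ₀ ((2:ℝ)⁻¹ ^ (L+1)) ≤ ρ₀ h := by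
    apply hρ₀mono (hmem (L+1)) hhmem
    calc (2:ℝ)⁻¹ ^ (L+1) ≤ (2:ℝ)⁻¹ ^ L :=
          pow_le_pow_of_le_one (by norm_num) (by norm_num) (by omega)
      _ ≤ h := le_of_lt hℓ1
  have hρhnn : 0 ≤ ρ₀ h := hρ₀nn _ hhmem
  -- assemble
  have hAu : dy L u = ((ka:ℕ) : ℝ) / 2 ^ L := by rw [dy_eq_div, hka]
  have hAv : dy L v = ((kb:ℕ) : ℝ) / 2 ^ L := by rw [dy_eq_div, hkb]
  calc |f u - f v|
      ≤ |f u - f (dy L u)| + |f (dy L u) - f (dy L v)| + |f (dy L v) - f v| := by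
        have a1 := abs_sub_le (f u) (f (dy L u)) (f v)
        have a2 := abs_sub_le (f (dy L u)) (f (dy L v)) (f v)
        linarith
    _ ≤ t * Kt * ρ₀ ((2:ℝ)⁻¹ ^ (L+1)) * (1 - (2:ℝ)⁻¹ ^ p)⁻¹
        + 3 * (t * ρ₀ ((2:ℝ)⁻¹ ^ L))
        + t * Kt * ρ₀ ((2:ℝ)⁻¹ ^ (L+1)) * (1 - (2:ℝ)⁻¹ ^ p)⁻¹ := by
        have hm : |f (dy L u) - f (dy L v)| ≤ 3 * (t * ρ₀ ((2:ℝ)⁻¹ ^ L)) := by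
          rw [hAu, hAv]
          exact_mod_cast hmid
        have ho2 : |f (dy L v) - f v| ≤ t * Kt * ρ₀ ((2:ℝ)⁻¹ ^ (L+1)) * (1 - (2:ℝ)⁻¹ ^ p)⁻¹ := by
          rw [abs_sub_comm]; exact hout_v
        linarith
    _ ≤ (3*t + 2*t*Kt*(1 - (2:ℝ)⁻¹ ^ p)⁻¹) * ρ₀ h := by
        have e1 : t * Kt * ρ₀ ((2:ℝ)⁻¹ ^ (L+1)) * (1 - (2:ℝ)⁻¹ ^ p)⁻¹
            ≤ t * Kt * ρ₀ h * (1 - (2:ℝ)⁻¹ ^ p)⁻¹ := by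
          apply mul_le_mul_of_nonneg_right _ hinv
          apply mul_le_mul_of_nonneg_left hρL1le (by positivity)
        have e2 : 3 * (t * ρ₀ ((2:ℝ)⁻¹ ^ L)) ≤ 3 * (t * ρ₀ h) := by
          apply mul_le_mul_of_nonneg_left _ (by norm_num)
          exact mul_le_mul_of_nonneg_left hρLle ht
        nlinarith

lemma large_gap
    (hf : ContinuousOn f (Icc 0 1)) (ht : 0 ≤ t) (hKt : 0 < Kt) (hp : 0 < p)
    (hρ₀nn : ∀ h ∈ Icc (0:ℝ) 1, 0 ≤ ρ₀ h)
    (hR : ∀ h ∈ Icc (0:ℝ) 1, ∀ z ∈ Icc (0:ℝ) 1, ρ₀ (z * h) ≤ Kt * z ^ p * ρ₀ h)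
    (H : ∀ j, J ≤ j → goodLevel ρ₀ t f j)
    {u v : ℝ} (hu : u ∈ Icc (0:ℝ) 1) (hv : v ∈ Icc (0:ℝ) 1) :
    |f u - f v| ≤ 2^J * (t * ρ₀ ((2:ℝ)⁻¹ ^ J))
      + 2*(t*Kt*ρ₀ ((2:ℝ)⁻¹ ^ (J+1))*(1 - (2:ℝ)⁻¹ ^ p)⁻¹) := by
  have hmem : ∀ j : ℕ, ((2:ℝ)⁻¹ ^ j) ∈ Icc (0:ℝ) 1 := fun j =>
    ⟨by positivity, pow_le_one₀ (by norm_num) (by norm_num)⟩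
  have H' : ∀ j, J + 1 ≤ j → goodLevel ρ₀ t f j := fun j hj => H j (by omega)
  have hout_u := approx_bound hf ht hKt hp hρ₀nn hR H' hu
  have hout_v := approx_bound hf ht hKt hp hρ₀nn hR H' hv
  have hgJ : goodLevel ρ₀ t f J := H J le_rfl
  have hρJnn : 0 ≤ ρ₀ ((2:ℝ)⁻¹ ^ J) := hρ₀nn _ (hmem _)
  set ka := ⌊u * 2 ^ J⌋₊ with hka
  set kb := ⌊v * 2 ^ J⌋₊ with hkb
  have hkaL : ka ≤ 2 ^ J := floor_dy_le hu
  have hkbL : kb ≤ 2 ^ J := floor_dy_le hv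
  have hmid := middle_bound ht hρJnn hgJ hkbL hkaL
    ⟨by omega, by omega⟩ (c := 2 ^ J)
  have hAu : dy J u = ((ka:ℕ) : ℝ) / 2 ^ J := by rw [dy_eq_div, hka]
  have hAv : dy J v = ((kb:ℕ) : ℝ) / 2 ^ J := by rw [dy_eq_div, hkb]
  have hm : |f (dy J u) - f (dy J v)| ≤ (2^J : ℕ) * (t * ρ₀ ((2:ℝ)⁻¹ ^ J)) := by
    rw [hAu, hAv]
    exact_mod_cast hmid
  have hcast : ((2^J : ℕ) : ℝ) = (2:ℝ)^J := by push_cast; ring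
  calc |f u - f v|
      ≤ |f u - f (dy J u)| + |f (dy J u) - f (dy J v)| + |f (dy J v) - f v| := by
        have a1 := abs_sub_le (f u) (f (dy J u)) (f v)
        have a2 := abs_sub_le (f (dy J u)) (f (dy J v)) (f v)
        linarith
    _ ≤ t * Kt * ρ₀ ((2:ℝ)⁻¹ ^ (J+1)) * (1 - (2:ℝ)⁻¹ ^ p)⁻¹
        + (2:ℝ)^J * (t * ρ₀ ((2:ℝ)⁻¹ ^ J))
        + t * Kt * ρ₀ ((2:ℝ)⁻¹ ^ (J+1)) * (1 - (2:ℝ)⁻¹ ^ p)⁻¹ := by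
        have ho2 : |f (dy J v) - f v| ≤ t * Kt * ρ₀ ((2:ℝ)⁻¹ ^ (J+1)) * (1 - (2:ℝ)⁻¹ ^ p)⁻¹ := by
          rw [abs_sub_comm]; exact hout_v
        rw [hcast] at hm
        linarith
    _ = 2^J * (t * ρ₀ ((2:ℝ)⁻¹ ^ J))
        + 2*(t*Kt*ρ₀ ((2:ℝ)⁻¹ ^ (J+1))*(1 - (2:ℝ)⁻¹ ^ p)⁻¹) := by ring

lemma det_bound
    (hf : ContinuousOn f (Icc 0 1)) (ht : 0 ≤ t) (hKt : 0 < Kt) (hp : 0 < p)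
    (hρ₀mono : MonotoneOn ρ₀ (Icc 0 1)) (hρ₀nn : ∀ h ∈ Icc (0:ℝ) 1, 0 ≤ ρ₀ h)
    (hR : ∀ h ∈ Icc (0:ℝ) 1, ∀ z ∈ Icc (0:ℝ) 1, ρ₀ (z * h) ≤ Kt * z ^ p * ρ₀ h)
    (hρmono : MonotoneOn ρ (Icc 0 1)) (hρpos : ∀ h : ℝ, 0 < h → h ≤ 1 → 0 < ρ h)
    (hS : 0 ≤ S) (hSle : ∀ h : ℝ, 0 < h → h ≤ 1 → ρ₀ h ≤ S * ρ h)
    (H : ∀ j, J ≤ j → goodLevel ρ₀ t f j)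
    {u v : ℝ} (hu : u ∈ Icc (0:ℝ) 1) (hv : v ∈ Icc (0:ℝ) 1) (huv : u ≠ v) :
    |f u - f v| / ρ |u - v| ≤ detM ρ₀ ρ t Kt p S J := by
  set h := |u - v| with hh
  have h0 : 0 < h := abs_pos.mpr (sub_ne_zero.mpr huv)
  have h1 : h ≤ 1 := by
    rw [hh, abs_sub_le_iff]
    constructor <;> [linarith [hu.1, hu.2, hv.1, hv.2]; linarith [hu.1, hu.2, hv.1, hv.2]]
  have hρh : 0 < ρ h := hρpos h h0 h1
  have hmem : ∀ j : ℕ, ((2:ℝ)⁻¹ ^ j) ∈ Icc (0:ℝ) 1 := fun j =>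
    ⟨by positivity, pow_le_one₀ (by norm_num) (by norm_num)⟩
  have hq1 : (2:ℝ)⁻¹ ^ p < 1 := Real.rpow_lt_one (by norm_num) (by norm_num) hp
  have hinv : (0:ℝ) ≤ (1 - (2:ℝ)⁻¹ ^ p)⁻¹ := by apply inv_nonneg.mpr; linarith
  rw [div_le_iff₀ hρh]
  rcases le_or_gt h ((2:ℝ)⁻¹ ^ J) with hgap | hgap
  · have hsg := small_gap hf ht hKt hp hρ₀mono hρ₀nn hR H hu hv huv hgap
    have hc₀ : 0 ≤ 3*t + 2*t*Kt*(1 - (2:ℝ)⁻¹ ^ p)⁻¹ := by positivity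
    calc |f u - f v| ≤ (3*t + 2*t*Kt*(1 - (2:ℝ)⁻¹ ^ p)⁻¹) * ρ₀ h := hsg
      _ ≤ (3*t + 2*t*Kt*(1 - (2:ℝ)⁻¹ ^ p)⁻¹) * (S * ρ h) :=
          mul_le_mul_of_nonneg_left (hSle h h0 h1) hc₀
      _ = ((3*t + 2*t*Kt*(1 - (2:ℝ)⁻¹ ^ p)⁻¹) * S) * ρ h := by ring
      _ ≤ detM ρ₀ ρ t Kt p S J * ρ h := by
          apply mul_le_mul_of_nonneg_right (le_max_left _ _) (le_of_lt hρh)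
  · have hlg := large_gap hf ht hKt hp hρ₀nn hR H hu hv
    set D := 2^J * (t * ρ₀ ((2:ℝ)⁻¹ ^ J))
      + 2*(t*Kt*ρ₀ ((2:ℝ)⁻¹ ^ (J+1))*(1 - (2:ℝ)⁻¹ ^ p)⁻¹) with hD
    have hDnn : 0 ≤ D := by
      rw [hD]
      have := hρ₀nn _ (hmem J)
      have := hρ₀nn _ (hmem (J+1))
      positivity
    have hρJ : 0 < ρ ((2:ℝ)⁻¹ ^ J) := hρpos _ (by positivity) (pow_le_one₀ (by norm_num) (by norm_num))
    have hρJh : ρ ((2:ℝ)⁻¹ ^ J) ≤ ρ h := hρmono (hmem J) ⟨le_of_lt h0, h1⟩ (le_of_lt hgap)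
    calc |f u - f v| ≤ D := hlg
      _ = (D / ρ ((2:ℝ)⁻¹ ^ J)) * ρ ((2:ℝ)⁻¹ ^ J) :=
          (div_mul_cancel₀ D (ne_of_gt hρJ)).symm
      _ ≤ (D / ρ ((2:ℝ)⁻¹ ^ J)) * ρ h := by
          apply mul_le_mul_of_nonneg_left hρJh (by positivity)
      _ ≤ detM ρ₀ ρ t Kt p S J * ρ h := by
          apply mul_le_mul_of_nonneg_right (le_max_right _ _) (le_of_lt hρh)

end Det

end HolderAux

namespace HolderAux

lemma ratio_S_exists {ρ₀ ρ : ℝ → ℝ}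
    (hρ₀mono : MonotoneOn ρ₀ (Icc 0 1))
    (hρ₀pos : ∀ h : ℝ, 0 < h → h ≤ 1 → 0 < ρ₀ h)
    (hmod : IsModulus ρ)
    (htend : Tendsto (fun h => ρ h / ρ₀ h) (𝓝[>] (0:ℝ)) atTop) :
    ∃ S : ℝ, 0 ≤ S ∧ ∀ h : ℝ, 0 < h → h ≤ 1 → ρ₀ h ≤ S * ρ h := by
  have hev : ∀ᶠ h in 𝓝[>] (0:ℝ), 1 ≤ ρ h / ρ₀ h := htend.eventually_ge_atTop 1
  rw [eventually_nhdsWithin_iff, Metric.eventually_nhds_iff] at hev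
  obtain ⟨ε, hε, hball⟩ := hev
  set δ : ℝ := min (ε/2) 1 with hδ
  have hδ0 : 0 < δ := lt_min (by linarith) one_pos
  have hδ1 : δ ≤ 1 := min_le_right _ _
  have hδε : δ < ε := lt_of_le_of_lt (min_le_left _ _) (by linarith)
  have hρδ : 0 < ρ δ := hmod.pos δ hδ0 hδ1
  refine ⟨max 1 (ρ₀ 1 / ρ δ), le_trans zero_le_one (le_max_left _ _), ?_⟩
  intro h h0 h1
  rcases le_or_gt h δ with hle | hlt
  · have hdist : dist h 0 < ε := by
      rw [Real.dist_eq, sub_zero, abs_of_pos h0]; linarith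
    have h2 := hball hdist (mem_Ioi.mpr h0)
    have hρ₀h := hρ₀pos h h0 h1
    have h3 : ρ₀ h ≤ ρ h := by rwa [le_div_iff₀ hρ₀h, one_mul] at h2
    have hρh : 0 ≤ ρ h := le_trans (le_of_lt hρ₀h) h3
    calc ρ₀ h ≤ ρ h := h3
      _ = 1 * ρ h := (one_mul _).symm
      _ ≤ max 1 (ρ₀ 1 / ρ δ) * ρ h :=
          mul_le_mul_of_nonneg_right (le_max_left _ _) hρh
  · have hρh : ρ δ ≤ ρ h := hmod.mono ⟨le_of_lt hδ0, hδ1⟩ ⟨le_of_lt h0, h1⟩ (le_of_lt hlt)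
    calc ρ₀ h ≤ ρ₀ 1 := hρ₀mono ⟨le_of_lt h0, h1⟩ ⟨zero_le_one, le_rfl⟩ h1
      _ = (ρ₀ 1 / ρ δ) * ρ δ := (div_mul_cancel₀ _ (ne_of_gt hρδ)).symm
      _ ≤ max 1 (ρ₀ 1 / ρ δ) * ρ δ :=
          mul_le_mul_of_nonneg_right (le_max_right _ _) (le_of_lt hρδ)
      _ ≤ max 1 (ρ₀ 1 / ρ δ) * ρ h :=
          mul_le_mul_of_nonneg_left hρh (le_trans zero_le_one (le_max_left _ _))

lemma dyadic_pair_sub (j k : ℕ) :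
    ((k+1 : ℕ) : ℝ) / 2 ^ j - ((k : ℕ) : ℝ) / 2 ^ j = (2:ℝ)⁻¹ ^ j := by
  rw [div_sub_div_same, inv_pow]
  push_cast
  have h2 : ((2:ℝ) ^ j) ≠ 0 := by positivity
  field_simp
  ring

lemma dyadic_pair_dist (j k : ℕ) :
    |((k+1 : ℕ) : ℝ) / 2 ^ j - ((k : ℕ) : ℝ) / 2 ^ j| = (2:ℝ)⁻¹ ^ j := by
  rw [dyadic_pair_sub]
  exact abs_of_pos (by positivity)

lemma dyadic_pair_mem {j k : ℕ} (hk : k + 1 ≤ 2 ^ j) :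
    ((k+1 : ℕ) : ℝ) / 2 ^ j ∈ Icc (0:ℝ) 1 ∧ ((k : ℕ) : ℝ) / 2 ^ j ∈ Icc (0:ℝ) 1 := by
  have h2 : (0:ℝ) < 2 ^ j := by positivity
  have hc : ((k+1 : ℕ) : ℝ) ≤ (2:ℝ) ^ j := by
    have : ((k+1 : ℕ) : ℝ) ≤ ((2 ^ j : ℕ) : ℝ) := by exact_mod_cast hk
    calc ((k+1 : ℕ) : ℝ) ≤ ((2 ^ j : ℕ) : ℝ) := this
      _ = (2:ℝ) ^ j := by push_cast; ring
  constructor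
  · constructor
    · positivity
    · rw [div_le_one h2]; exact hc
  · constructor
    · positivity
    · rw [div_le_one h2]
      have : ((k : ℕ) : ℝ) ≤ ((k+1 : ℕ) : ℝ) := by push_cast; linarith
      linarith

lemma dyadic_pair_ne {j k : ℕ} :
    ((k+1 : ℕ) : ℝ) / 2 ^ j ≠ ((k : ℕ) : ℝ) / 2 ^ j := by
  intro hcontra
  have h := dyadic_pair_sub j k
  rw [hcontra, sub_self] at h
  have : (0:ℝ) < (2:ℝ)⁻¹ ^ j := by positivity
  linarith [h.symm]

end HolderAux


/-- Under (T) and (R), for any modulus ρ with ρ(h)/ρ₀(h) → ∞ as h → 0,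
the Hölder seminorms |W_n|_ρ are stochastically bounded. -/
theorem holder_seminorm_stochastically_bounded
    {Ω : Type*} [MeasurableSpace Ω] (P : Measure Ω) [IsProbabilityMeasure P]
    (W : ℕ → Ω → ℝ → ℝ)
    (hpath : ∀ n ω, ContinuousOn (W n ω) (Icc 0 1))
    (ρ₀ : ℝ → ℝ)
    (hρ₀mono : MonotoneOn ρ₀ (Icc 0 1))
    (hρ₀zero : ρ₀ 0 = 0)
    (hρ₀nonneg : ∀ h ∈ Icc (0:ℝ) 1, 0 ≤ ρ₀ h)
    (hρ₀pos : ∀ h : ℝ, 0 < h → h ≤ 1 → 0 < ρ₀ h)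
    (C : ℝ) (hC : 0 < C)
    (hT : ∀ t > C, ∃ κ > (1:ℝ), ∃ K > (0:ℝ),
      ∀ n : ℕ, ∀ u ∈ Icc (0:ℝ) 1, ∀ v ∈ Icc (0:ℝ) 1, u ≠ v →
        P {ω | t * ρ₀ |u - v| < |W n ω u - W n ω v|}
          ≤ ENNReal.ofReal (K * |u - v| ^ κ))
    (hR : ∃ p > (0:ℝ), ∃ Kt > (0:ℝ), ∀ h ∈ Icc (0:ℝ) 1, ∀ z ∈ Icc (0:ℝ) 1,
      ρ₀ (z * h) ≤ Kt * z ^ p * ρ₀ h) :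
    ∀ ρ : ℝ → ℝ, IsModulus ρ →
      Tendsto (fun h => ρ h / ρ₀ h) (𝓝[>] (0:ℝ)) atTop →
      Tendsto
        (fun M : ℝ => ⨆ n : ℕ, P {ω | ENNReal.ofReal M < holderSemi ρ (W n ω)})
        atTop (𝓝 0) := by
  intro ρ hmod htend
  classical
  -- constants
  obtain ⟨κ, hκ, K, hK, htail⟩ := hT (C + 1) (by linarith)
  set t : ℝ := C + 1 with htdef
  have ht0 : 0 ≤ t := by rw [htdef]; linarith
  obtain ⟨p, hp, Kt, hKt, hRR⟩ := hR
  obtain ⟨S, hS0, hSle⟩ := HolderAux.ratio_S_exists hρ₀mono hρ₀pos hmod htend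
  set r : ℝ := (2:ℝ)⁻¹ ^ (κ - 1) with hrdef
  have hr0 : 0 < r := Real.rpow_pos_of_pos (by norm_num) _
  have hr1 : r < 1 := Real.rpow_lt_one (by norm_num) (by norm_num) (by linarith)
  set g : ℕ → ℝ≥0∞ := fun j => ENNReal.ofReal (K * r ^ j) with hgdef
  have hgtop : ∑' j, g j ≠ ⊤ := by
    have hge : ∀ j, g j = ENNReal.ofReal K * (ENNReal.ofReal r) ^ j := by
      intro j
      show ENNReal.ofReal (K * r ^ j) = _
      rw [ENNReal.ofReal_mul (le_of_lt hK), ENNReal.ofReal_pow (le_of_lt hr0)]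
    rw [tsum_congr hge, ENNReal.tsum_mul_left, ENNReal.tsum_geometric]
    apply ENNReal.mul_ne_top ENNReal.ofReal_ne_top
    have hpos : (0:ℝ≥0∞) < 1 - ENNReal.ofReal r :=
      tsub_pos_of_lt (ENNReal.ofReal_lt_one.mpr hr1)
    simp only [Ne, ENNReal.inv_eq_top]
    exact ne_of_gt hpos
  have hTtend : Tendsto (fun J => ∑' k, g (k + J)) atTop (𝓝 0) :=
    ENNReal.tendsto_sum_nat_add g hgtop
  -- real identity for the level bound
  have hrid : ∀ m : ℕ, (2:ℝ) ^ m * (K * ((2:ℝ)⁻¹ ^ m) ^ κ) = K * r ^ m := by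
    intro m
    have h1 : ((2:ℝ)⁻¹ ^ m) ^ κ = ((2:ℝ)⁻¹ ^ κ) ^ m := HolderAux.rpow_pow_eq m
    have h2 : (2:ℝ) * (2:ℝ)⁻¹ ^ κ = r := by
      rw [hrdef]
      have h3 : (2:ℝ)⁻¹ ^ κ = (2:ℝ)⁻¹ ^ (κ - 1) * (2:ℝ)⁻¹ ^ (1:ℝ) := by
        rw [← Real.rpow_add (by norm_num : (0:ℝ) < 2⁻¹)]; ring_nf
      rw [h3, Real.rpow_one]; ring
    calc (2:ℝ) ^ m * (K * ((2:ℝ)⁻¹ ^ m) ^ κ)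
        = K * (((2:ℝ) * (2:ℝ)⁻¹ ^ κ) ^ m) := by rw [h1, mul_pow]; ring
      _ = K * r ^ m := by rw [h2]
  -- key probabilistic bound
  have hkey : ∀ (J : ℕ) (n : ℕ) (M : ℝ), HolderAux.detM ρ₀ ρ t Kt p S J ≤ M →
      P {ω | ENNReal.ofReal M < holderSemi ρ (W n ω)} ≤ ∑' k, g (k + J) := by
    intro J n M hM
    set Bad : ℕ → ℕ → Set Ω := fun j k =>
      {ω | t * ρ₀ ((2:ℝ)⁻¹ ^ j) <
        |W n ω (((k+1:ℕ):ℝ) / 2 ^ j) - W n ω (((k:ℕ):ℝ) / 2 ^ j)|} with hBadDef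
    have hincl : {ω | ENNReal.ofReal M < holderSemi ρ (W n ω)} ⊆
        ⋃ (i : ℕ) (k : ℕ) (_ : k + 1 ≤ 2 ^ (i + J)), Bad (i + J) k := by
      intro ω hω
      by_contra hno
      simp only [Set.mem_iUnion, not_exists] at hno
      have hgood : ∀ j, J ≤ j → HolderAux.goodLevel ρ₀ t (W n ω) j := by
        intro j hj k hk
        by_contra hbad
        push_neg at hbad
        have hjj : j - J + J = j := Nat.sub_add_cancel hj
        have h2 := hno (j - J) k
        rw [hjj] at h2
        exact h2 hk hbad
      have hle : holderSemi ρ (W n ω) ≤ ENNReal.ofReal M := by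
        unfold holderSemi
        refine iSup_le fun u => iSup_le fun v => iSup_le fun hc => ?_
        apply ENNReal.ofReal_le_ofReal
        refine le_trans (HolderAux.det_bound (hpath n ω) ht0 hKt hp hρ₀mono hρ₀nonneg
          hRR hmod.mono hmod.pos hS0 hSle hgood hc.1 hc.2.1 hc.2.2) hM
      exact absurd hω (not_lt.mpr hle)
    have hlevel : ∀ m : ℕ,
        (∑' k : ℕ, P (⋃ (_ : k + 1 ≤ 2 ^ m), Bad m k)) ≤ g m := by
      intro m
      set c : ℝ≥0∞ := ENNReal.ofReal (K * ((2:ℝ)⁻¹ ^ m) ^ κ) with hcdef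
      set gk : ℕ → ℝ≥0∞ := fun k => if k + 1 ≤ 2 ^ m then c else 0 with hgkdef
      have hsingle : ∀ k, P (⋃ (_ : k + 1 ≤ 2 ^ m), Bad m k) ≤ gk k := by
        intro k
        by_cases hk : k + 1 ≤ 2 ^ m
        · have hsub : (⋃ (_ : k + 1 ≤ 2 ^ m), Bad m k) ⊆ Bad m k :=
            Set.iUnion_subset fun _ => subset_rfl
          have hmem := HolderAux.dyadic_pair_mem hk
          have hb := htail n _ hmem.1 _ hmem.2 HolderAux.dyadic_pair_ne
          rw [HolderAux.dyadic_pair_dist] at hb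
          have hgke : gk k = c := by simp only [hgkdef]; rw [if_pos hk]
          rw [hgke]
          exact (measure_mono hsub).trans hb
        · have hsub : (⋃ (_ : k + 1 ≤ 2 ^ m), Bad m k) ⊆ (∅ : Set Ω) :=
            Set.iUnion_subset fun h => absurd h hk
          have hgke : gk k = 0 := by simp only [hgkdef]; rw [if_neg hk]
          rw [hgke]
          calc P (⋃ (_ : k + 1 ≤ 2 ^ m), Bad m k) ≤ P ∅ := measure_mono hsub
            _ = 0 := measure_empty
      have hgk0 : ∀ k ∉ Finset.range (2 ^ m), gk k = 0 := by
        intro k hk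
        rw [Finset.mem_range, not_lt] at hk
        simp only [hgkdef]
        rw [if_neg (by omega)]
      calc (∑' k : ℕ, P (⋃ (_ : k + 1 ≤ 2 ^ m), Bad m k))
          ≤ ∑' k, gk k := ENNReal.tsum_le_tsum hsingle
        _ = ∑ k ∈ Finset.range (2 ^ m), gk k := tsum_eq_sum hgk0
        _ ≤ ∑ _k ∈ Finset.range (2 ^ m), c := by
            refine Finset.sum_le_sum fun k _ => ?_
            simp only [hgkdef]
            split_ifs
            · exact le_rfl
            · exact (zero_le : (0:ℝ≥0∞) ≤ _)
        _ = (2 ^ m : ℕ) • c := by rw [Finset.sum_const, Finset.card_range]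
        _ = ((2 ^ m : ℕ) : ℝ≥0∞) * c := nsmul_eq_mul _ _
        _ = g m := by
            rw [hcdef, hgdef]
            have hcast : ((2 ^ m : ℕ) : ℝ≥0∞) = ENNReal.ofReal ((2:ℝ) ^ m) := by
              rw [← ENNReal.ofReal_natCast]
              congr 1
              push_cast
              ring
            rw [hcast, ← ENNReal.ofReal_mul (by positivity), hrid m]
    calc P {ω | ENNReal.ofReal M < holderSemi ρ (W n ω)}
        ≤ P (⋃ (i : ℕ) (k : ℕ) (_ : k + 1 ≤ 2 ^ (i + J)), Bad (i + J) k) :=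
          measure_mono hincl
      _ ≤ ∑' i : ℕ, P (⋃ (k : ℕ) (_ : k + 1 ≤ 2 ^ (i + J)), Bad (i + J) k) :=
          measure_iUnion_le _
      _ ≤ ∑' i : ℕ, ∑' k : ℕ, P (⋃ (_ : k + 1 ≤ 2 ^ (i + J)), Bad (i + J) k) :=
          ENNReal.tsum_le_tsum fun i => measure_iUnion_le _
      _ ≤ ∑' i : ℕ, g (i + J) := ENNReal.tsum_le_tsum fun i => hlevel (i + J)
  -- conclude
  rw [ENNReal.tendsto_atTop_zero]
  intro ε hε
  obtain ⟨J, hJ⟩ := ENNReal.tendsto_atTop_zero.mp hTtend ε hε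
  refine ⟨HolderAux.detM ρ₀ ρ t Kt p S J, fun M hM => ?_⟩
  refine iSup_le fun n => ?_
  exact (hkey J n M hM).trans (hJ J le_rfl)


end
end

section
/- Invalidity of the additively penalized multiscale statistic under non-Gaussian noise: fix p ∈ (0,1) and let (Z_t)_{t≥1} be i.i.d. N(0, 1/p), (ε_t)_{t≥1} be i.i.d. Bernoulli(p), all mutually independent, and set η_t = ε_t·Z_t (so that E η_t = 0 and Var(η_t) = 1). Let S_n be the interpolated partial sum process of η_1,…,η_n and define T_n^{DS} = sup_{0 ≤ u < v ≤ 1} max( 0, |S_n(v) − S_n(u)|/√(v−u) − √(2·log(e/(v−u))) ). Then T_n^{DS} → ∞ in probability, i.e. P(T_n^{DS} > M) → 1 as n → ∞ for every M > 0. -/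
open MeasureTheory ProbabilityTheory Filter Topology Set
open scoped ENNReal NNReal

noncomputable section

/-- The additively penalized Dümbgen–Spokoiny statistic, as an `ℝ≥0∞`-valued
supremum over all pairs 0 ≤ u < v ≤ 1. -/
def TDS (S : ℝ → ℝ) : ℝ≥0∞ :=
  ⨆ (q : ℝ × ℝ) (_ : 0 ≤ q.1 ∧ q.1 < q.2 ∧ q.2 ≤ 1),
    ENNReal.ofReal (max 0 (|S q.2 - S q.1| / Real.sqrt (q.2 - q.1)
      - Real.sqrt (2 * Real.log (Real.exp 1 / (q.2 - q.1)))))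

set_option linter.unusedVariables false

lemma aux_psp_diff (n t : ℕ) (ht1 : 1 ≤ t) (htn : t ≤ n) (Y : ℕ → ℝ) :
    psp n Y ((t:ℝ)/n) - psp n Y (((t:ℝ)-1)/n) = Y t / Real.sqrt n := by
  have hn0 : (0:ℕ) < n := lt_of_lt_of_le ht1 htn
  have hn : (n:ℝ) ≠ 0 := Nat.cast_ne_zero.2 hn0.ne'
  have h1 : (t:ℝ)/n * n = (t:ℝ) := div_mul_cancel₀ _ hn
  have h2 : ((t:ℝ)-1)/n * n = ((t-1:ℕ):ℝ) := by
    rw [div_mul_cancel₀ _ hn, Nat.cast_sub ht1, Nat.cast_one]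
  have f1 : ⌊(t:ℝ)/n * n⌋₊ = t := by rw [h1, Nat.floor_natCast]
  have f2 : ⌊((t:ℝ)-1)/n * n⌋₊ = t - 1 := by rw [h2, Nat.floor_natCast]
  have hsum : ∑ s ∈ Finset.Icc 1 t, Y s = (∑ s ∈ Finset.Icc 1 (t-1), Y s) + Y t := by
    have := Finset.sum_Icc_succ_top (a := 1) (b := t - 1) (by omega) Y
    rwa [Nat.sub_add_cancel ht1] at this
  unfold psp
  rw [f1, f2, h1, h2, hsum]
  ring

lemma aux_TDS_lt (n t : ℕ) (ht1 : 1 ≤ t) (htn : t ≤ n) (Y : ℕ → ℝ) (M : ℝ) (hM : 0 < M)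
    (h : M + Real.sqrt (2 * Real.log (Real.exp 1 * n)) < |Y t|) :
    ENNReal.ofReal M < TDS (psp n Y) := by
  have hn0 : (0:ℕ) < n := lt_of_lt_of_le ht1 htn
  have hnR : (0:ℝ) < n := by exact_mod_cast hn0
  have ht1R : (1:ℝ) ≤ t := by exact_mod_cast ht1
  have htnR : (t:ℝ) ≤ n := by exact_mod_cast htn
  set q : ℝ × ℝ := (((t:ℝ)-1)/n, (t:ℝ)/n) with hq
  have hcond : 0 ≤ q.1 ∧ q.1 < q.2 ∧ q.2 ≤ 1 :=
    ⟨div_nonneg (by linarith) hnR.le, by apply div_lt_div_of_pos_right (by linarith) hnR, (div_le_one hnR).2 htnR⟩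
  have hdiff : q.2 - q.1 = (n:ℝ)⁻¹ := by
    rw [hq]; field_simp; ring
  have hS : psp n Y q.2 - psp n Y q.1 = Y t / Real.sqrt n := aux_psp_diff n t ht1 htn Y
  have hsn : (0:ℝ) < Real.sqrt n := Real.sqrt_pos.2 hnR
  have hval : |psp n Y q.2 - psp n Y q.1| / Real.sqrt (q.2 - q.1)
      - Real.sqrt (2 * Real.log (Real.exp 1 / (q.2 - q.1))) = |Y t| - Real.sqrt (2 * Real.log (Real.exp 1 * n)) := by
    rw [hS, hdiff, Real.sqrt_inv, abs_div, abs_of_pos hsn, div_inv_eq_mul, div_mul_cancel₀ _ hsn.ne', div_inv_eq_mul]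
  have hMlt : M < max 0 (|psp n Y q.2 - psp n Y q.1| / Real.sqrt (q.2 - q.1)
      - Real.sqrt (2 * Real.log (Real.exp 1 / (q.2 - q.1)))) := by
    rw [hval]; exact lt_max_of_lt_right (by linarith)
  calc ENNReal.ofReal M < ENNReal.ofReal (max 0 (|psp n Y q.2 - psp n Y q.1| / Real.sqrt (q.2 - q.1)
      - Real.sqrt (2 * Real.log (Real.exp 1 / (q.2 - q.1))))) := by
        exact (ENNReal.ofReal_lt_ofReal_iff (lt_trans hM hMlt)).2 hMlt
    _ ≤ TDS (psp n Y) := le_iSup₂ (f := fun (q : ℝ × ℝ) (_ : 0 ≤ q.1 ∧ q.1 < q.2 ∧ q.2 ≤ 1) =>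
        ENNReal.ofReal (max 0 (|psp n Y q.2 - psp n Y q.1| / Real.sqrt (q.2 - q.1)
      - Real.sqrt (2 * Real.log (Real.exp 1 / (q.2 - q.1)))))) q hcond

set_option linter.unusedSectionVars false in
lemma aux_bad_prob {Ω : Type*} [MeasurableSpace Ω] (P : Measure Ω) [IsProbabilityMeasure P]
    (p : ℝ) (hp0 : 0 < p) (hp1 : p < 1)
    (Z ε : ℕ → Ω → ℝ)
    (hZmeas : ∀ t, Measurable (Z t)) (hεmeas : ∀ t, Measurable (ε t))
    (hindep : iIndepFun (Sum.elim Z ε) P)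
    (hZ : ∀ t, Measure.map (Z t) P = gaussianReal 0 (Real.toNNReal (1 / p)))
    (hε : ∀ t, Measure.map (ε t) P
      = ENNReal.ofReal p • Measure.dirac (1 : ℝ)
        + ENNReal.ofReal (1 - p) • Measure.dirac (0 : ℝ))
    (t : ℕ) (a : ℝ) (ha : 0 ≤ a) :
    P {ω | a < |ε t ω * Z t ω|}
      = ENNReal.ofReal p * gaussianReal 0 (Real.toNNReal (1 / p)) {x | a < |x|} := by
  have hsmeas : MeasurableSet {x : ℝ | a < |x|} :=
    measurableSet_lt measurable_const measurable_abs
  -- P(ε_t = 1)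
  have hε1 : P (ε t ⁻¹' {1}) = ENNReal.ofReal p := by
    rw [← Measure.map_apply (hεmeas t) (measurableSet_singleton 1), hε t]
    simp
  -- null set where ε ∉ {0,1}
  have hN : P (ε t ⁻¹' ({0, 1} : Set ℝ)ᶜ) = 0 := by
    rw [← Measure.map_apply (hεmeas t) (by measurability), hε t]
    simp
  -- independence of ε t and Z t
  have hIF : IndepFun (ε t) (Z t) P := by
    have := hindep.indepFun (i := Sum.inr t) (j := Sum.inl t) (by simp)
    exact this
  have hmul : P (ε t ⁻¹' {1} ∩ Z t ⁻¹' {x | a < |x|})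
      = ENNReal.ofReal p * gaussianReal 0 (Real.toNNReal (1 / p)) {x | a < |x|} := by
    rw [hIF.measure_inter_preimage_eq_mul _ _ (measurableSet_singleton 1) hsmeas, hε1,
      ← Measure.map_apply (hZmeas t) hsmeas, hZ t]
  rw [← hmul]
  apply le_antisymm
  · calc P {ω | a < |ε t ω * Z t ω|}
        ≤ P ((ε t ⁻¹' {1} ∩ Z t ⁻¹' {x | a < |x|}) ∪ ε t ⁻¹' ({0, 1} : Set ℝ)ᶜ) := by
          apply measure_mono
          intro ω hω
          simp only [mem_setOf_eq] at hω
          by_cases h1 : ε t ω = 1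
          · left
            refine ⟨by simpa using h1, ?_⟩
            simpa [h1] using hω
          · by_cases h0 : ε t ω = 0
            · exfalso
              rw [h0] at hω
              simp at hω
              linarith
            · right; simp [h0, h1]
      _ ≤ P (ε t ⁻¹' {1} ∩ Z t ⁻¹' {x | a < |x|}) + P (ε t ⁻¹' ({0, 1} : Set ℝ)ᶜ) :=
          measure_union_le _ _
      _ = P (ε t ⁻¹' {1} ∩ Z t ⁻¹' {x | a < |x|}) := by rw [hN, add_zero]
  · apply measure_mono
    rintro ω ⟨h1, h2⟩
    simp only [mem_preimage, mem_singleton_iff] at h1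
    simp only [mem_preimage, mem_setOf_eq] at h2
    simp [mem_setOf_eq, h1, h2]

lemma aux_indep_prod {Ω : Type*} [MeasurableSpace Ω] (P : Measure Ω) [IsProbabilityMeasure P]
    (Z ε : ℕ → Ω → ℝ)
    (hZmeas : ∀ t, Measurable (Z t)) (hεmeas : ∀ t, Measurable (ε t))
    (hindep : iIndepFun (Sum.elim Z ε) P)
    (a : ℝ) (n : ℕ) :
    P (⋂ t ∈ Finset.Icc 1 n, {ω | |ε t ω * Z t ω| ≤ a})
      = ∏ t ∈ Finset.Icc 1 n, P {ω | |ε t ω * Z t ω| ≤ a} := by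
  have hmeas : ∀ i : ℕ ⊕ ℕ, Measurable (Sum.elim Z ε i) := by
    intro i; cases i with
    | inl t => exact hZmeas t
    | inr t => exact hεmeas t
  induction n with
  | zero => simp
  | succ n ih =>
    have hnotmem : n + 1 ∉ Finset.Icc 1 n := by simp
    rw [show Finset.Icc 1 (n+1) = insert (n+1) (Finset.Icc 1 n) by
        ext x; simp [Finset.mem_Icc]; omega]
    rw [Finset.prod_insert hnotmem, ← ih]
    rw [Finset.set_biInter_insert]
    -- the two groups of indices
    set S : Finset (ℕ ⊕ ℕ) :=
      ((Finset.Icc 1 n).image Sum.inl) ∪ ((Finset.Icc 1 n).image Sum.inr) with hSdef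
    set T : Finset (ℕ ⊕ ℕ) := {Sum.inl (n+1), Sum.inr (n+1)} with hTdef
    have hST : Disjoint S T := by
      rw [Finset.disjoint_right]
      intro i hiT hiS
      simp only [hTdef, Finset.mem_insert, Finset.mem_singleton] at hiT
      simp only [hSdef, Finset.mem_union, Finset.mem_image, Finset.mem_Icc] at hiS
      rcases hiT with h | h <;> rcases hiS with ⟨x, hx, hxe⟩ | ⟨x, hx, hxe⟩ <;>
        simp_all <;> omega
    have hIF := hindep.indepFun_finset S T hST hmeas
    have hinlS : ∀ t ∈ Finset.Icc 1 n, Sum.inl t ∈ S := by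
      intro t ht; simp only [hSdef, Finset.mem_union, Finset.mem_image]
      exact Or.inl ⟨t, ht, rfl⟩
    have hinrS : ∀ t ∈ Finset.Icc 1 n, Sum.inr t ∈ S := by
      intro t ht; simp only [hSdef, Finset.mem_union, Finset.mem_image]
      exact Or.inr ⟨t, ht, rfl⟩
    have hinlT : Sum.inl (n+1) ∈ T := by simp [hTdef]
    have hinrT : Sum.inr (n+1) ∈ T := by simp [hTdef]
    set s₁ : Set ((i : S) → ℝ) :=
      ⋂ t ∈ Finset.Icc 1 n, ⋂ (h1 : Sum.inl t ∈ S) (h2 : Sum.inr t ∈ S),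
        {g | |g ⟨Sum.inr t, h2⟩ * g ⟨Sum.inl t, h1⟩| ≤ a} with hs₁def
    set s₂ : Set ((i : T) → ℝ) :=
      {g | |g ⟨Sum.inr (n+1), hinrT⟩ * g ⟨Sum.inl (n+1), hinlT⟩| ≤ a} with hs₂def
    have hs₁ : MeasurableSet s₁ := by
      apply MeasurableSet.biInter (Set.to_countable _)
      intro t _
      apply MeasurableSet.iInter; intro h1
      apply MeasurableSet.iInter; intro h2
      exact measurableSet_le (((measurable_pi_apply (⟨Sum.inr t, h2⟩ : S)).mul
        (measurable_pi_apply (⟨Sum.inl t, h1⟩ : S))).abs) measurable_const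
    have hs₂ : MeasurableSet s₂ :=
      measurableSet_le (((measurable_pi_apply (⟨Sum.inr (n+1), hinrT⟩ : T)).mul
        (measurable_pi_apply (⟨Sum.inl (n+1), hinlT⟩ : T))).abs) measurable_const
    have hpre₁ : (fun ω (i : S) => Sum.elim Z ε (i : ℕ ⊕ ℕ) ω) ⁻¹' s₁
        = ⋂ t ∈ Finset.Icc 1 n, {ω | |ε t ω * Z t ω| ≤ a} := by
      ext ω
      simp only [hs₁def, mem_preimage, mem_iInter, mem_setOf_eq, Sum.elim_inl, Sum.elim_inr]
      constructor
      · intro h t ht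
        exact h t ht (hinlS t ht) (hinrS t ht)
      · intro h t ht _ _
        exact h t ht
    have hpre₂ : (fun ω (i : T) => Sum.elim Z ε (i : ℕ ⊕ ℕ) ω) ⁻¹' s₂
        = {ω | |ε (n+1) ω * Z (n+1) ω| ≤ a} := by
      ext ω
      simp only [hs₂def, mem_preimage, mem_setOf_eq, Sum.elim_inl, Sum.elim_inr]
    have := hIF.measure_inter_preimage_eq_mul s₁ s₂ hs₁ hs₂
    rw [hpre₁, hpre₂] at this
    rw [Set.inter_comm] at this
    rw [this, mul_comm]

lemma aux_sqrt_atTop : Tendsto Real.sqrt atTop atTop := by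
  refine Tendsto.congr' ?_ (tendsto_rpow_atTop (by norm_num : (0:ℝ) < 1/2))
  filter_upwards [eventually_ge_atTop (0:ℝ)] with x hx
  exact (Real.sqrt_eq_rpow x).symm

lemma aux_tail (v : ℝ≥0) (hv : v ≠ 0) (a : ℝ) (ha : 0 ≤ a) :
    ENNReal.ofReal (gaussianPDFReal 0 v (a + 1)) ≤ gaussianReal 0 v {x | a < |x|} := by
  have hsub : Ioc a (a+1) ⊆ {x | a < |x|} := by
    intro x hx
    exact lt_of_lt_of_le hx.1 (le_abs_self x)
  calc ENNReal.ofReal (gaussianPDFReal 0 v (a + 1))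
      = ∫⁻ _ in Ioc a (a+1), ENNReal.ofReal (gaussianPDFReal 0 v (a + 1)) := by
        rw [setLIntegral_const, Real.volume_Ioc]
        norm_num
    _ ≤ ∫⁻ x in Ioc a (a+1), gaussianPDF 0 v x := by
        apply setLIntegral_mono (measurable_gaussianPDF 0 v)
        intro x hx
        rw [gaussianPDF_def]
        apply ENNReal.ofReal_le_ofReal
        rw [gaussianPDFReal_def]
        simp only []
        apply mul_le_mul_of_nonneg_left _ (by positivity)
        apply Real.exp_le_exp.2
        apply div_le_div_of_nonneg_right ?_ (by positivity)
        have h1 : 0 < x := lt_of_le_of_lt ha hx.1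
        nlinarith [hx.1, hx.2]
    _ = gaussianReal 0 v (Ioc a (a+1)) := (gaussianReal_apply 0 hv _).symm
    _ ≤ gaussianReal 0 v {x | a < |x|} := measure_mono hsub

lemma aux_f_tendsto (p M : ℝ) (hp0 : 0 < p) (hp1 : p < 1) (hM : 0 < M) :
    Tendsto (fun n : ℕ => Real.log n
      - p * (M + Real.sqrt (2 * Real.log (Real.exp 1 * n)) + 1) ^ 2 / 2) atTop atTop := by
  set C : ℝ := p / 2 * (M + 1) ^ 2 + p with hC
  set g : ℝ → ℝ := fun x => Real.sqrt x * ((1 - p) * Real.sqrt x - 2 * p * (M + 1)) - C with hg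
  have hlog : Tendsto (fun n : ℕ => Real.log n) atTop atTop :=
    Real.tendsto_log_atTop.comp tendsto_natCast_atTop_atTop
  have hg_t : Tendsto g atTop atTop := by
    apply tendsto_atTop_add_const_right
    apply Tendsto.atTop_mul_atTop₀ aux_sqrt_atTop
    apply tendsto_atTop_add_const_right
    exact aux_sqrt_atTop.const_mul_atTop (by linarith)
  have hgl : Tendsto (fun n : ℕ => g (Real.log n)) atTop atTop := hg_t.comp hlog
  apply tendsto_atTop_mono' atTop ?_ hgl
  filter_upwards [hlog.eventually_ge_atTop 1, eventually_ge_atTop 1] with n hL hn1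
  set L := Real.log n with hLdef
  have hnR : (1:ℝ) ≤ (n:ℕ) := by exact_mod_cast hn1
  have hlogen : Real.log (Real.exp 1 * n) = 1 + L := by
    rw [Real.log_mul (Real.exp_ne_zero 1) (by positivity), Real.log_exp]
  have hL0 : (0:ℝ) ≤ L := by linarith
  set b := Real.sqrt (2 * Real.log (Real.exp 1 * n)) with hb
  have hb0 : 0 ≤ b := Real.sqrt_nonneg _
  have hb2 : b ^ 2 = 2 + 2 * L := by
    rw [hb, Real.sq_sqrt (by rw [hlogen]; linarith), hlogen]; ring
  have hble : b ≤ 2 * Real.sqrt L := by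
    rw [hb, hlogen]
    calc Real.sqrt (2 * (1 + L)) ≤ Real.sqrt (4 * L) := Real.sqrt_le_sqrt (by linarith)
      _ = 2 * Real.sqrt L := by
          rw [show (4:ℝ) * L = 2^2 * L by ring, Real.sqrt_mul (by positivity),
            Real.sqrt_sq (by norm_num)]
  have hsqL : Real.sqrt L * Real.sqrt L = L := Real.mul_self_sqrt hL0
  have : g L = (1 - p) * L - 2 * p * (M + 1) * Real.sqrt L - C := by
    rw [hg]; ring_nf; nlinarith [hsqL]
  rw [this]
  have hexp : Real.log n - p * (M + b + 1) ^ 2 / 2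
      = (1 - p) * L - p * (M + 1) * b - C := by
    rw [hC]; nlinarith [hb2]
  rw [hexp]
  nlinarith [Real.sqrt_nonneg L, mul_le_mul_of_nonneg_left hble (by positivity : (0:ℝ) ≤ p * (M+1))]

/-- Invalidity of the additively penalized multiscale statistic under
non-Gaussian (Gaussian-mixture) noise: T_n^DS → ∞ in probability. -/
theorem additive_multiscale_invalid
    {Ω : Type*} [MeasurableSpace Ω] (P : Measure Ω) [IsProbabilityMeasure P]
    (p : ℝ) (hp0 : 0 < p) (hp1 : p < 1)
    (Z ε : ℕ → Ω → ℝ)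
    (hZmeas : ∀ t, Measurable (Z t)) (hεmeas : ∀ t, Measurable (ε t))
    (hindep : iIndepFun (Sum.elim Z ε) P)
    (hZ : ∀ t, Measure.map (Z t) P = gaussianReal 0 (Real.toNNReal (1 / p)))
    (hε : ∀ t, Measure.map (ε t) P
      = ENNReal.ofReal p • Measure.dirac (1 : ℝ)
        + ENNReal.ofReal (1 - p) • Measure.dirac (0 : ℝ)) :
    ∀ M > (0:ℝ),
      Tendsto
        (fun n => P {ω | ENNReal.ofReal M
          < TDS (psp n (fun t => ε t ω * Z t ω))})
        atTop (𝓝 1) := by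
  intro M hM
  set v : ℝ≥0 := Real.toNNReal (1 / p) with hvdef
  have hvR : (v : ℝ) = 1 / p := Real.coe_toNNReal _ (by positivity)
  have hv0 : v ≠ 0 := by
    simp only [hvdef, ne_eq, Real.toNNReal_eq_zero, not_le]
    positivity
  set γ := gaussianReal 0 v with hγdef
  set a : ℕ → ℝ := fun n => M + Real.sqrt (2 * Real.log (Real.exp 1 * n)) with hadef
  have ha0 : ∀ n, 0 ≤ a n := fun n => by
    have := Real.sqrt_nonneg (2 * Real.log (Real.exp 1 * n)); simp only [hadef]; linarith
  set q : ℕ → ℝ≥0∞ := fun n => ENNReal.ofReal p * γ {x | a n < |x|} with hqdef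
  set qR : ℕ → ℝ := fun n => (q n).toReal with hqRdef
  have hq_le_one : ∀ n, q n ≤ 1 := fun n => by
    calc q n ≤ 1 * 1 := by
          apply mul_le_mul'
          · exact le_trans (ENNReal.ofReal_le_ofReal hp1.le) (by simp)
          · exact prob_le_one
      _ = 1 := one_mul 1
  have hq_ne_top : ∀ n, q n ≠ ⊤ := fun n => lt_of_le_of_lt (hq_le_one n) ENNReal.one_lt_top |>.ne
  have hqR_nonneg : ∀ n, 0 ≤ qR n := fun n => ENNReal.toReal_nonneg
  have hqR_le_one : ∀ n, qR n ≤ 1 := fun n => by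
    have := ENNReal.toReal_mono ENNReal.one_ne_top (hq_le_one n)
    simpa using this
  -- events
  set A : ℕ → ℕ → Set Ω := fun n t => {ω | |ε t ω * Z t ω| ≤ a n} with hAdef
  have hAmeas : ∀ n t, MeasurableSet (A n t) :=
    fun n t => measurableSet_le (((hεmeas t).mul (hZmeas t)).abs) measurable_const
  have hAcompl : ∀ n t, (A n t)ᶜ = {ω | a n < |ε t ω * Z t ω|} := by
    intro n t; ext ω; simp [hAdef, not_le]
  have hPA : ∀ n t, P (A n t) = 1 - q n := by
    intro n t
    have h1 : P ((A n t)ᶜ) = q n := by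
      rw [hAcompl]
      exact aux_bad_prob P p hp0 hp1 Z ε hZmeas hεmeas hindep hZ hε t (a n) (ha0 n)
    have h2 := prob_compl_eq_one_sub (μ := P) (hAmeas n t).compl
    rw [compl_compl, h1] at h2
    rw [h2]
  -- product bound
  have hprod : ∀ n, P (⋂ t ∈ Finset.Icc 1 n, A n t)
      ≤ ENNReal.ofReal (Real.exp (-((n : ℝ) * qR n))) := by
    intro n
    have e1 : P (⋂ t ∈ Finset.Icc 1 n, A n t) = (1 - q n) ^ n := by
      rw [aux_indep_prod P Z ε hZmeas hεmeas hindep (a n) n]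
      rw [Finset.prod_congr rfl (fun t _ => hPA n t), Finset.prod_const, Nat.card_Icc]
      norm_num
    have e2 : 1 - q n = ENNReal.ofReal (1 - qR n) := by
      rw [ENNReal.ofReal_sub _ (hqR_nonneg n), ENNReal.ofReal_one, hqRdef,
        ENNReal.ofReal_toReal (hq_ne_top n)]
    rw [e1, e2, ← ENNReal.ofReal_pow (by linarith [hqR_le_one n])]
    apply ENNReal.ofReal_le_ofReal
    calc (1 - qR n) ^ n ≤ Real.exp (-qR n) ^ n := by
          apply pow_le_pow_left₀ (by linarith [hqR_le_one n])
          linarith [Real.add_one_le_exp (-qR n)]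
      _ = Real.exp (-((n : ℝ) * qR n)) := by
          rw [← Real.exp_nat_mul]; ring_nf
  -- divergence of n * qR n
  have hnq : Tendsto (fun n : ℕ => (n : ℝ) * qR n) atTop atTop := by
    set c : ℝ := (Real.sqrt (2 * Real.pi * v))⁻¹ with hcdef
    have hv_pos : (0:ℝ) < v := by rw [hvR]; positivity
    have hc_pos : 0 < c := by rw [hcdef]; positivity
    have hlow : Tendsto (fun n : ℕ => p * c * Real.exp (Real.log n
        - p * (M + Real.sqrt (2 * Real.log (Real.exp 1 * n)) + 1) ^ 2 / 2)) atTop atTop := by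
      apply Tendsto.const_mul_atTop (by positivity)
      exact Real.tendsto_exp_atTop.comp (aux_f_tendsto p M hp0 hp1 hM)
    apply tendsto_atTop_mono' atTop ?_ hlow
    filter_upwards [eventually_ge_atTop 1] with n hn1
    have hnR : (1:ℝ) ≤ (n : ℝ) := by exact_mod_cast hn1
    have hnpos : (0:ℝ) < n := by linarith
    -- qR n ≥ p * pdf(a n + 1)
    have hpdf_le : gaussianPDFReal 0 v (a n + 1) ≤ (γ {x | a n < |x|}).toReal := by
      have h1 := aux_tail v hv0 (a n) (ha0 n)
      have h2 := ENNReal.toReal_mono (measure_ne_top γ _) h1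
      rwa [ENNReal.toReal_ofReal (gaussianPDFReal_nonneg 0 v _)] at h2
    have hqR_eq : qR n = p * (γ {x | a n < |x|}).toReal := by
      rw [hqRdef]
      simp only [hqdef, ENNReal.toReal_mul, ENNReal.toReal_ofReal hp0.le]
    have hkey : p * c * Real.exp (Real.log n
        - p * (M + Real.sqrt (2 * Real.log (Real.exp 1 * n)) + 1) ^ 2 / 2)
        = (n : ℝ) * (p * gaussianPDFReal 0 v (a n + 1)) := by
      rw [gaussianPDFReal_def]
      simp only [hadef, sub_zero]
      have h2v : ∀ x : ℝ, -x^2/(2*(v:ℝ)) = -(p * x^2/2) := by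
        intro x; rw [hvR]; field_simp
      rw [h2v]
      rw [Real.exp_sub, Real.exp_log hnpos, Real.exp_neg, hcdef]
      ring
    rw [hkey]
    have : p * gaussianPDFReal 0 v (a n + 1) ≤ qR n := by
      rw [hqR_eq]
      exact mul_le_mul_of_nonneg_left hpdf_le hp0.le
    exact mul_le_mul_of_nonneg_left this hnpos.le
  -- the ENNReal bound tends to 0
  have hbound0 : Tendsto (fun n : ℕ => ENNReal.ofReal (Real.exp (-((n : ℝ) * qR n))))
      atTop (𝓝 0) := by
    have h1 : Tendsto (fun n : ℕ => Real.exp (-((n : ℝ) * qR n))) atTop (𝓝 0) :=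
      Real.tendsto_exp_atBot.comp (tendsto_neg_atTop_atBot.comp hnq)
    have := ENNReal.tendsto_ofReal h1
    simpa using this
  -- conclusion
  have hIntTo0 : Tendsto (fun n => P (⋂ t ∈ Finset.Icc 1 n, A n t)) atTop (𝓝 0) := by
    apply tendsto_of_tendsto_of_tendsto_of_le_of_le tendsto_const_nhds hbound0
      (fun n => zero_le) hprod
  have hlow_t : Tendsto (fun n : ℕ => 1 - ENNReal.ofReal (Real.exp (-((n : ℝ) * qR n))))
      atTop (𝓝 1) := by
    have := ENNReal.Tendsto.sub (tendsto_const_nhds : Tendsto (fun _ : ℕ => (1:ℝ≥0∞)) atTop (𝓝 1))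
      hbound0 (Or.inl ENNReal.one_ne_top)
    simpa using this
  apply tendsto_of_tendsto_of_tendsto_of_le_of_le' hlow_t
    (tendsto_const_nhds : Tendsto (fun _ : ℕ => (1:ℝ≥0∞)) atTop (𝓝 1))
  · filter_upwards [eventually_ge_atTop 1] with n hn1
    have hIntMeas : MeasurableSet (⋂ t ∈ Finset.Icc 1 n, A n t) :=
      MeasurableSet.biInter (Set.to_countable _) (fun t _ => hAmeas n t)
    have hcompl_sub : (⋂ t ∈ Finset.Icc 1 n, A n t)ᶜ
        ⊆ {ω | ENNReal.ofReal M < TDS (psp n (fun t => ε t ω * Z t ω))} := by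
      intro ω hω
      simp only [compl_iInter, mem_iUnion, mem_compl_iff] at hω
      obtain ⟨t, ht, hωt⟩ := hω
      rw [Finset.mem_Icc] at ht
      have : a n < |ε t ω * Z t ω| := by
        have := hωt
        simp only [hAdef, mem_setOf_eq, not_le] at this
        exact this
      exact aux_TDS_lt n t ht.1 ht.2 _ M hM this
    calc 1 - ENNReal.ofReal (Real.exp (-((n : ℝ) * qR n)))
        ≤ 1 - P (⋂ t ∈ Finset.Icc 1 n, A n t) := tsub_le_tsub_left (hprod n) 1
      _ = P ((⋂ t ∈ Finset.Icc 1 n, A n t)ᶜ) := (prob_compl_eq_one_sub hIntMeas).symm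
      _ ≤ _ := measure_mono hcompl_sub
  · exact Eventually.of_forall fun n => prob_le_one

end
end

section
/- Necessity of the threshold in thresholded weak convergence: for every T > 0 there exists a probability distribution ν on ℝ with mean 0, variance 1 and finite sub-Gaussian norm ‖·‖_{ψ₂} (where ‖X‖_{ψ₂} = inf{c > 0 : E exp(X²/c²) ≤ 2}), such that if η_1, η_2, … are i.i.d. with law ν and S̃_n is the interpolated partial sum process of η_1,…,η_n, then P( |S̃_n|_{ρ₂} ≥ T ) → 1 as n → ∞. -/
open MeasureTheory ProbabilityTheory Filter Topology Set
open scoped ENNReal NNReal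

noncomputable section

lemma integral_Ioi_xexp {a : ℝ} (ha : 0 < a) (y : ℝ) :
    ∫ x in Ioi y, x * Real.exp (-a * x ^ 2) = Real.exp (-a * y ^ 2) / (2 * a) := by
  have hderiv : ∀ x ∈ Ici y, HasDerivAt (fun x => -(2*a)⁻¹ * Real.exp (-a * x ^ 2))
      (x * Real.exp (-a * x ^ 2)) x := by
    intro x _
    have h1 : HasDerivAt (fun x : ℝ => -a * x ^ 2) (-a * (2 * x)) x := by
      simpa using ((hasDerivAt_pow 2 x).const_mul (-a))
    have := (h1.exp).const_mul (-(2*a)⁻¹)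
    refine this.congr_deriv ?_
    field_simp
  have hint : IntegrableOn (fun x => x * Real.exp (-a * x ^ 2)) (Ioi y) :=
    (integrable_mul_exp_neg_mul_sq ha).integrableOn
  have htend : Tendsto (fun x : ℝ => -(2*a)⁻¹ * Real.exp (-a * x ^ 2)) atTop (𝓝 (-(2*a)⁻¹ * 0)) := by
    refine Tendsto.const_mul _ (Real.tendsto_exp_atBot.comp ?_)
    exact (tendsto_pow_atTop two_ne_zero).const_mul_atTop_of_neg (neg_lt_zero.2 ha)
  have := integral_Ioi_of_hasDerivAt_of_tendsto' hderiv hint htend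
  rw [this]
  field_simp
  ring

lemma integral_Ioi_cube_exp {a : ℝ} (ha : 0 < a) :
    ∫ x in Ioi (0:ℝ), x ^ 3 * Real.exp (-a * x ^ 2) = 1 / (2 * a ^ 2) := by
  have ha' : a ≠ 0 := ne_of_gt ha
  have hderiv : ∀ x ∈ Ici (0:ℝ), HasDerivAt
      (fun x => -(x ^ 2 / (2*a) + 1/(2*a^2)) * Real.exp (-a * x ^ 2))
      (x ^ 3 * Real.exp (-a * x ^ 2)) x := by
    intro x _
    have h1 : HasDerivAt (fun x : ℝ => -a * x ^ 2) (-a * (2 * x)) x := by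
      simpa using ((hasDerivAt_pow 2 x).const_mul (-a))
    have hq := (((hasDerivAt_pow 2 x).div_const (2*a)).add_const (1/(2*a^2))).neg
    have := hq.mul h1.exp
    refine this.congr_deriv ?_
    simp only [Pi.neg_apply]
    field_simp
    ring
  have hint : IntegrableOn (fun x => x ^ 3 * Real.exp (-a * x ^ 2)) (Ioi 0) := by
    have h := integrableOn_rpow_mul_exp_neg_mul_sq ha (s := 3) (by norm_num)
    refine h.congr_fun (fun x hx => ?_) measurableSet_Ioi
    beta_reduce
    rw [show ((3:ℝ)) = ((3:ℕ):ℝ) by norm_num, Real.rpow_natCast]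
  have htend : Tendsto (fun x : ℝ => -(x ^ 2 / (2*a) + 1/(2*a^2)) * Real.exp (-a * x ^ 2))
      atTop (𝓝 0) := by
    have h2 : Tendsto (fun x : ℝ => x ^ 2 / (2*a) * Real.exp (-a * x ^ 2)) atTop (𝓝 0) := by
      have hb : Tendsto (fun t : ℝ => t / (2*a) * Real.exp (-a * t)) atTop (𝓝 0) := by
        have := tendsto_rpow_mul_exp_neg_mul_atTop_nhds_zero 1 a ha
        simp only [Real.rpow_one] at this
        have := this.div_const (2*a)
        simp only [zero_div] at this
        refine this.congr (fun x => by ring)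
      have hsq : Tendsto (fun x : ℝ => x ^ 2) atTop atTop := tendsto_pow_atTop two_ne_zero
      exact hb.comp hsq
    have h3 : Tendsto (fun x : ℝ => 1/(2*a^2) * Real.exp (-a * x ^ 2)) atTop (𝓝 (1/(2*a^2) * 0)) := by
      refine Tendsto.const_mul _ (Real.tendsto_exp_atBot.comp ?_)
      exact (tendsto_pow_atTop two_ne_zero).const_mul_atTop_of_neg (neg_lt_zero.2 ha)
    have := (h2.add h3).neg
    simp only [mul_zero, add_zero, neg_zero] at this
    refine this.congr (fun x => by ring)
  have := integral_Ioi_of_hasDerivAt_of_tendsto' hderiv hint htend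
  rw [this]
  norm_num

lemma integral_neg_comp (f : ℝ → ℝ) : ∫ x, f (-x) = ∫ x, f x := by
  have A : MeasurableEmbedding fun x : ℝ => -x :=
    (Homeomorph.neg ℝ).measurableEmbedding
  conv_rhs => rw [← Measure.map_neg_eq_self (volume : Measure ℝ), A.integral_map]

lemma integrable_abs_pow_exp {a : ℝ} (ha : 0 < a) (k : ℕ) :
    Integrable (fun x : ℝ => |x| ^ k * Real.exp (-a * x ^ 2)) := by
  have h := (integrable_rpow_mul_exp_neg_mul_sq ha (s := (k:ℝ))
    (lt_of_lt_of_le (by norm_num) (Nat.cast_nonneg k))).abs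
  simpa [abs_mul, abs_pow, abs_of_nonneg (Real.exp_pos _).le, Real.rpow_natCast] using h

lemma integral_abs_exp {a : ℝ} (ha : 0 < a) :
    ∫ x : ℝ, |x| * Real.exp (-a * x ^ 2) = 1 / a := by
  have h : ∀ x : ℝ, |x| * Real.exp (-a * x ^ 2)
      = (fun t => t * Real.exp (-a * t ^ 2)) |x| := by
    intro x; simp [sq_abs]
  simp_rw [h]
  rw [integral_comp_abs (f := fun t => t * Real.exp (-a * t ^ 2)), integral_Ioi_xexp ha 0]
  norm_num
  field_simp

lemma integral_abs_cube_exp {a : ℝ} (ha : 0 < a) :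
    ∫ x : ℝ, |x| ^ 3 * Real.exp (-a * x ^ 2) = 1 / a ^ 2 := by
  have h : ∀ x : ℝ, |x| ^ 3 * Real.exp (-a * x ^ 2)
      = (fun t => t ^ 3 * Real.exp (-a * t ^ 2)) |x| := by
    intro x; simp [sq_abs]
  simp_rw [h]
  rw [integral_comp_abs (f := fun t => t ^ 3 * Real.exp (-a * t ^ 2)), integral_Ioi_cube_exp ha]
  field_simp

noncomputable def gden (b : ℝ) (x : ℝ) : ℝ := b ^ 2 * (|x| * Real.exp (-b * x ^ 2))

lemma gden_nonneg (b x : ℝ) : 0 ≤ gden b x := by unfold gden; positivity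

lemma gden_cont (b : ℝ) : Continuous (gden b) := by
  unfold gden; fun_prop

noncomputable def nuMeas (b : ℝ) : Measure ℝ :=
  (volume.withDensity fun x => ENNReal.ofReal (gden b x)) +
    (ENNReal.ofReal (1 - b)) • Measure.dirac 0

lemma integrable_dirac_real {f : ℝ → ℝ} (hf : Continuous f) (a : ℝ) :
    Integrable f (Measure.dirac a) := by
  refine ⟨hf.aestronglyMeasurable, ?_⟩
  rw [HasFiniteIntegral, lintegral_dirac]
  exact ENNReal.coe_lt_top

section
variable {b : ℝ}

lemma integrable_gden_mul (hb : 0 < b) {f : ℝ → ℝ} (hf : Continuous f) (k : ℕ) {a : ℝ}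
    (ha : 0 < a)
    (hbd : ∀ x : ℝ, |gden b x * f x| ≤ b ^ 2 * (|x| ^ k * Real.exp (-a * x ^ 2))) :
    Integrable (fun x => gden b x * f x) := by
  refine Integrable.mono' ((integrable_abs_pow_exp ha k).const_mul (b ^ 2))
    ((gden_cont b).mul hf).aestronglyMeasurable (ae_of_all _ fun x => ?_)
  simpa only [Real.norm_eq_abs] using hbd x

lemma integrable_gden (hb : 0 < b) : Integrable (gden b) := by
  have := (integrable_abs_pow_exp hb 1).const_mul (b ^ 2)
  simp only [pow_one] at this
  exact this

lemma integrable_gden_id (hb : 0 < b) : Integrable (fun x => gden b x * x) := by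
  refine integrable_gden_mul hb continuous_id 2 hb (fun x => le_of_eq ?_)
  rw [abs_mul, abs_of_nonneg (gden_nonneg b x)]
  unfold gden; ring

lemma integrable_gden_sq (hb : 0 < b) : Integrable (fun x => gden b x * x ^ 2) := by
  refine integrable_gden_mul hb (by fun_prop) 3 hb (fun x => le_of_eq ?_)
  rw [abs_mul, abs_of_nonneg (gden_nonneg b x), abs_pow, sq_abs]
  unfold gden
  rw [← sq_abs x]
  ring

lemma gden_mul_exp (hb : 0 < b) (x : ℝ) :
    gden b x * Real.exp (x ^ 2 * (b / 2)) = b ^ 2 * (|x| * Real.exp (-(b/2) * x ^ 2)) := by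
  unfold gden
  rw [mul_assoc, mul_assoc, ← Real.exp_add]
  ring_nf

lemma integrable_gden_exp (hb : 0 < b) :
    Integrable (fun x => gden b x * Real.exp (x ^ 2 * (b / 2))) := by
  refine integrable_gden_mul hb (by fun_prop) 1 (half_pos hb) (fun x => le_of_eq ?_)
  rw [abs_of_nonneg (mul_nonneg (gden_nonneg b x) (Real.exp_pos _).le), gden_mul_exp hb x, pow_one]

lemma integral_gden (hb : 0 < b) : ∫ x, gden b x = b := by
  unfold gden
  rw [integral_const_mul, integral_abs_exp hb]
  field_simp

lemma integral_gden_id (hb : 0 < b) : ∫ x, gden b x * x = 0 := by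
  have hodd : ∀ x : ℝ, gden b (-x) * (-x) = -(gden b x * x) := by
    intro x; unfold gden; rw [abs_neg, neg_sq]; ring
  have h := integral_neg_comp (fun x => gden b x * x)
  simp_rw [hodd] at h
  rw [integral_neg] at h
  linarith

lemma integral_gden_sq (hb : 0 < b) : ∫ x, gden b x * x ^ 2 = 1 := by
  have h : ∀ x : ℝ, gden b x * x ^ 2 = b ^ 2 * (|x| ^ 3 * Real.exp (-b * x ^ 2)) := by
    intro x; unfold gden; rw [← sq_abs x]; ring
  simp_rw [h]
  rw [integral_const_mul, integral_abs_cube_exp hb]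
  field_simp

lemma integral_gden_exp (hb : 0 < b) :
    ∫ x, gden b x * Real.exp (x ^ 2 * (b / 2)) = 2 * b := by
  simp_rw [gden_mul_exp hb]
  rw [integral_const_mul, integral_abs_exp (half_pos hb)]
  field_simp

end

section
variable {b : ℝ}

lemma gden_toNNReal_meas : Measurable fun x => (gden b x).toNNReal :=
  (gden_cont b).measurable.real_toNNReal

lemma integrable_nuMeas (hb : 0 < b) {f : ℝ → ℝ} (hf : Continuous f)
    (hint : Integrable (fun x => gden b x * f x)) : Integrable f (nuMeas b) := by
  unfold nuMeas
  refine Integrable.add_measure ?_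
    (Integrable.smul_measure (integrable_dirac_real hf 0) ENNReal.ofReal_ne_top)
  have hdd : (fun x => ENNReal.ofReal (gden b x))
      = (fun x => ((gden b x).toNNReal : ℝ≥0∞)) := rfl
  rw [hdd, integrable_withDensity_iff_integrable_smul gden_toNNReal_meas]
  refine hint.congr (ae_of_all _ fun x => ?_)
  simp [NNReal.smul_def, Real.coe_toNNReal _ (gden_nonneg b x)]

lemma integral_nuMeas (hb : 0 < b) (hb1 : b ≤ 1) {f : ℝ → ℝ} (hf : Continuous f)
    (hint : Integrable (fun x => gden b x * f x)) :
    ∫ x, f x ∂(nuMeas b) = (∫ x, gden b x * f x) + (1 - b) * f 0 := by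
  have h2 : Integrable f ((ENNReal.ofReal (1 - b)) • Measure.dirac (0:ℝ)) :=
    Integrable.smul_measure (integrable_dirac_real hf 0) ENNReal.ofReal_ne_top
  have hdd : (fun x => ENNReal.ofReal (gden b x))
      = (fun x => ((gden b x).toNNReal : ℝ≥0∞)) := rfl
  have h1 : Integrable f (volume.withDensity fun x => ENNReal.ofReal (gden b x)) := by
    rw [hdd, integrable_withDensity_iff_integrable_smul gden_toNNReal_meas]
    refine hint.congr (ae_of_all _ fun x => ?_)
    simp [NNReal.smul_def, Real.coe_toNNReal _ (gden_nonneg b x)]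
  unfold nuMeas
  rw [integral_add_measure h1 h2, integral_smul_measure, integral_dirac,
    ENNReal.toReal_ofReal (by linarith)]
  congr 1
  rw [hdd, integral_withDensity_eq_integral_smul gden_toNNReal_meas]
  refine integral_congr_ae (ae_of_all _ fun x => ?_)
  simp [NNReal.smul_def, Real.coe_toNNReal _ (gden_nonneg b x)]

lemma nuMeas_isProb (hb : 0 < b) (hb1 : b ≤ 1) : IsProbabilityMeasure (nuMeas b) := by
  constructor
  have hwd : (volume.withDensity fun x => ENNReal.ofReal (gden b x)) univ
      = ENNReal.ofReal b := by
    rw [withDensity_apply _ MeasurableSet.univ, Measure.restrict_univ,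
      ← ofReal_integral_eq_lintegral_ofReal (integrable_gden hb)
        (ae_of_all _ (gden_nonneg b)), integral_gden hb]
  have hdi : (Measure.dirac (0:ℝ)) univ = 1 := measure_univ
  rw [nuMeas, Measure.add_apply, hwd, Measure.smul_apply, smul_eq_mul, hdi, mul_one,
    ← ENNReal.ofReal_add hb.le (by linarith)]
  norm_num

lemma nuMeas_tail (hb : 0 < b) {y : ℝ} (hy : 0 ≤ y) :
    ENNReal.ofReal (b / 2 * Real.exp (-b * y ^ 2)) ≤ nuMeas b {x : ℝ | y ≤ |x|} := by
  have h1 : Ici y ⊆ {x : ℝ | y ≤ |x|} := fun x hx => le_trans hx (le_abs_self x)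
  have hval : ∫ x in Ici y, gden b x = b / 2 * Real.exp (-b * y ^ 2) := by
    rw [integral_Ici_eq_integral_Ioi]
    have : ∀ x ∈ Ioi y, gden b x = b ^ 2 * (x * Real.exp (-b * x ^ 2)) := by
      intro x hx
      unfold gden
      rw [abs_of_nonneg (le_of_lt (lt_of_le_of_lt hy hx))]
    rw [setIntegral_congr_fun measurableSet_Ioi this, integral_const_mul,
      integral_Ioi_xexp hb y]
    field_simp
  calc ENNReal.ofReal (b / 2 * Real.exp (-b * y ^ 2))
      = ENNReal.ofReal (∫ x in Ici y, gden b x) := by rw [hval]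
    _ = ∫⁻ x in Ici y, ENNReal.ofReal (gden b x) :=
        ofReal_integral_eq_lintegral_ofReal (integrable_gden hb).integrableOn
          (ae_of_all _ (gden_nonneg b))
    _ = (volume.withDensity fun x => ENNReal.ofReal (gden b x)) (Ici y) :=
        (withDensity_apply _ measurableSet_Ici).symm
    _ ≤ nuMeas b {x : ℝ | y ≤ |x|} := by
        rw [nuMeas, Measure.add_apply]
        exact le_add_right (measure_mono h1)

end

lemma psp_diff (n t : ℕ) (Y : ℕ → ℝ) (ht1 : 1 ≤ t) (htn : t ≤ n) :
    psp n Y ((t:ℝ)/n) - psp n Y (((t:ℝ)-1)/n) = Y t / Real.sqrt n := by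
  have hn : 0 < n := lt_of_lt_of_le ht1 htn
  have hn0 : (n:ℝ) ≠ 0 := Nat.cast_ne_zero.mpr hn.ne'
  have hv : (t:ℝ)/n * n = ((t:ℕ):ℝ) := div_mul_cancel₀ _ hn0
  have hcast : (t:ℝ) - 1 = ((t-1 : ℕ):ℝ) := by
    rw [Nat.cast_sub ht1, Nat.cast_one]
  have hu : ((t:ℝ)-1)/n * n = ((t-1:ℕ):ℝ) := by
    rw [div_mul_cancel₀ _ hn0, hcast]
  unfold psp
  rw [hv, hu, Nat.floor_natCast, Nat.floor_natCast, sub_self, sub_self, zero_mul, zero_mul,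
    add_zero, add_zero, ← sub_div]
  congr 1
  have hsucc : t - 1 + 1 = t := Nat.succ_pred_eq_of_pos ht1
  conv_lhs => rw [← hsucc]
  rw [Finset.sum_Icc_succ_top (Nat.succ_le_succ (Nat.zero_le _))]
  simp [hsucc]

lemma holder_lower {T : ℝ} (hT : 0 < T) (n t : ℕ) (Y : ℕ → ℝ) (ht1 : 1 ≤ t) (htn : t ≤ n)
    (hY : T * Real.sqrt (1 + Real.log n) ≤ |Y t|) :
    ENNReal.ofReal T ≤ holderSemi rho2 (psp n Y) := by
  have hn : 0 < n := lt_of_lt_of_le ht1 htn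
  have hnR : (0:ℝ) < n := by exact_mod_cast hn
  have hn0 : (n:ℝ) ≠ 0 := ne_of_gt hnR
  set u : ℝ := ((t:ℝ)-1)/n with hu_def
  set v : ℝ := (t:ℝ)/n with hv_def
  have ht1R : (1:ℝ) ≤ (t:ℝ) := by exact_mod_cast ht1
  have htnR : (t:ℝ) ≤ (n:ℝ) := by exact_mod_cast htn
  have humem : u ∈ Icc (0:ℝ) 1 :=
    ⟨div_nonneg (by linarith) hnR.le, (div_le_one hnR).mpr (by linarith)⟩
  have hvmem : v ∈ Icc (0:ℝ) 1 :=
    ⟨div_nonneg (by linarith) hnR.le, (div_le_one hnR).mpr htnR⟩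
  have hlt : u < v := by
    rw [hu_def, hv_def, div_lt_div_iff_of_pos_right hnR]
    linarith
  have hne : u ≠ v := ne_of_lt hlt
  have huv : |u - v| = 1/n := by
    rw [abs_sub_comm, abs_of_pos (by linarith)]
    rw [hu_def, hv_def, div_sub_div_same]
    ring_nf
  have hL : (0:ℝ) < 1 + Real.log n := by
    have : (0:ℝ) ≤ Real.log n := Real.log_nonneg (by exact_mod_cast hn)
    linarith
  have hrho : rho2 (1/n) = Real.sqrt (1/n * (1 + Real.log n)) := by
    unfold rho2
    congr 2
    rw [one_div, show Real.exp 1 / ((n:ℝ))⁻¹ = Real.exp 1 * n by field_simp, Real.log_mul (Real.exp_pos 1).ne' hn0, Real.log_exp]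
  have hratio : |psp n Y u - psp n Y v| / rho2 |u - v|
      = |Y t| / Real.sqrt (1 + Real.log n) := by
    rw [huv, hrho, abs_sub_comm, hv_def, hu_def, psp_diff n t Y ht1 htn, abs_div,
      abs_of_nonneg (Real.sqrt_nonneg (n:ℝ))]
    rw [one_div, Real.sqrt_mul (by positivity), Real.sqrt_inv]
    have hsn : (0:ℝ) < Real.sqrt n := Real.sqrt_pos.mpr hnR
    have hsL : (0:ℝ) < Real.sqrt (1 + Real.log n) := Real.sqrt_pos.mpr hL
    field_simp
  have hkey : T ≤ |psp n Y u - psp n Y v| / rho2 |u - v| := by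
    rw [hratio, le_div_iff₀ (Real.sqrt_pos.mpr hL)]
    exact hY
  calc ENNReal.ofReal T ≤ ENNReal.ofReal (|psp n Y u - psp n Y v| / rho2 |u - v|) :=
        ENNReal.ofReal_le_ofReal hkey
    _ ≤ holderSemi rho2 (psp n Y) := by
        unfold holderSemi
        exact le_iSup_of_le u (le_iSup_of_le v (le_iSup_of_le ⟨humem, hvmem, hne⟩ le_rfl))


/-- Necessity of the threshold in thresholded weak convergence: for every T > 0
there is a centered, unit-variance, sub-Gaussian law ν such that for iid noise
with law ν, P(|S̃_n|_{ρ₂} ≥ T) → 1. -/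
theorem threshold_necessary (T : ℝ) (hT : 0 < T) :
    ∃ ν : Measure ℝ, IsProbabilityMeasure ν ∧
      Integrable (fun x : ℝ => x) ν ∧ (∫ x : ℝ, x ∂ν) = 0 ∧
      Integrable (fun x : ℝ => x ^ 2) ν ∧ (∫ x : ℝ, x ^ 2 ∂ν) = 1 ∧
      (∃ c > (0:ℝ), Integrable (fun x : ℝ => Real.exp (x ^ 2 / c ^ 2)) ν ∧
        ∫ x : ℝ, Real.exp (x ^ 2 / c ^ 2) ∂ν ≤ 2) ∧
      ∀ (Ω : Type) (mΩ : MeasurableSpace Ω) (P : Measure Ω),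
        IsProbabilityMeasure P →
        ∀ η : ℕ → Ω → ℝ, (∀ t, Measurable (η t)) →
          iIndepFun η P →
          (∀ t, Measure.map (η t) P = ν) →
          Tendsto
            (fun n => P {ω | ENNReal.ofReal T
              ≤ holderSemi rho2 (psp n (fun k => η k ω))})
            atTop (𝓝 1) := by
  have h2T : (0:ℝ) < 2 * T ^ 2 + 2 := by positivity
  set b : ℝ := 1 / (2 * T ^ 2 + 2) with hb_def
  have hb : 0 < b := by positivity
  have hb1 : b ≤ 1 / 2 := by
    rw [hb_def, div_le_div_iff₀ h2T (by norm_num)]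
    nlinarith
  have hbT : b * T ^ 2 ≤ 1 / 2 := by
    rw [hb_def, div_mul_eq_mul_div, one_mul, div_le_iff₀ h2T]
    nlinarith
  have hb1' : b ≤ 1 := by linarith
  haveI hprob := nuMeas_isProb hb hb1'
  refine ⟨nuMeas b, hprob, ?_, ?_, ?_, ?_, ?_, ?_⟩
  · exact integrable_nuMeas hb (f := fun x => x) continuous_id (integrable_gden_id hb)
  · have h := integral_nuMeas hb hb1' (f := fun x => x) continuous_id (integrable_gden_id hb)
    rw [h, integral_gden_id hb]
    norm_num
  · exact integrable_nuMeas hb (by fun_prop) (integrable_gden_sq hb)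
  · rw [integral_nuMeas hb hb1' (by fun_prop) (integrable_gden_sq hb), integral_gden_sq hb]
    norm_num
  · -- sub-Gaussian norm
    refine ⟨Real.sqrt (2 / b), Real.sqrt_pos.mpr (by positivity), ?_⟩
    have hc2 : (Real.sqrt (2 / b)) ^ 2 = 2 / b := Real.sq_sqrt (by positivity)
    have hfeq : (fun x : ℝ => Real.exp (x ^ 2 / Real.sqrt (2 / b) ^ 2))
        = fun x : ℝ => Real.exp (x ^ 2 * (b / 2)) := by
      funext x
      rw [hc2]
      congr 1
      field_simp
    rw [hfeq]
    refine ⟨integrable_nuMeas hb (by fun_prop) (integrable_gden_exp hb), ?_⟩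
    rw [integral_nuMeas hb hb1' (by fun_prop) (integrable_gden_exp hb), integral_gden_exp hb]
    norm_num
    linarith
  · -- the main convergence statement
    intro Ω mΩ P hP η hmeas hindep hmap
    haveI := hP
    set y : ℕ → ℝ := fun n => T * Real.sqrt (1 + Real.log n) with hy_def
    have hy0 : ∀ n : ℕ, 0 ≤ y n := fun n => mul_nonneg hT.le (Real.sqrt_nonneg _)
    set C : ℕ → Set ℝ := fun n => {x : ℝ | |x| < y n} with hC_def
    have hCmeas : ∀ n, MeasurableSet (C n) :=
      fun n => measurableSet_lt continuous_abs.measurable measurable_const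
    set S : ℕ → Set Ω := fun n =>
      {ω | ENNReal.ofReal T ≤ holderSemi rho2 (psp n (fun k => η k ω))} with hS_def
    set q : ℕ → ℝ := fun n => b / 2 * Real.exp (-b * (y n) ^ 2) with hq_def
    have hq_pos : ∀ n, 0 < q n := fun n => by positivity
    -- event inclusion
    have hsubset : ∀ n : ℕ, (⋃ t ∈ Finset.Icc 1 n, η t ⁻¹' (C n)ᶜ) ⊆ S n := by
      intro n ω hω
      simp only [Set.mem_iUnion, Finset.mem_Icc, Set.mem_preimage, Set.mem_compl_iff,
        hC_def, Set.mem_setOf_eq, not_lt] at hω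
      obtain ⟨t, ⟨ht1, htn⟩, hmem⟩ := hω
      exact holder_lower hT n t _ ht1 htn hmem
    -- independence product
    have hprodf : ∀ n : ℕ, P (⋂ t ∈ Finset.Icc 1 n, η t ⁻¹' (C n)) = (nuMeas b (C n)) ^ n := by
      intro n
      rw [hindep.meas_biInter (fun t _ => ⟨C n, hCmeas n, rfl⟩)]
      have heach : ∀ t ∈ Finset.Icc 1 n, P (η t ⁻¹' C n) = nuMeas b (C n) := by
        intro t _
        rw [← Measure.map_apply (hmeas t) (hCmeas n), hmap t]
      rw [Finset.prod_congr rfl heach, Finset.prod_const, Nat.card_Icc]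
      norm_num
    -- tail estimate
    have hqle : ∀ n, ENNReal.ofReal (q n) ≤ nuMeas b ((C n)ᶜ) := by
      intro n
      have h := nuMeas_tail hb (hy0 n)
      have hset : (C n)ᶜ = {x : ℝ | y n ≤ |x|} := by
        ext x
        simp [hC_def, not_lt]
      rw [hset]
      exact h
    have ha_le : ∀ n, (nuMeas b (C n)).toReal ≤ Real.exp (-q n) := by
      intro n
      have hsum : nuMeas b (C n) + nuMeas b ((C n)ᶜ) = 1 :=
        (measure_add_measure_compl (hCmeas n)).trans measure_univ
      have h1 : (nuMeas b (C n)).toReal + (nuMeas b ((C n)ᶜ)).toReal = 1 := by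
        rw [← ENNReal.toReal_add (measure_ne_top _ _) (measure_ne_top _ _), hsum]
        simp
      have h2 : q n ≤ (nuMeas b ((C n)ᶜ)).toReal := by
        have := ENNReal.toReal_mono (measure_ne_top _ _) (hqle n)
        rwa [ENNReal.toReal_ofReal (hq_pos n).le] at this
      have h3 := Real.add_one_le_exp (-q n)
      linarith
    -- lower bound on the probability
    have hlow : ∀ n : ℕ, 1 - Real.exp (-((n:ℝ) * q n)) ≤ (P (S n)).toReal := by
      intro n
      have hInterMeas : MeasurableSet (⋂ t ∈ Finset.Icc 1 n, η t ⁻¹' (C n)) :=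
        MeasurableSet.biInter (Finset.countable_toSet _)
          (fun t _ => (hmeas t) (hCmeas n))
      have hcompl : (⋂ t ∈ Finset.Icc 1 n, η t ⁻¹' (C n))ᶜ
          = ⋃ t ∈ Finset.Icc 1 n, η t ⁻¹' (C n)ᶜ := by
        rw [Set.compl_iInter₂]
        simp [Set.preimage_compl]
      have h3 := prob_compl_eq_one_sub (μ := P) hInterMeas
      rw [hcompl, hprodf n] at h3
      have hple : (nuMeas b (C n)) ^ n ≤ 1 := pow_le_one' prob_le_one n
      have htr : (P (⋃ t ∈ Finset.Icc 1 n, η t ⁻¹' (C n)ᶜ)).toReal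
          = 1 - ((nuMeas b (C n)).toReal) ^ n := by
        rw [h3, ENNReal.toReal_sub_of_le hple ENNReal.one_ne_top, ENNReal.toReal_one,
          ENNReal.toReal_pow]
      have hmono : (P (⋃ t ∈ Finset.Icc 1 n, η t ⁻¹' (C n)ᶜ)).toReal ≤ (P (S n)).toReal :=
        ENNReal.toReal_mono (measure_ne_top _ _) (measure_mono (hsubset n))
      have hpow : ((nuMeas b (C n)).toReal) ^ n ≤ Real.exp (-((n:ℝ) * q n)) := by
        calc ((nuMeas b (C n)).toReal) ^ n ≤ (Real.exp (-q n)) ^ n :=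
              pow_le_pow_left₀ ENNReal.toReal_nonneg (ha_le n) n
          _ = Real.exp (-((n:ℝ) * q n)) := by
              rw [← Real.exp_nat_mul]
              congr 1
              ring
      linarith [htr, hmono, hpow]
    -- the quantity n * q n tends to infinity
    have hinf : Tendsto (fun n : ℕ => (n:ℝ) * q n) atTop atTop := by
      have hlow2 : ∀ n : ℕ, 1 ≤ n →
          b / 2 * Real.exp (-2⁻¹) * Real.exp (Real.log n / 2) ≤ (n:ℝ) * q n := by
        intro n hn1
        have hnpos : (0:ℝ) < n := by exact_mod_cast hn1
        have hL0 : (0:ℝ) ≤ 1 + Real.log n := by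
          have : (0:ℝ) ≤ Real.log n := Real.log_nonneg (by exact_mod_cast hn1)
          linarith
        have hysq : (y n) ^ 2 = T ^ 2 * (1 + Real.log n) := by
          rw [hy_def]
          rw [mul_pow, Real.sq_sqrt hL0]
        have hexp : Real.exp (-(1 + Real.log n) / 2) ≤ Real.exp (-b * (y n) ^ 2) := by
          apply Real.exp_le_exp.mpr
          rw [hysq]
          nlinarith
        have hid : (n:ℝ) * Real.exp (-(1 + Real.log n) / 2)
            = Real.exp (-2⁻¹) * Real.exp (Real.log n / 2) := by
          calc (n:ℝ) * Real.exp (-(1 + Real.log (n:ℝ)) / 2)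
              = Real.exp (Real.log (n:ℝ)) * Real.exp (-(1 + Real.log (n:ℝ)) / 2) := by
                rw [Real.exp_log hnpos]
            _ = Real.exp (Real.log (n:ℝ) + -(1 + Real.log (n:ℝ)) / 2) := (Real.exp_add _ _).symm
            _ = Real.exp (-2⁻¹ + Real.log (n:ℝ) / 2) := by congr 1; ring
            _ = Real.exp (-2⁻¹) * Real.exp (Real.log (n:ℝ) / 2) := Real.exp_add _ _
        calc b / 2 * Real.exp (-2⁻¹) * Real.exp (Real.log n / 2)
            = b / 2 * ((n:ℝ) * Real.exp (-(1 + Real.log n) / 2)) := by rw [hid]; ring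
          _ ≤ b / 2 * ((n:ℝ) * Real.exp (-b * (y n) ^ 2)) := by
              apply mul_le_mul_of_nonneg_left _ (by positivity)
              exact mul_le_mul_of_nonneg_left hexp hnpos.le
          _ = (n:ℝ) * q n := by rw [hq_def]; ring
      have hlim : Tendsto (fun n : ℕ => b / 2 * Real.exp (-2⁻¹) * Real.exp (Real.log n / 2))
          atTop atTop := by
        apply Tendsto.const_mul_atTop (by positivity)
        apply Real.tendsto_exp_atTop.comp
        apply Tendsto.atTop_div_const (by norm_num : (0:ℝ) < 2)
        exact Real.tendsto_log_atTop.comp tendsto_natCast_atTop_atTop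
      exact tendsto_atTop_mono' atTop (eventually_atTop.mpr ⟨1, hlow2⟩) hlim
    have he0 : Tendsto (fun n : ℕ => 1 - Real.exp (-((n:ℝ) * q n))) atTop (𝓝 1) := by
      have : Tendsto (fun n : ℕ => Real.exp (-((n:ℝ) * q n))) atTop (𝓝 0) := by
        apply Real.tendsto_exp_atBot.comp
        exact tendsto_neg_atBot_iff.mpr hinf
      have h1 := this.const_sub 1
      simpa using h1
    have hreal : Tendsto (fun n : ℕ => (P (S n)).toReal) atTop (𝓝 1) := by
      refine tendsto_of_tendsto_of_tendsto_of_le_of_le' he0 tendsto_const_nhds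
        (Eventually.of_forall hlow) (Eventually.of_forall fun n => ?_)
      have : P (S n) ≤ P univ := measure_mono (Set.subset_univ (S n))
      have h2 := ENNReal.toReal_mono (measure_ne_top P univ) this
      simpa [measure_univ] using h2
    have hfin : ∀ n : ℕ, P (S n) ≠ ∞ := fun n => measure_ne_top P _
    have := (ENNReal.tendsto_toReal_iff hfin ENNReal.one_ne_top).mp
      (by simpa [ENNReal.toReal_one] using hreal)
    exact this

end
end

section
/- Correctness of the narrowest significance pursuit reduction: fix n ≥ 1 and let D = {τ_1 < τ_2 < … < τ_κ} ⊂ (0, n+1); set τ_0 = 0, τ_{κ+1} = n+1 and L_k = min(τ_k − τ_{k−1}, τ_{k+1} − τ_k). Let D̃ ⊆ D, and for each τ_k ∈ D̃ let r(τ_k) be a real number with 0 ≤ r(τ_k) ≤ L_k/2. Let 𝓘 be a finite collection of half-open intervals I = (a,b] ⊆ (0, n+1) (a < b, |I| = b − a) such that: (i) I ∩ D̃ ≠ ∅ for every I ∈ 𝓘; and (ii) for every τ ∈ D̃ there exists I(τ) ∈ 𝓘 with I(τ) ∩ D = {τ} and |I(τ)| ≤ r(τ). Then for every admissible run of the NSP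 routine, the output NSP(𝓘) consists of exactly |D̃| pairwise disjoint intervals, and there is a bijection τ ↦ Î(τ) from D̃ onto NSP(𝓘) such that τ ∈ Î(τ), Î(τ) ∩ D = {τ}, and |Î(τ)| ≤ r(τ) for every τ ∈ D̃. -/
open MeasureTheory ProbabilityTheory Filter Topology Set
open scoped ENNReal NNReal

noncomputable section

attribute [local instance] Classical.propDecidable

/-- An admissible run of the narrowest significance pursuit routine on a finite
collection of half-open intervals (represented by their endpoint pairs). -/
def IsNSPRun (I0 : Finset (ℝ × ℝ)) (K : ℕ) (Ihat : ℕ → ℝ × ℝ)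
    (steps : ℕ → Finset (ℝ × ℝ)) : Prop :=
  steps 0 = I0 ∧
  (∀ k < K, (steps k).Nonempty ∧ Ihat k ∈ steps k ∧
    (∀ J ∈ steps k, (Ihat k).2 - (Ihat k).1 ≤ J.2 - J.1) ∧
    steps (k + 1) = (steps k).filter
      (fun J => Ioc J.1 J.2 ∩ Ioc (Ihat k).1 (Ihat k).2 = ∅)) ∧
  steps K = ∅

/-- Correctness of the narrowest significance pursuit reduction. -/
theorem nsp_correctness
    (n : ℕ) (hn : 1 ≤ n)
    (κ : ℕ) (τ : ℕ → ℝ)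
    (hτ0 : τ 0 = 0) (hτend : τ (κ + 1) = (n : ℝ) + 1)
    (hτmono : ∀ k ≤ κ, τ k < τ (k + 1))
    (D : Set ℝ) (hD : D = {x | ∃ k, 1 ≤ k ∧ k ≤ κ ∧ τ k = x})
    (Dt : Finset ℕ) (hDt : ∀ k ∈ Dt, 1 ≤ k ∧ k ≤ κ)
    (r : ℕ → ℝ)
    (hr : ∀ k ∈ Dt, 0 ≤ r k ∧
      r k ≤ min (τ k - τ (k - 1)) (τ (k + 1) - τ k) / 2)
    (𝓘 : Finset (ℝ × ℝ))
    (h𝓘 : ∀ I ∈ 𝓘, I.1 < I.2 ∧ Ioc I.1 I.2 ⊆ Ioo (0:ℝ) ((n : ℝ) + 1))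
    (hi : ∀ I ∈ 𝓘, ∃ k ∈ Dt, τ k ∈ Ioc I.1 I.2)
    (hii : ∀ k ∈ Dt, ∃ I ∈ 𝓘,
      Ioc I.1 I.2 ∩ D = {τ k} ∧ I.2 - I.1 ≤ r k) :
    ∀ (K : ℕ) (Ihat : ℕ → ℝ × ℝ) (steps : ℕ → Finset (ℝ × ℝ)),
      IsNSPRun 𝓘 K Ihat steps →
      K = Dt.card ∧
      (∀ i < K, ∀ j < K, i ≠ j →
        Ioc (Ihat i).1 (Ihat i).2 ∩ Ioc (Ihat j).1 (Ihat j).2 = ∅) ∧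
      ∃ g : ℕ → ℕ, Set.BijOn g (↑Dt) (Set.Iio K) ∧
        ∀ k ∈ Dt,
          τ k ∈ Ioc (Ihat (g k)).1 (Ihat (g k)).2 ∧
          Ioc (Ihat (g k)).1 (Ihat (g k)).2 ∩ D = {τ k} ∧
          (Ihat (g k)).2 - (Ihat (g k)).1 ≤ r k := by
  intro K Ihat steps hrun
  obtain ⟨hs0, hstep, hsK⟩ := hrun
  -- τ is strictly monotone up to κ+1
  have tmono : ∀ a b : ℕ, a < b → b ≤ κ + 1 → τ a < τ b := by
    intro a b hab hb
    induction b with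
    | zero => omega
    | succ b ih =>
      rcases Nat.lt_or_ge a b with h | h
      · exact lt_trans (ih h (by omega)) (hτmono b (by omega))
      · have : a = b := by omega
        subst this; exact hτmono a (by omega)
  have tinj : ∀ a b : ℕ, a ≤ κ + 1 → b ≤ κ + 1 → τ a = τ b → a = b := by
    intro a b ha hb h
    by_contra hne
    rcases Nat.lt_or_ge a b with hlt | hge
    · exact absurd h (ne_of_lt (tmono a b hlt hb))
    · exact absurd h.symm (ne_of_lt (tmono b a (by omega) ha))
  -- distance from τ k to any other τ m is at least L k
  have hdist : ∀ k ∈ Dt, ∀ m : ℕ, 1 ≤ m → m ≤ κ → m ≠ k →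
      min (τ k - τ (k - 1)) (τ (k + 1) - τ k) ≤ |τ m - τ k| := by
    intro k hk m hm1 hmκ hmk
    obtain ⟨hk1, hkκ⟩ := hDt k hk
    rcases Nat.lt_or_ge m k with h | h
    · have h1 : τ m ≤ τ (k - 1) := by
        rcases Nat.lt_or_ge m (k - 1) with h' | h'
        · exact le_of_lt (tmono m (k - 1) h' (by omega))
        · have : m = k - 1 := by omega
          simp [this]
      have h2 : τ m < τ k := tmono m k h (by omega)
      rw [abs_of_neg (by linarith)]
      have := min_le_left (τ k - τ (k - 1)) (τ (k + 1) - τ k)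
      linarith
    · have hmk' : k < m := by omega
      have h1 : τ (k + 1) ≤ τ m := by
        rcases Nat.lt_or_ge (k + 1) m with h' | h'
        · exact le_of_lt (tmono (k + 1) m h' (by omega))
        · have : m = k + 1 := by omega
          simp [this]
      have h2 : τ k < τ m := tmono k m hmk' (by omega)
      rw [abs_of_pos (by linarith)]
      have := min_le_right (τ k - τ (k - 1)) (τ (k + 1) - τ k)
      linarith
  -- separation: intervals around distinct detected points are disjoint
  have hsep : ∀ k ∈ Dt, ∀ k' ∈ Dt, k ≠ k' →
      ∀ I I' : ℝ × ℝ, τ k ∈ Ioc I.1 I.2 → I.2 - I.1 ≤ r k →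
        τ k' ∈ Ioc I'.1 I'.2 → I'.2 - I'.1 ≤ r k' →
        Ioc I.1 I.2 ∩ Ioc I'.1 I'.2 = ∅ := by
    intro k hk k' hk' hne I I' hkI hlenI hk'I hlenI'
    by_contra hne'
    obtain ⟨x, hx1, hx2⟩ := Set.nonempty_iff_ne_empty.mpr hne'
    obtain ⟨hr0, hrL⟩ := hr k hk
    obtain ⟨hr0', hrL'⟩ := hr k' hk'
    have h1 : |x - τ k| < I.2 - I.1 := by
      rcases hkI with ⟨ha, hb⟩; rcases hx1 with ⟨ha', hb'⟩
      rw [abs_sub_lt_iff]; constructor <;> linarith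
    have h2 : |x - τ k'| < I'.2 - I'.1 := by
      rcases hk'I with ⟨ha, hb⟩; rcases hx2 with ⟨ha', hb'⟩
      rw [abs_sub_lt_iff]; constructor <;> linarith
    have hd : min (τ k - τ (k - 1)) (τ (k + 1) - τ k) ≤ |τ k' - τ k| :=
      hdist k hk k' (hDt k' hk').1 (hDt k' hk').2 (Ne.symm hne)
    have hd' : min (τ k' - τ (k' - 1)) (τ (k' + 1) - τ k') ≤ |τ k - τ k'| :=
      hdist k' hk' k (hDt k hk).1 (hDt k hk).2 hne
    have htri : |τ k' - τ k| ≤ |τ k' - x| + |x - τ k| := abs_sub_le (τ k') x (τ k)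
    have hcomm : |τ k' - x| = |x - τ k'| := abs_sub_comm _ _
    have hcomm' : |τ k - τ k'| = |τ k' - τ k| := abs_sub_comm _ _
    rw [hcomm] at htri
    rw [hcomm'] at hd'
    linarith
  -- a short interval containing τ k meets D only at τ k
  have hsingle : ∀ k ∈ Dt, ∀ I : ℝ × ℝ, τ k ∈ Ioc I.1 I.2 → I.2 - I.1 ≤ r k →
      Ioc I.1 I.2 ∩ D = {τ k} := by
    intro k hk I hkI hlen
    ext x
    rw [hD]
    simp only [Set.mem_inter_iff, Set.mem_setOf_eq, Set.mem_singleton_iff]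
    constructor
    · rintro ⟨hx, m, hm1, hmκ, rfl⟩
      by_contra hne
      have hmk : m ≠ k := fun h => hne (by rw [h])
      have hd := hdist k hk m hm1 hmκ hmk
      have h1 : |τ m - τ k| < I.2 - I.1 := by
        rcases hkI with ⟨ha, hb⟩; rcases hx with ⟨ha', hb'⟩
        rw [abs_sub_lt_iff]; constructor <;> linarith
      obtain ⟨hr0, hrL⟩ := hr k hk
      linarith
    · rintro rfl
      exact ⟨hkI, k, (hDt k hk).1, (hDt k hk).2, rfl⟩
  -- steps are nested
  have hsub : ∀ i j : ℕ, i ≤ j → j ≤ K → steps j ⊆ steps i := by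
    intro i j hij hjK
    induction j with
    | zero =>
      have : i = 0 := by omega
      subst this; exact Finset.Subset.refl _
    | succ j ih =>
      rcases Nat.lt_or_ge i (j + 1) with h | h
      · have hsj := (hstep j (by omega)).2.2.2
        have hss : steps (j + 1) ⊆ steps j := by
          rw [hsj]; exact Finset.filter_subset _ _
        exact hss.trans (ih (by omega) (by omega))
      · have : i = j + 1 := by omega
        subst this; exact Finset.Subset.refl _
  -- every surviving interval is disjoint from all previously selected ones
  have hdisj_prev : ∀ i, i ≤ K → ∀ i' < i, ∀ J ∈ steps i,
      Ioc J.1 J.2 ∩ Ioc (Ihat i').1 (Ihat i').2 = ∅ := by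
    intro i hiK i' hi' J hJ
    have h1 : J ∈ steps (i' + 1) := hsub (i' + 1) i (by omega) hiK hJ
    have h2 := (hstep i' (by omega)).2.2.2
    rw [h2] at h1
    exact (Finset.mem_filter.mp h1).2
  -- main survival lemma
  have main : ∀ j, j ≤ K →
      ∀ k ∈ Dt, (∀ i < j, τ k ∉ Ioc (Ihat i).1 (Ihat i).2) →
        ∃ I ∈ steps j, Ioc I.1 I.2 ∩ D = {τ k} ∧ I.2 - I.1 ≤ r k := by
    intro j
    induction j with
    | zero =>
      intro _ k hk _
      obtain ⟨I, hI, h1, h2⟩ := hii k hk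
      exact ⟨I, by rw [hs0]; exact hI, h1, h2⟩
    | succ j ih =>
      intro hjK k hk hfresh
      have hjK' : j < K := by omega
      have ihj := ih (by omega)
      obtain ⟨hne, hmem, hmin, hfilter⟩ := hstep j hjK'
      have hIhat𝓘 : Ihat j ∈ 𝓘 := by
        have := hsub 0 j (by omega) (by omega) hmem
        rwa [hs0] at this
      obtain ⟨k', hk', hk'mem⟩ := hi _ hIhat𝓘
      have hfresh' : ∀ i < j, τ k' ∉ Ioc (Ihat i).1 (Ihat i).2 := by
        intro i hi' hcon
        have hd := hdisj_prev j (by omega) i hi' _ hmem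
        have hmm : τ k' ∈ Ioc (Ihat j).1 (Ihat j).2 ∩ Ioc (Ihat i).1 (Ihat i).2 :=
          ⟨hk'mem, hcon⟩
        rw [hd] at hmm
        exact hmm
      obtain ⟨I', hI'mem, hI'D, hI'len⟩ := ihj k' hk' hfresh'
      have hlenIhat : (Ihat j).2 - (Ihat j).1 ≤ r k' :=
        le_trans (hmin I' hI'mem) hI'len
      have hkk' : k ≠ k' := by
        rintro rfl
        exact hfresh j (by omega) hk'mem
      obtain ⟨I, hImem, hID, hIlen⟩ := ihj k hk (fun i hi' => hfresh i (by omega))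
      have hτkI : τ k ∈ Ioc I.1 I.2 := by
        have hmm : τ k ∈ Ioc I.1 I.2 ∩ D := by
          rw [hID]; exact Set.mem_singleton _
        exact hmm.1
      have hdisjnew : Ioc I.1 I.2 ∩ Ioc (Ihat j).1 (Ihat j).2 = ∅ :=
        hsep k hk k' hk' hkk' I (Ihat j) hτkI hIlen hk'mem hlenIhat
      refine ⟨I, ?_, hID, hIlen⟩
      rw [hfilter]
      exact Finset.mem_filter.mpr ⟨hImem, hdisjnew⟩
  -- properties of each selected interval
  have lemB : ∀ i < K, ∃ k ∈ Dt, τ k ∈ Ioc (Ihat i).1 (Ihat i).2 ∧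
      Ioc (Ihat i).1 (Ihat i).2 ∩ D = {τ k} ∧ (Ihat i).2 - (Ihat i).1 ≤ r k := by
    intro i hiK
    obtain ⟨hne, hmem, hmin, hfilter⟩ := hstep i hiK
    have hIhat𝓘 : Ihat i ∈ 𝓘 := by
      have := hsub 0 i (by omega) (by omega) hmem
      rwa [hs0] at this
    obtain ⟨k', hk', hk'mem⟩ := hi _ hIhat𝓘
    have hfresh' : ∀ i' < i, τ k' ∉ Ioc (Ihat i').1 (Ihat i').2 := by
      intro i' hi' hcon
      have hd := hdisj_prev i (by omega) i' hi' _ hmem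
      have hmm : τ k' ∈ Ioc (Ihat i).1 (Ihat i).2 ∩ Ioc (Ihat i').1 (Ihat i').2 :=
        ⟨hk'mem, hcon⟩
      rw [hd] at hmm
      exact hmm
    obtain ⟨I', hI'mem, hI'D, hI'len⟩ := main i (le_of_lt hiK) k' hk' hfresh'
    have hlen : (Ihat i).2 - (Ihat i).1 ≤ r k' := le_trans (hmin I' hI'mem) hI'len
    exact ⟨k', hk', hk'mem, hsingle k' hk' _ hk'mem hlen, hlen⟩
  -- outputs are pairwise disjoint
  have houtdisj : ∀ i < K, ∀ j < K, i ≠ j →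
      Ioc (Ihat i).1 (Ihat i).2 ∩ Ioc (Ihat j).1 (Ihat j).2 = ∅ := by
    intro i hi j hj hne
    rcases Nat.lt_or_ge i j with h | h
    · have hmem : Ihat j ∈ steps j := (hstep j hj).2.1
      have := hdisj_prev j (le_of_lt hj) i h _ hmem
      rw [Set.inter_comm]; exact this
    · have hij : j < i := by omega
      have hmem : Ihat i ∈ steps i := (hstep i hi).2.1
      exact hdisj_prev i (le_of_lt hi) j hij _ hmem
  -- define f : selected index ↦ detected point index
  have hfex := fun (i : ℕ) (hi : i < K) => lemB i hi
  classical
  let f : ℕ → ℕ := fun i => if h : i < K then (hfex i h).choose else 0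
  have hfDt : ∀ i < K, f i ∈ Dt := by
    intro i hi
    simp only [f, dif_pos hi]
    exact (hfex i hi).choose_spec.1
  have hfmem : ∀ i (hi : i < K), τ (f i) ∈ Ioc (Ihat i).1 (Ihat i).2 := by
    intro i hi
    simp only [f, dif_pos hi]
    exact (hfex i hi).choose_spec.2.1
  have hfD : ∀ i (hi : i < K),
      Ioc (Ihat i).1 (Ihat i).2 ∩ D = {τ (f i)} := by
    intro i hi
    simp only [f, dif_pos hi]
    exact (hfex i hi).choose_spec.2.2.1
  have hflen : ∀ i (hi : i < K), (Ihat i).2 - (Ihat i).1 ≤ r (f i) := by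
    intro i hi
    simp only [f, dif_pos hi]
    exact (hfex i hi).choose_spec.2.2.2
  -- f is injective on Iio K
  have hfinj : ∀ i < K, ∀ j < K, f i = f j → i = j := by
    intro i hi j hj hij
    by_contra hne
    have hmm : τ (f i) ∈ Ioc (Ihat i).1 (Ihat i).2 ∩ Ioc (Ihat j).1 (Ihat j).2 := by
      refine ⟨hfmem i hi, ?_⟩
      rw [hij]; exact hfmem j hj
    rw [houtdisj i hi j hj hne] at hmm
    exact hmm
  -- f is surjective onto Dt
  have hfsurj : ∀ k ∈ Dt, ∃ i, i < K ∧ f i = k := by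
    intro k hk
    by_contra hno
    push_neg at hno
    have hfresh : ∀ i < K, τ k ∉ Ioc (Ihat i).1 (Ihat i).2 := by
      intro i hi hcon
      have hkD : τ k ∈ D := by
        rw [hD]; exact ⟨k, (hDt k hk).1, (hDt k hk).2, rfl⟩
      have hmm : τ k ∈ Ioc (Ihat i).1 (Ihat i).2 ∩ D := ⟨hcon, hkD⟩
      rw [hfD i hi] at hmm
      have hkfi : k = f i := by
        apply tinj k (f i) (by have := (hDt k hk).2; omega)
          (by have := (hDt (f i) (hfDt i hi)).2; omega) hmm
      exact hno i hi hkfi.symm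
    obtain ⟨I, hImem, -, -⟩ := main K (le_refl K) k hk hfresh
    rw [hsK] at hImem
    exact absurd hImem (Finset.notMem_empty I)
  -- K = |Dt|
  have hcard : K = Dt.card := by
    have : (Finset.range K).card = Dt.card := by
      apply Finset.card_bij (fun i _ => f i)
      · intro i hi
        exact hfDt i (Finset.mem_range.mp hi)
      · intro i hi j hj hij
        exact hfinj i (Finset.mem_range.mp hi) j (Finset.mem_range.mp hj) hij
      · intro k hk
        obtain ⟨i, hi, hfi⟩ := hfsurj k hk
        exact ⟨i, Finset.mem_range.mpr hi, hfi⟩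
    rwa [Finset.card_range] at this
  refine ⟨hcard, houtdisj, ?_⟩
  -- construct g as the inverse of f
  let g : ℕ → ℕ := fun k => if h : k ∈ Dt then (hfsurj k h).choose else 0
  have hgK : ∀ k ∈ Dt, g k < K := by
    intro k hk
    simp only [g, dif_pos hk]
    exact (hfsurj k hk).choose_spec.1
  have hgf : ∀ k ∈ Dt, f (g k) = k := by
    intro k hk
    simp only [g, dif_pos hk]
    exact (hfsurj k hk).choose_spec.2
  refine ⟨g, ⟨?_, ?_, ?_⟩, ?_⟩
  · intro k hk
    exact hgK k hk
  · intro k hk k' hk' hgg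
    have h1 := hgf k hk
    have h2 := hgf k' hk'
    rw [← h1, ← h2, hgg]
  · intro i hi
    have hiK : i < K := hi
    refine ⟨f i, hfDt i hiK, ?_⟩
    have h1 := hgf (f i) (hfDt i hiK)
    exact hfinj (g (f i)) (hgK (f i) (hfDt i hiK)) i hiK h1
  · intro k hk
    have h1 := hgf k hk
    have h2 := hgK k hk
    refine ⟨?_, ?_, ?_⟩
    · have := hfmem (g k) h2
      rwa [h1] at this
    · have := hfD (g k) h2
      rwa [h1] at this
    · have := hflen (g k) h2
      rwa [h1] at this

end
end
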